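/- arXiv:2210.15736 — 3 statements merged into one kernel-verified Lean document; each statement's English description precedes it below -/
import Mathlib

section
/- Let (V_t)_{t∈[0,τ]} be an adapted RCLL process such that sup_{0≤s≤t≤τ} ‖E_s|V_t − V_{s−}|‖_∞ ≤ B over deterministic times s ≤ t, and sup_{t∈[0,τ]} |V_t − V_{t−}| ≤ C almost surely, for finite constants B, C. Then for every stopping time S ≤ τ one has E_S|V_τ − V_{S−}| ≤ B + C almost surely. -/
open MeasureTheory ProbabilityTheory Filter Topology Set
open scoped ENNReal NNReal

noncomputable section

/-- Left limit of the path `t ↦ V t ω` at time `s`, with the convention `V_{0-} := V_0`. -/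
def llim {Ω : Type*} (V : ℝ → Ω → ℝ) (s : ℝ) (ω : Ω) : ℝ :=
  if s ≤ 0 then V 0 ω else limUnder (nhdsWithin s (Set.Iio s)) fun t => V t ω

/-- A right-continuous adapted-in-time path structure: right continuous with left limits (RCLL). -/
structure IsRCLL {Ω : Type*} (V : ℝ → Ω → ℝ) : Prop where
  rightCont : ∀ ω t, ContinuousWithinAt (fun u => V u ω) (Set.Ici t) t
  leftLimExists : ∀ ω t, (0:ℝ) < t →
    ∃ l : ℝ, Filter.Tendsto (fun u => V u ω) (nhdsWithin t (Set.Iio t)) (nhds l)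

/-- The conditional expectation `E[f | m']` of a (nonnegative) function `f`, realized as an
`ℝ≥0∞`-valued integral against the conditional expectation kernel; this gives an honest meaning
to `E_{m'} f` even when `f` is not integrable. -/
def condE {Ω : Type*} {mΩ : MeasurableSpace Ω} [StandardBorelSpace Ω]
    (μ : Measure Ω) [IsFiniteMeasure μ] (m' : MeasurableSpace Ω) (f : Ω → ℝ) (ω : Ω) : ℝ≥0∞ :=
  ∫⁻ y, ENNReal.ofReal (f y) ∂(condExpKernel (mΩ := mΩ) μ m' ω)

/-- The modulus of mean oscillation `ρ_{s,t}(V)`: the supremum over all pairs of stopping times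
`s ≤ S ≤ T ≤ t` of `‖E_S |V_T - V_{S-}|‖_∞`. -/
def bmoRho {Ω : Type*} {mΩ : MeasurableSpace Ω} [StandardBorelSpace Ω]
    (μ : Measure Ω) [IsFiniteMeasure μ] (ℱ : Filtration ℝ mΩ) (V : ℝ → Ω → ℝ)
    (s t : ℝ) : ℝ≥0∞ :=
  ⨆ (S : Ω → ℝ) (T : Ω → ℝ) (hS : IsStoppingTime ℱ (fun ω => (S ω : WithTop ℝ)))
      (_ : IsStoppingTime ℱ (fun ω => (T ω : WithTop ℝ)))
    (_ : ∀ ω, s ≤ S ω) (_ : ∀ ω, S ω ≤ T ω) (_ : ∀ ω, T ω ≤ t),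
    essSup (condE μ hS.measurableSpace fun y => |V (T y) y - llim V (S y) y|) μ

/-- `κ_{s,t}(V) = lim_{h ↓ 0} sup { ρ_{u,v}(V) : s ≤ u ≤ v ≤ t, v - u ≤ h }`. -/
def bmoKappa {Ω : Type*} {mΩ : MeasurableSpace Ω} [StandardBorelSpace Ω]
    (μ : Measure Ω) [IsFiniteMeasure μ] (ℱ : Filtration ℝ mΩ) (V : ℝ → Ω → ℝ)
    (s t : ℝ) : ℝ≥0∞ :=
  ⨅ (h : ℝ) (_ : 0 < h),
    ⨆ (u : ℝ) (v : ℝ) (_ : s ≤ u) (_ : u ≤ v) (_ : v ≤ t) (_ : v - u ≤ h),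
      bmoRho μ ℱ V u v

/-- A process of bounded mean oscillation (BMO) on `[0, τ]`. -/
structure IsBMO {Ω : Type*} {mΩ : MeasurableSpace Ω} [StandardBorelSpace Ω]
    (μ : Measure Ω) [IsFiniteMeasure μ] (ℱ : Filtration ℝ mΩ) (τ : ℝ)
    (V : ℝ → Ω → ℝ) : Prop where
  adapted : Adapted ℱ V
  rcll : IsRCLL V
  finite : bmoRho μ ℱ V 0 τ < ⊤

/-- A process of vanishing mean oscillation (VMO) on `[0, τ]`. -/
structure IsVMO {Ω : Type*} {mΩ : MeasurableSpace Ω} [StandardBorelSpace Ω]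
    (μ : Measure Ω) [IsFiniteMeasure μ] (ℱ : Filtration ℝ mΩ) (τ : ℝ)
    (V : ℝ → Ω → ℝ) : Prop where
  bmo : IsBMO μ ℱ τ V
  vanishing : bmoKappa μ ℱ V 0 τ = 0

/-- `w_{s,t}(V) = ([V]_{vmo^{p\text{-}var};[s,t]})^p`, the supremum over all partitions
`s = π_0 ≤ π_1 ≤ ⋯ ≤ π_n = t` of `∑_i ρ_{π_i, π_{i+1}}(V)^p`. -/
def pvarW {Ω : Type*} {mΩ : MeasurableSpace Ω} [StandardBorelSpace Ω]
    (μ : Measure Ω) [IsFiniteMeasure μ] (ℱ : Filtration ℝ mΩ) (V : ℝ → Ω → ℝ)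
    (p : ℝ) (s t : ℝ) : ℝ≥0∞ :=
  ⨆ (n : ℕ) (π : Fin (n + 1) → ℝ) (_ : Monotone π) (_ : π 0 = s) (_ : π (Fin.last n) = t),
    ∑ i : Fin n, bmoRho μ ℱ V (π i.castSucc) (π i.succ) ^ p

/-- A VMO process with modulus of mean oscillation of finite `p`-variation, i.e. `vmo^{p-var}`. -/
structure IsVMOpVar {Ω : Type*} {mΩ : MeasurableSpace Ω} [StandardBorelSpace Ω]
    (μ : Measure Ω) [IsFiniteMeasure μ] (ℱ : Filtration ℝ mΩ) (τ : ℝ) (p : ℝ)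
    (V : ℝ → Ω → ℝ) : Prop where
  vmo : IsVMO μ ℱ τ V
  finiteVar : pvarW μ ℱ V p 0 τ < ⊤

/-- The `vmo^α` seminorm `[V]_{vmo^α;[0,τ]} = sup_{0 ≤ s < t ≤ τ} ρ_{s,t}(V) / (t-s)^α`. -/
def vmoAlphaNorm {Ω : Type*} {mΩ : MeasurableSpace Ω} [StandardBorelSpace Ω]
    (μ : Measure Ω) [IsFiniteMeasure μ] (ℱ : Filtration ℝ mΩ) (τ : ℝ) (α : ℝ)
    (V : ℝ → Ω → ℝ) : ℝ≥0∞ :=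
  ⨆ (s : ℝ) (t : ℝ) (_ : 0 ≤ s) (_ : s < t) (_ : t ≤ τ),
    bmoRho μ ℱ V s t / ENNReal.ofReal ((t - s) ^ α)

section AuxLemmas

variable {Ω : Type*} {m' mΩ : MeasurableSpace Ω} [StandardBorelSpace Ω]
  {μ : Measure Ω} [IsProbabilityMeasure μ]

lemma setLIntegral_condexpKernel_apply (hm' : m' ≤ mΩ) {A A' : Set Ω}
    (hA : MeasurableSet[m'] A) (hA' : MeasurableSet A') :
    ∫⁻ ω in A, condExpKernel μ m' ω A' ∂μ = μ (A ∩ A') := by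
  have hint := integrable_toReal_condExpKernel (μ := μ) (m := m') hA'
  have h1 : ∀ ω, condExpKernel μ m' ω A' = ENNReal.ofReal ((condExpKernel μ m' ω A').toReal) := by
    intro ω
    rw [ENNReal.ofReal_toReal (measure_ne_top _ _)]
  calc ∫⁻ ω in A, condExpKernel μ m' ω A' ∂μ
      = ∫⁻ ω in A, ENNReal.ofReal ((condExpKernel μ m' ω A').toReal) ∂μ := by
        exact lintegral_congr fun ω => h1 ω
    _ = ENNReal.ofReal (∫ ω in A, (condExpKernel μ m' ω A').toReal ∂μ) := by
        rw [ofReal_integral_eq_lintegral_ofReal (f := fun ω => (condExpKernel μ m' ω A').toReal) (hint.restrict)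
          (Eventually.of_forall fun ω => ENNReal.toReal_nonneg)]
    _ = ENNReal.ofReal (∫ ω in A, (μ[A'.indicator (fun _ => (1:ℝ)) | m']) ω ∂μ) := by
        congr 1
        refine setIntegral_congr_ae (hm' _ hA) ?_
        filter_upwards [condExpKernel_ae_eq_condExp hm' hA'] with ω hω using fun _ => hω
    _ = ENNReal.ofReal (∫ ω in A, A'.indicator (fun _ => (1:ℝ)) ω ∂μ) := by
        congr 1
        exact setIntegral_condExp hm'
          ((integrable_const (1:ℝ)).indicator hA') hA
    _ = μ (A ∩ A') := by
        rw [setIntegral_indicator hA']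
        simp [Measure.restrict_apply hA', Set.inter_comm]

lemma setLIntegral_lintegral_condexpKernel (hm' : m' ≤ mΩ) {f : Ω → ℝ≥0∞}
    (hf : Measurable f) {A : Set Ω} (hA : MeasurableSet[m'] A) :
    ∫⁻ ω in A, ∫⁻ y, f y ∂(condExpKernel μ m' ω) ∂μ = ∫⁻ ω in A, f ω ∂μ := by
  revert A
  refine (Measurable.ennreal_induction (motive := fun f => ∀ A : Set Ω, MeasurableSet[m'] A →
    ∫⁻ ω in A, ∫⁻ y, f y ∂(condExpKernel μ m' ω) ∂μ = ∫⁻ ω in A, f ω ∂μ) ?_ ?_ ?_ hf : ∀ A : Set Ω, MeasurableSet[m'] A → _) _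
  · intro c s hs A hA
    have h1 : ∀ ω : Ω, ∫⁻ y, s.indicator (fun _ => c) y ∂(condExpKernel μ m' ω)
        = c * condExpKernel μ m' ω s := fun ω => lintegral_indicator_const hs c
    have hmeas : Measurable fun ω => condExpKernel μ m' ω s :=
      (measurable_condExpKernel (μ := μ) hs).mono hm' le_rfl
    calc ∫⁻ ω in A, ∫⁻ y, s.indicator (fun _ => c) y ∂(condExpKernel μ m' ω) ∂μ
        = ∫⁻ ω in A, c * condExpKernel μ m' ω s ∂μ := lintegral_congr h1
      _ = c * ∫⁻ ω in A, condExpKernel μ m' ω s ∂μ := lintegral_const_mul c hmeas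
      _ = c * μ (A ∩ s) := by rw [setLIntegral_condexpKernel_apply hm' hA hs]
      _ = ∫⁻ ω in A, s.indicator (fun _ => c) ω ∂μ := by
          rw [lintegral_indicator_const hs c, Measure.restrict_apply hs, Set.inter_comm]
  · intro f g _ hfm hgm hPf hPg A hA
    have h1 : ∀ ω : Ω, ∫⁻ y, (f + g) y ∂(condExpKernel μ m' ω)
        = (∫⁻ y, f y ∂(condExpKernel μ m' ω)) + ∫⁻ y, g y ∂(condExpKernel μ m' ω) :=
      fun ω => lintegral_add_left hfm _
    have hFm : Measurable fun ω => ∫⁻ y, f y ∂(condExpKernel μ m' ω) :=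
      (@Measurable.lintegral_kernel Ω Ω m' mΩ (condExpKernel μ m') _ hfm).mono hm' le_rfl
    have hGm : Measurable fun ω => ∫⁻ y, g y ∂(condExpKernel μ m' ω) :=
      (@Measurable.lintegral_kernel Ω Ω m' mΩ (condExpKernel μ m') _ hgm).mono hm' le_rfl
    calc ∫⁻ ω in A, ∫⁻ y, (f + g) y ∂(condExpKernel μ m' ω) ∂μ
        = ∫⁻ ω in A, ((∫⁻ y, f y ∂(condExpKernel μ m' ω))
            + ∫⁻ y, g y ∂(condExpKernel μ m' ω)) ∂μ := lintegral_congr h1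
      _ = (∫⁻ ω in A, ∫⁻ y, f y ∂(condExpKernel μ m' ω) ∂μ)
            + ∫⁻ ω in A, ∫⁻ y, g y ∂(condExpKernel μ m' ω) ∂μ := lintegral_add_left hFm _
      _ = (∫⁻ ω in A, f ω ∂μ) + ∫⁻ ω in A, g ω ∂μ := by rw [hPf A hA, hPg A hA]
      _ = ∫⁻ ω in A, (f + g) ω ∂μ := (lintegral_add_left hfm _).symm
  · intro f hfm hfmono hPf A hA
    have h1 : ∀ ω : Ω, ∫⁻ y, ⨆ n, f n y ∂(condExpKernel μ m' ω)
        = ⨆ n, ∫⁻ y, f n y ∂(condExpKernel μ m' ω) := fun ω => lintegral_iSup hfm hfmono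
    have hFm : ∀ n, Measurable fun ω => ∫⁻ y, f n y ∂(condExpKernel μ m' ω) := fun n =>
      (@Measurable.lintegral_kernel Ω Ω m' mΩ (condExpKernel μ m') _ (hfm n)).mono hm' le_rfl
    calc ∫⁻ ω in A, ∫⁻ y, ⨆ n, f n y ∂(condExpKernel μ m' ω) ∂μ
        = ∫⁻ ω in A, ⨆ n, ∫⁻ y, f n y ∂(condExpKernel μ m' ω) ∂μ := lintegral_congr h1
      _ = ⨆ n, ∫⁻ ω in A, ∫⁻ y, f n y ∂(condExpKernel μ m' ω) ∂μ :=
          lintegral_iSup hFm (fun i j hij ω => lintegral_mono fun y => hfmono hij y)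
      _ = ⨆ n, ∫⁻ ω in A, f n ω ∂μ := by exact iSup_congr fun n => hPf n A hA
      _ = ∫⁻ ω in A, ⨆ n, f n ω ∂μ :=
          (lintegral_iSup hfm (fun i j hij ω => hfmono hij ω)).symm

section PathMeas

variable {V : ℝ → Ω → ℝ}

lemma measurable_uncurry_of_rc (hV : ∀ t, Measurable (V t))
    (hrc : ∀ ω t, ContinuousWithinAt (fun u => V u ω) (Set.Ici t) t) :
    Measurable (Function.uncurry V) := by
  have hW : ∀ n : ℕ, Measurable (fun p : ℝ × Ω => V ((⌈p.1 * 2^n⌉ : ℤ) / 2^n) p.2) := by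
    intro n
    have hf : Measurable (fun q : Ω × ℤ => V ((q.2 : ℝ) / 2^n) q.1) :=
      measurable_from_prod_countable_left (fun k => by simpa using hV ((k:ℝ)/2^n))
    exact hf.comp (measurable_snd.prodMk
      (Int.measurable_ceil.comp (measurable_fst.mul_const _)))
  refine measurable_of_tendsto_metrizable' atTop hW ?_
  rw [tendsto_pi_nhds]
  intro p
  have h1 : ∀ n : ℕ, p.1 ≤ (⌈p.1 * 2^n⌉ : ℝ) / 2^n := by
    intro n
    rw [le_div_iff₀ (by positivity)]
    exact Int.le_ceil _
  have h2 : ∀ n : ℕ, (⌈p.1 * 2^n⌉ : ℝ) / 2^n ≤ p.1 + (2:ℝ)⁻¹ ^ n := by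
    intro n
    rw [div_le_iff₀ (by positivity)]
    have := (Int.ceil_lt_add_one (p.1 * 2^n)).le
    calc (⌈p.1 * 2^n⌉ : ℝ) ≤ p.1 * 2^n + 1 := this
      _ = (p.1 + (2:ℝ)⁻¹ ^ n) * 2^n := by
          rw [add_mul, inv_pow, inv_mul_cancel₀ (by positivity : (2:ℝ)^n ≠ 0)]
  have htend : Tendsto (fun n : ℕ => (⌈p.1 * 2^n⌉ : ℝ) / 2^n) atTop (𝓝 p.1) := by
    refine tendsto_of_tendsto_of_tendsto_of_le_of_le (g := fun _ => p.1)
      (h := fun n : ℕ => p.1 + (2:ℝ)⁻¹ ^ n) tendsto_const_nhds ?_ h1 h2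
    have : Tendsto (fun n : ℕ => (2:ℝ)⁻¹ ^ n) atTop (𝓝 0) :=
      tendsto_pow_atTop_nhds_zero_of_lt_one (by norm_num) (by norm_num)
    simpa using tendsto_const_nhds.add this
  have htend' : Tendsto (fun n : ℕ => (⌈p.1 * 2^n⌉ : ℝ) / 2^n) atTop (𝓝[Set.Ici p.1] p.1) :=
    tendsto_nhdsWithin_of_tendsto_nhds_of_eventually_within _ htend
      (Eventually.of_forall h1)
  exact ((hrc p.2 p.1).tendsto).comp htend'

lemma measurable_llim_comp (hrc : ∀ ω t, ContinuousWithinAt (fun u => V u ω) (Set.Ici t) t)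
    (hll : ∀ ω t, (0:ℝ) < t →
      ∃ l : ℝ, Filter.Tendsto (fun u => V u ω) (nhdsWithin t (Set.Iio t)) (nhds l))
    (hV : ∀ t, Measurable (V t)) {R : Ω → ℝ} (hR : Measurable R) :
    Measurable (fun y => llim V (R y) y) := by
  simp only [llim]
  have hunc := measurable_uncurry_of_rc hV hrc
  have hk : ∀ k : ℕ, Measurable (fun y =>
      if R y ≤ 0 then V 0 y else V (R y - ((k:ℝ)+1)⁻¹) y) := by
    intro k
    refine Measurable.ite (measurableSet_le hR measurable_const) (hV 0) ?_
    exact hunc.comp ((hR.sub measurable_const).prodMk measurable_id)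
  refine measurable_of_tendsto_metrizable' atTop hk ?_
  rw [tendsto_pi_nhds]
  intro y
  by_cases hy : R y ≤ 0
  · simp only [hy, if_pos]
    exact tendsto_const_nhds
  · simp only [hy, if_neg, not_false_iff]
    push_neg at hy
    obtain ⟨l, hl⟩ := hll y (R y) hy
    have hlim : limUnder (nhdsWithin (R y) (Set.Iio (R y))) (fun t => V t y) = l :=
      hl.limUnder_eq
    rw [hlim]
    have hseq : Tendsto (fun k : ℕ => R y - ((k:ℝ)+1)⁻¹) atTop (𝓝[Set.Iio (R y)] (R y)) := by
      refine tendsto_nhdsWithin_of_tendsto_nhds_of_eventually_within _ ?_ ?_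
      · have : Tendsto (fun k : ℕ => ((k:ℝ)+1)⁻¹) atTop (𝓝 0) := by simpa [one_div] using tendsto_one_div_add_atTop_nhds_zero_nat (𝕜 := ℝ)
        simpa using tendsto_const_nhds.sub this
      · refine Eventually.of_forall fun k => ?_
        simp only [Set.mem_Iio]
        have : (0:ℝ) < ((k:ℝ)+1)⁻¹ := by positivity
        linarith
    exact hl.comp hseq

end PathMeas

section PathLim

variable {V : ℝ → Ω → ℝ}

lemma tendsto_llim_right
    (hrc : ∀ ω t, ContinuousWithinAt (fun u => V u ω) (Set.Ici t) t)
    (hll : ∀ ω t, (0:ℝ) < t →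
      ∃ l : ℝ, Filter.Tendsto (fun u => V u ω) (nhdsWithin t (Set.Iio t)) (nhds l))
    (ω : Ω) {s : ℝ} (hs : 0 ≤ s) :
    Tendsto (fun u => llim V u ω) (𝓝[>] s) (𝓝 (V s ω)) := by
  rw [Metric.tendsto_nhdsWithin_nhds]
  intro ε hε
  have hrc' := hrc ω s
  rw [Metric.continuousWithinAt_iff] at hrc'
  obtain ⟨δ, hδ, hδprop⟩ := hrc' (ε/2) (by linarith)
  refine ⟨δ, hδ, fun {u} hu hdist => ?_⟩
  have hus : s < u := hu
  have h0u : 0 < u := lt_of_le_of_lt hs hus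
  obtain ⟨l, hl⟩ := hll ω u h0u
  have hllim : llim V u ω = l := by
    simp only [llim, if_neg (not_le.mpr h0u)]
    exact hl.limUnder_eq
  rw [hllim]
  have hev : ∀ᶠ r in 𝓝[<] u, dist (V r ω) (V s ω) ≤ ε/2 := by
    filter_upwards [Ioo_mem_nhdsLT_of_mem (show u ∈ Set.Ioc s u from ⟨hus, le_rfl⟩)] with r hr
    refine (hδprop (le_of_lt hr.1) ?_).le
    rw [Real.dist_eq] at hdist ⊢
    rw [abs_of_nonneg (by linarith [hr.1] : (0:ℝ) ≤ r - s)]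
    rw [abs_of_nonneg (by linarith : (0:ℝ) ≤ u - s)] at hdist
    linarith [hr.2]
  have htd : Tendsto (fun r => dist (V r ω) (V s ω)) (𝓝[<] u) (𝓝 (dist l (V s ω))) :=
    (hl.dist tendsto_const_nhds)
  have : dist l (V s ω) ≤ ε/2 := le_of_tendsto htd hev
  calc dist l (V s ω) ≤ ε/2 := this
    _ < ε := by linarith

lemma ofReal_llim_le_liminf
    (hrc : ∀ ω t, ContinuousWithinAt (fun u => V u ω) (Set.Ici t) t)
    (hll : ∀ ω t, (0:ℝ) < t →
      ∃ l : ℝ, Filter.Tendsto (fun u => V u ω) (nhdsWithin t (Set.Iio t)) (nhds l))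
    (ω : Ω) (τ C : ℝ) {s : ℝ} (hs0 : 0 ≤ s)
    (hjump : |V s ω - llim V s ω| ≤ C) (hC0 : 0 ≤ C)
    (u : ℕ → ℝ) (hge : ∀ n, s ≤ u n) (ht : Tendsto u atTop (𝓝 s)) :
    ENNReal.ofReal |V τ ω - llim V s ω| ≤ ENNReal.ofReal C
      + Filter.liminf (fun n => ENNReal.ofReal |V τ ω - llim V (u n) ω|) atTop := by
  set T1 := |V τ ω - llim V s ω| with hT1
  set T2 := |V τ ω - V s ω| with hT2
  have hT12 : T1 ≤ T2 + C := by
    calc T1 ≤ |V τ ω - V s ω| + |V s ω - llim V s ω| := abs_sub_le _ _ _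
      _ ≤ T2 + C := by rw [← hT2]; linarith [hjump]
  rw [add_comm]
  refine ENNReal.le_of_forall_pos_le_add fun ε hε hfin => ?_
  have hεR : (0:ℝ) < (ε:ℝ) := hε
  have hev : ∀ᶠ n in atTop, ENNReal.ofReal (min T1 (T2 - ε)) ≤
      ENNReal.ofReal |V τ ω - llim V (u n) ω| := by
    have h1 : ∀ᶠ v in 𝓝[>] s, dist (llim V v ω) (V s ω) < (ε:ℝ) :=
      (tendsto_llim_right hrc hll ω hs0) (Metric.ball_mem_nhds _ hεR)
    rw [eventually_nhdsWithin_iff] at h1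
    filter_upwards [ht.eventually h1] with n hn
    rcases eq_or_lt_of_le (hge n) with heq | hlt
    · rw [← heq]
      exact ENNReal.ofReal_le_ofReal (min_le_left _ _)
    · have hd : dist (llim V (u n) ω) (V s ω) < (ε:ℝ) := hn hlt
      refine ENNReal.ofReal_le_ofReal (le_trans (min_le_right _ _) ?_)
      have habs : T2 ≤ |V τ ω - llim V (u n) ω| + |llim V (u n) ω - V s ω| := abs_sub_le _ _ _
      rw [Real.dist_eq] at hd
      linarith
  have hlim : ENNReal.ofReal (min T1 (T2 - ε)) ≤
      Filter.liminf (fun n => ENNReal.ofReal |V τ ω - llim V (u n) ω|) atTop := by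
    calc ENNReal.ofReal (min T1 (T2 - ε))
        = Filter.liminf (fun _ : ℕ => ENNReal.ofReal (min T1 (T2 - ε))) atTop :=
          (liminf_const _).symm
      _ ≤ _ := Filter.liminf_le_liminf hev
  calc ENNReal.ofReal T1 ≤ ENNReal.ofReal (min T1 (T2 - ε) + (C + ε)) := by
        refine ENNReal.ofReal_le_ofReal ?_
        rcases le_total T1 (T2 - ε) with h | h
        · rw [min_eq_left h]; linarith
        · rw [min_eq_right h]; linarith
    _ ≤ ENNReal.ofReal (min T1 (T2 - ε)) + ENNReal.ofReal (C + ε) := ENNReal.ofReal_add_le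
    _ ≤ Filter.liminf (fun n => ENNReal.ofReal |V τ ω - llim V (u n) ω|) atTop
        + (ENNReal.ofReal C + ENNReal.ofReal ε) := add_le_add hlim ENNReal.ofReal_add_le
    _ = (Filter.liminf (fun n => ENNReal.ofReal |V τ ω - llim V (u n) ω|) atTop
        + ENNReal.ofReal C) + ENNReal.ofReal (ε:ℝ) := by rw [add_assoc]
    _ = (Filter.liminf (fun n => ENNReal.ofReal |V τ ω - llim V (u n) ω|) atTop
        + ENNReal.ofReal C) + (ε : ℝ≥0∞) := by rw [ENNReal.ofReal_coe_nnreal]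

end PathLim

lemma ae_lintegral_condexpKernel_le (hm' : m' ≤ mΩ) {g : Ω → ℝ≥0∞} (hg : Measurable g)
    {c : ℝ≥0∞} (hc : c ≠ ∞)
    (H : ∀ A : Set Ω, MeasurableSet[m'] A → ∫⁻ y in A, g y ∂μ ≤ c * μ A) :
    ∀ᵐ ω ∂μ, ∫⁻ y, g y ∂(condExpKernel μ m' ω) ≤ c := by
  set h := fun ω => ∫⁻ y, g y ∂(condExpKernel μ m' ω) with hh
  have hhm : Measurable[m'] h :=
    @Measurable.lintegral_kernel Ω Ω m' mΩ (condExpKernel μ m') _ hg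
  have hnull : ∀ n : ℕ, μ {ω | c + ((n:ℝ≥0∞))⁻¹ ≤ h ω} = 0 := by
    intro n
    set A := {ω | c + ((n:ℝ≥0∞))⁻¹ ≤ h ω} with hA_def
    have hA : MeasurableSet[m'] A := measurableSet_le measurable_const hhm
    have hAΩ : MeasurableSet A := hm' _ hA
    have h1 : (c + ((n:ℝ≥0∞))⁻¹) * μ A ≤ ∫⁻ ω in A, h ω ∂μ := by
      rw [← setLIntegral_const A (c + ((n:ℝ≥0∞))⁻¹)]
      exact setLIntegral_mono (hhm.mono hm' le_rfl) fun ω hω => hω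
    have h2 : ∫⁻ ω in A, h ω ∂μ = ∫⁻ y in A, g y ∂μ :=
      setLIntegral_lintegral_condexpKernel hm' hg hA
    have h3 : c * μ A + ((n:ℝ≥0∞))⁻¹ * μ A ≤ c * μ A + 0 := by
      rw [← add_mul, add_zero]
      exact h1.trans (h2 ▸ H A hA)
    have h4 : ((n:ℝ≥0∞))⁻¹ * μ A ≤ 0 :=
      ENNReal.le_of_add_le_add_left (ENNReal.mul_ne_top hc (measure_ne_top μ A)) h3
    have h5 : ((n:ℝ≥0∞))⁻¹ * μ A = 0 := le_antisymm h4 zero_le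
    rcases mul_eq_zero.mp h5 with h6 | h6
    · exact absurd h6 (ENNReal.inv_ne_zero.mpr (ENNReal.natCast_ne_top n))
    · exact h6
  have hsub : {ω | c < h ω} ⊆ ⋃ n : ℕ, {ω | c + ((n:ℝ≥0∞))⁻¹ ≤ h ω} := by
    intro ω hω
    have hne : h ω - c ≠ 0 := by
      rw [Ne, tsub_eq_zero_iff_le]
      exact not_le.mpr hω
    obtain ⟨n, hn⟩ := ENNReal.exists_inv_nat_lt hne
    refine Set.mem_iUnion.mpr ⟨n, ?_⟩
    have : c + ((n:ℝ≥0∞))⁻¹ ≤ c + (h ω - c) := add_le_add_right hn.le c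
    rwa [add_tsub_cancel_of_le hω.le] at this
  rw [ae_iff]
  refine measure_mono_null ?_ (measure_iUnion_null hnull)
  intro ω hω
  exact hsub (not_le.mp hω)

lemma stopping_inter_preimage (ℱ : Filtration ℝ mΩ) {S : Ω → ℝ} (hS : IsStoppingTime ℱ (fun ω => (S ω : WithTop ℝ)))
    {A : Set Ω} (hA : MeasurableSet[hS.measurableSpace] A) {E : Set ℝ} (hE : MeasurableSet E)
    {t : ℝ} (hEt : E ⊆ Set.Iic t) : MeasurableSet[ℱ t] (A ∩ S ⁻¹' E) := by
  have hmin : Measurable[ℱ t] (fun ω => min (S ω) t) := by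
    refine measurable_of_Iic fun x => ?_
    by_cases htx : t ≤ x
    · have : (fun ω => min (S ω) t) ⁻¹' Set.Iic x = Set.univ := by
        ext ω; simp [min_le_iff, htx]
      rw [this]; exact MeasurableSet.univ
    · push_neg at htx
      have : (fun ω => min (S ω) t) ⁻¹' Set.Iic x = {ω | ((S ω : WithTop ℝ)) ≤ ((x:ℝ) : WithTop ℝ)} := by
        ext ω; simp [min_le_iff, not_le.mpr htx]
      rw [this]; exact ℱ.mono htx.le _ (hS x)
  have h1 : A ∩ S ⁻¹' E
      = (A ∩ {ω | S ω ≤ t}) ∩ ((fun ω => min (S ω) t) ⁻¹' E ∩ {ω | S ω ≤ t}) := by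
    ext y
    simp only [Set.mem_inter_iff, Set.mem_preimage, Set.mem_setOf_eq]
    constructor
    · rintro ⟨hyA, hyE⟩
      have hle : S y ≤ t := hEt hyE
      exact ⟨⟨hyA, hle⟩, by rwa [min_eq_left hle], hle⟩
    · rintro ⟨⟨hyA, hle⟩, hyE, -⟩
      rw [min_eq_left hle] at hyE
      exact ⟨hyA, hyE⟩
  rw [h1]
  have hA' := ((hS.measurableSet A).mp hA).2 t
  have hSt := hS t
  simp only [WithTop.coe_le_coe] at hA' hSt
  exact hA'.inter ((hmin hE).inter hSt)

lemma setLIntegral_le_of_ae_condexpKernel_le (hm' : m' ≤ mΩ) {g : Ω → ℝ≥0∞}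
    (hg : Measurable g) {c : ℝ≥0∞}
    (H : ∀ᵐ ω ∂μ, ∫⁻ y, g y ∂(condExpKernel μ m' ω) ≤ c)
    {A : Set Ω} (hA : MeasurableSet[m'] A) :
    ∫⁻ y in A, g y ∂μ ≤ c * μ A := by
  rw [← setLIntegral_lintegral_condexpKernel hm' hg hA]
  calc ∫⁻ ω in A, ∫⁻ y, g y ∂(condExpKernel μ m' ω) ∂μ
      ≤ ∫⁻ _ in A, c ∂μ := lintegral_mono_ae (ae_restrict_of_ae H)
    _ = c * μ A := setLIntegral_const A c

lemma discrete_step (ℱ : Filtration ℝ mΩ) {V : ℝ → Ω → ℝ} {τ B : ℝ}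
    (hgmeas : ∀ s t : ℝ, Measurable fun y => ENNReal.ofReal |V t y - llim V s y|)
    (hB' : ∀ s : ℝ, 0 ≤ s → s ≤ τ → ∀ A : Set Ω, MeasurableSet[(ℱ s : MeasurableSpace Ω)] A →
      ∫⁻ y in A, ENNReal.ofReal |V τ y - llim V s y| ∂μ ≤ ENNReal.ofReal B * μ A)
    (hτ0 : 0 ≤ τ) {S : Ω → ℝ} (hS : IsStoppingTime ℱ (fun ω => (S ω : WithTop ℝ))) (hSmeas : Measurable S)
    (hSτ : ∀ ω, S ω ≤ τ) (n : ℕ) {A : Set Ω} (hA : MeasurableSet[hS.measurableSpace] A) :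
    ∫⁻ y in A, ENNReal.ofReal |V τ y - llim V (min τ ((⌈2^n * S y⌉₊ : ℝ)/2^n)) y| ∂μ
      ≤ ENNReal.ofReal B * μ A := by
  have hAΩ : MeasurableSet A := hS.measurableSpace_le _ hA
  set t : ℕ → ℝ := fun k => min τ ((k:ℝ)/2^n) with ht_def
  set E : ℕ → Set Ω := fun k => {y | ⌈2^n * S y⌉₊ = k} with hE_def
  have hKmeas : Measurable (fun y => ⌈2^n * S y⌉₊) :=
    Nat.measurable_ceil.comp (measurable_const.mul hSmeas)
  have hmeasE : ∀ k, MeasurableSet (E k) := fun k => hKmeas (measurableSet_singleton k)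
  have hmeasAE : ∀ k, MeasurableSet (A ∩ E k) := fun k => hAΩ.inter (hmeasE k)
  have hdisj : Pairwise (Function.onFun Disjoint fun k => A ∩ E k) := by
    intro i j hij
    refine Set.disjoint_left.mpr fun y hyi hyj => hij ?_
    rw [← hyi.2, ← hyj.2]
  have hcover : A = ⋃ k, A ∩ E k := by
    ext y
    simp only [Set.mem_iUnion, Set.mem_inter_iff, hE_def, Set.mem_setOf_eq]
    exact ⟨fun hy => ⟨_, hy, rfl⟩, fun ⟨k, hy, _⟩ => hy⟩
  have hstep : ∀ k : ℕ, ∫⁻ y in A ∩ E k,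
      ENNReal.ofReal |V τ y - llim V (min τ ((⌈2^n * S y⌉₊ : ℝ)/2^n)) y| ∂μ
      ≤ ENNReal.ofReal B * μ (A ∩ E k) := by
    intro k
    have hcongr : ∫⁻ y in A ∩ E k,
        ENNReal.ofReal |V τ y - llim V (min τ ((⌈2^n * S y⌉₊ : ℝ)/2^n)) y| ∂μ
        = ∫⁻ y in A ∩ E k, ENNReal.ofReal |V τ y - llim V (t k) y| ∂μ := by
      refine setLIntegral_congr_fun (hmeasAE k) (fun y hy => ?_)
      have : ⌈2^n * S y⌉₊ = k := hy.2
      rw [this]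
    rw [hcongr]
    have ht0 : 0 ≤ t k := le_min hτ0 (by positivity)
    have htτ : t k ≤ τ := min_le_left _ _
    -- A ∩ E k ∈ ℱ (t k)
    have hmem : MeasurableSet[ℱ (t k)] (A ∩ E k) := by
      have hEeq : A ∩ E k = A ∩ S ⁻¹' ({x : ℝ | ⌈2^n * x⌉₊ = k} ∩ Set.Iic τ) := by
        ext y
        simp only [Set.mem_inter_iff, Set.mem_preimage, Set.mem_setOf_eq, Set.mem_Iic, hE_def]
        exact ⟨fun ⟨h1, h2⟩ => ⟨h1, h2, hSτ y⟩, fun ⟨h1, h2, _⟩ => ⟨h1, h2⟩⟩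
      rw [hEeq]
      refine stopping_inter_preimage ℱ hS hA
        ((Nat.measurable_ceil.comp (measurable_const.mul measurable_id)
          (measurableSet_singleton k)).inter measurableSet_Iic) ?_
      rintro x ⟨hx1, hx2⟩
      simp only [Set.mem_preimage, Function.comp_apply, Set.mem_singleton_iff, id_eq] at hx1
      have hxle : x ≤ (k:ℝ)/2^n := by
        rw [le_div_iff₀ (by positivity : (0:ℝ) < 2^n)]
        calc x * 2^n = 2^n * x := mul_comm _ _
          _ ≤ (⌈2^n * x⌉₊ : ℝ) := Nat.le_ceil _
          _ = (k:ℝ) := by rw [show ⌈2^n * x⌉₊ = k from hx1]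
      exact le_min hx2 hxle
    exact hB' (t k) ht0 htτ _ hmem
  calc ∫⁻ y in A, ENNReal.ofReal |V τ y - llim V (min τ ((⌈2^n * S y⌉₊ : ℝ)/2^n)) y| ∂μ
      = ∑' k, ∫⁻ y in A ∩ E k,
          ENNReal.ofReal |V τ y - llim V (min τ ((⌈2^n * S y⌉₊ : ℝ)/2^n)) y| ∂μ := by
        conv_lhs => rw [hcover]
        exact lintegral_iUnion hmeasAE hdisj _
    _ ≤ ∑' k, ENNReal.ofReal B * μ (A ∩ E k) := ENNReal.tsum_le_tsum hstep
    _ = ENNReal.ofReal B * ∑' k, μ (A ∩ E k) := ENNReal.tsum_mul_left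
    _ = ENNReal.ofReal B * μ A := by
        rw [← measure_iUnion hdisj hmeasAE, ← hcover]

end AuxLemmas

/-- from deterministic-time mean oscillation bound `B` and a uniform jump
bound `C`, one gets `E_S|V_τ - V_{S-}| ≤ B + C` a.s. for every stopping time `S ≤ τ`. -/
theorem det_to_stopping_single {Ω : Type*} {mΩ : MeasurableSpace Ω} [StandardBorelSpace Ω]
    (μ : Measure Ω) [IsProbabilityMeasure μ] (ℱ : Filtration ℝ mΩ)
    (τ : ℝ) (hτ : 0 < τ) (V : ℝ → Ω → ℝ)
    (hAd : Adapted ℱ V) (hRCLL : IsRCLL V) (B C : ℝ)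
    (hB : ∀ s t : ℝ, 0 ≤ s → s ≤ t → t ≤ τ →
      ∀ᵐ ω ∂μ, condE μ (ℱ s) (fun y => |V t y - llim V s y|) ω ≤ ENNReal.ofReal B)
    (hC : ∀ᵐ ω ∂μ, ∀ t ∈ Set.Icc (0:ℝ) τ, |V t ω - llim V t ω| ≤ C)
    (S : Ω → ℝ) (hS : IsStoppingTime ℱ (fun ω => (S ω : WithTop ℝ))) (hS0 : ∀ ω, 0 ≤ S ω) (hSτ : ∀ ω, S ω ≤ τ) :
    ∀ᵐ ω ∂μ, condE μ hS.measurableSpace (fun y => |V τ y - llim V (S y) y|) ω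
      ≤ ENNReal.ofReal (B + C) := by
  have hm' : hS.measurableSpace ≤ mΩ := hS.measurableSpace_le
  have hVmeas : ∀ t, Measurable (V t) := fun t => (hAd t).mono (ℱ.le t) le_rfl
  have hSmeas : Measurable S := by
    refine measurable_of_Iic fun x => ?_
    have h := hS x
    simp only [WithTop.coe_le_coe] at h
    exact ℱ.le x _ h
  have hgmeas : ∀ (R : Ω → ℝ), Measurable R →
      Measurable fun y => ENNReal.ofReal |V τ y - llim V (R y) y| := fun R hR =>
    (((hVmeas τ).sub
      (measurable_llim_comp hRCLL.rightCont hRCLL.leftLimExists hVmeas hR)).abs).ennreal_ofReal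
  haveI : NeBot (ae μ) := ae_neBot.mpr (IsProbabilityMeasure.ne_zero μ)
  have hC0 : 0 ≤ C := by
    obtain ⟨ω₀, hω₀⟩ := hC.exists
    exact le_trans (abs_nonneg _) (hω₀ 0 ⟨le_rfl, hτ.le⟩)
  -- set-integral form of hB
  have hB'' : ∀ s t : ℝ, 0 ≤ s → s ≤ t → t ≤ τ → ∀ A : Set Ω,
      MeasurableSet[(ℱ s : MeasurableSpace Ω)] A →
      ∫⁻ y in A, ENNReal.ofReal |V t y - llim V s y| ∂μ ≤ ENNReal.ofReal B * μ A := by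
    intro s t hs0 hst htτ A hA
    have hmeas : Measurable fun y => ENNReal.ofReal |V t y - llim V s y| :=
      (((hVmeas t).sub (measurable_llim_comp hRCLL.rightCont hRCLL.leftLimExists hVmeas
        measurable_const)).abs).ennreal_ofReal
    refine setLIntegral_le_of_ae_condexpKernel_le (ℱ.le s) hmeas ?_ hA
    filter_upwards [hB s t hs0 hst htτ] with ω hω
    simpa [condE] using hω
  have hB' : ∀ s : ℝ, 0 ≤ s → s ≤ τ → ∀ A : Set Ω,
      MeasurableSet[(ℱ s : MeasurableSpace Ω)] A →
      ∫⁻ y in A, ENNReal.ofReal |V τ y - llim V s y| ∂μ ≤ ENNReal.ofReal B * μ A :=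
    fun s h0 hsτ A hA => hB'' s τ h0 hsτ le_rfl A hA
  set g := fun y => ENNReal.ofReal |V τ y - llim V (S y) y| with hg_def
  have hg : Measurable g := hgmeas S hSmeas
  by_cases hB0 : 0 ≤ B
  · -- main case
    set Sn : ℕ → Ω → ℝ := fun n y => min τ ((⌈2^n * S y⌉₊ : ℝ)/2^n) with hSn_def
    have hSnmeas : ∀ n, Measurable (Sn n) := by
      intro n
      exact measurable_const.min
        ((measurable_from_top.comp (Nat.measurable_ceil.comp
          (measurable_const.mul hSmeas))).div_const _)
    have hgn : ∀ n, Measurable fun y => ENNReal.ofReal |V τ y - llim V (Sn n y) y| :=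
      fun n => hgmeas (Sn n) (hSnmeas n)
    have hptwise : ∀ᵐ y ∂μ, g y ≤ ENNReal.ofReal C
        + Filter.liminf (fun n => ENNReal.ofReal |V τ y - llim V (Sn n y) y|) atTop := by
      filter_upwards [hC] with y hy
      have hge : ∀ n, S y ≤ Sn n y := by
        intro n
        refine le_min (hSτ y) ?_
        rw [le_div_iff₀ (by positivity : (0:ℝ) < 2^n)]
        calc S y * 2^n = 2^n * S y := mul_comm _ _
          _ ≤ (⌈2^n * S y⌉₊ : ℝ) := Nat.le_ceil _
      have htend : Tendsto (fun n => Sn n y) atTop (𝓝 (S y)) := by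
        have h2 : ∀ n : ℕ, Sn n y ≤ S y + (2⁻¹:ℝ)^n := by
          intro n
          refine le_trans (min_le_right _ _) ?_
          rw [div_le_iff₀ (by positivity : (0:ℝ) < 2^n)]
          have h3 : (0:ℝ) ≤ 2^n * S y := mul_nonneg (by positivity) (hS0 y)
          calc (⌈2^n * S y⌉₊ : ℝ) ≤ 2^n * S y + 1 := (Nat.ceil_lt_add_one h3).le
            _ = (S y + (2⁻¹:ℝ)^n) * 2^n := by
                rw [add_mul, inv_pow, inv_mul_cancel₀ (by positivity : (2:ℝ)^n ≠ 0)]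
                ring
        refine tendsto_of_tendsto_of_tendsto_of_le_of_le (g := fun _ => S y)
          (h := fun n : ℕ => S y + (2⁻¹:ℝ)^n) tendsto_const_nhds ?_ hge h2
        have : Tendsto (fun n : ℕ => (2⁻¹:ℝ)^n) atTop (𝓝 0) :=
          tendsto_pow_atTop_nhds_zero_of_lt_one (by norm_num) (by norm_num)
        simpa using tendsto_const_nhds.add this
      exact ofReal_llim_le_liminf hRCLL.rightCont hRCLL.leftLimExists y τ C (hS0 y)
        (hy (S y) ⟨hS0 y, hSτ y⟩) hC0 (fun n => Sn n y) hge htend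
    have hsetbound : ∀ A : Set Ω, MeasurableSet[hS.measurableSpace] A →
        ∫⁻ y in A, g y ∂μ ≤ ENNReal.ofReal (B + C) * μ A := by
      intro A hA
      calc ∫⁻ y in A, g y ∂μ
          ≤ ∫⁻ y in A, (ENNReal.ofReal C
            + Filter.liminf (fun n => ENNReal.ofReal |V τ y - llim V (Sn n y) y|) atTop) ∂μ :=
            lintegral_mono_ae (ae_restrict_of_ae hptwise)
        _ = ENNReal.ofReal C * μ A + ∫⁻ y in A,
            Filter.liminf (fun n => ENNReal.ofReal |V τ y - llim V (Sn n y) y|) atTop ∂μ := by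
            rw [lintegral_add_left measurable_const, setLIntegral_const]
        _ ≤ ENNReal.ofReal C * μ A
            + Filter.liminf (fun n => ∫⁻ y in A,
                ENNReal.ofReal |V τ y - llim V (Sn n y) y| ∂μ) atTop := by
            exact add_le_add_right (lintegral_liminf_le hgn) _
        _ ≤ ENNReal.ofReal C * μ A + ENNReal.ofReal B * μ A := by
            refine add_le_add_right ?_ _
            calc Filter.liminf (fun n => ∫⁻ y in A,
                  ENNReal.ofReal |V τ y - llim V (Sn n y) y| ∂μ) atTop
                ≤ Filter.liminf (fun _ : ℕ => ENNReal.ofReal B * μ A) atTop :=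
                  Filter.liminf_le_liminf (Eventually.of_forall fun n =>
                    discrete_step ℱ (fun s t => (((hVmeas t).sub (measurable_llim_comp
                      hRCLL.rightCont hRCLL.leftLimExists hVmeas measurable_const)).abs).ennreal_ofReal)
                      hB' hτ.le hS hSmeas hSτ n hA)
              _ = ENNReal.ofReal B * μ A := liminf_const _
        _ = ENNReal.ofReal (B + C) * μ A := by
            rw [ENNReal.ofReal_add hB0 hC0, add_mul, add_comm]
    have hfinal := ae_lintegral_condexpKernel_le hm' hg ENNReal.ofReal_ne_top hsetbound
    filter_upwards [hfinal] with ω hω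
    simpa [condE, hg_def] using hω
  · -- degenerate case B < 0
    push_neg at hB0
    have hVeq : ∀ t : ℝ, 0 ≤ t → t ≤ τ → ∀ᵐ y ∂μ, V t y = V 0 y := by
      intro t h0 ht
      have h1 := hB'' 0 t le_rfl h0 ht Set.univ MeasurableSet.univ
      rw [Measure.restrict_univ] at h1
      have hB0' : ENNReal.ofReal B = 0 := ENNReal.ofReal_eq_zero.mpr hB0.le
      rw [hB0', zero_mul] at h1
      have hmeas : Measurable fun y => ENNReal.ofReal |V t y - llim V 0 y| :=
        (((hVmeas t).sub (measurable_llim_comp hRCLL.rightCont hRCLL.leftLimExists hVmeas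
          measurable_const)).abs).ennreal_ofReal
      have h2 := (lintegral_eq_zero_iff hmeas).mp (le_antisymm h1 zero_le)
      filter_upwards [h2] with y hy
      simp only [Pi.zero_apply, ENNReal.ofReal_eq_zero] at hy
      have : |V t y - llim V 0 y| = 0 := le_antisymm hy (abs_nonneg _)
      have hll0 : llim V (0:ℝ) y = V 0 y := by simp [llim]
      rw [hll0] at this
      have := abs_eq_zero.mp this
      linarith
    have hQ : ∀ᵐ y ∂μ, (∀ q : ℚ, 0 ≤ (q:ℝ) → (q:ℝ) ≤ τ → V q y = V 0 y) ∧ V τ y = V 0 y := by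
      refine (Eventually.and ?_ (hVeq τ hτ.le le_rfl))
      rw [ae_all_iff]
      intro q
      by_cases hq : 0 ≤ (q:ℝ) ∧ (q:ℝ) ≤ τ
      · filter_upwards [hVeq q hq.1 hq.2] with y hy
        exact fun _ _ => hy
      · refine ae_of_all _ fun y h1 h2 => absurd ⟨h1, h2⟩ hq
    have hgzero : ∀ᵐ y ∂μ, g y = 0 := by
      filter_upwards [hQ] with y hy
      obtain ⟨hq, hτy⟩ := hy
      have hconst : ∀ t : ℝ, 0 ≤ t → t < τ → V t y = V 0 y := by
        intro t h0 hlt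
        have hex : ∀ k : ℕ, ∃ q : ℚ, t < (q:ℝ) ∧ (q:ℝ) < min τ (t + (1:ℝ)/(k+1)) := by
          intro k
          have : t < min τ (t + (1:ℝ)/(k+1)) := by
            refine lt_min hlt ?_
            have : (0:ℝ) < 1/(k+1) := by positivity
            linarith
          exact exists_rat_btwn this
        choose r hr1 hr2 using hex
        have hVr : ∀ k, V (r k) y = V 0 y := by
          intro k
          refine hq (r k) (le_trans h0 (hr1 k).le) (le_trans (hr2 k).le (min_le_left _ _))
        have htendr : Tendsto (fun k => ((r k : ℝ))) atTop (𝓝[Set.Ici t] t) := by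
          refine tendsto_nhdsWithin_of_tendsto_nhds_of_eventually_within _ ?_
            (Eventually.of_forall fun k => (hr1 k).le)
          refine tendsto_of_tendsto_of_tendsto_of_le_of_le (g := fun _ => t)
            (h := fun k : ℕ => t + (1:ℝ)/(k+1)) tendsto_const_nhds ?_
            (fun k => (hr1 k).le) (fun k => (le_trans (hr2 k).le (min_le_right _ _)))
          have : Tendsto (fun k : ℕ => (1:ℝ)/(k+1)) atTop (𝓝 0) :=
            tendsto_one_div_add_atTop_nhds_zero_nat
          simpa using tendsto_const_nhds.add this
        have hc := ((hRCLL.rightCont y t).tendsto).comp htendr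
        have hc2 : Tendsto (fun k : ℕ => V ((r k : ℝ)) y) atTop (𝓝 (V 0 y)) := by
          refine Tendsto.congr (fun k => (hVr k).symm) tendsto_const_nhds
        exact tendsto_nhds_unique hc hc2
      have hllim : llim V (S y) y = V 0 y := by
        by_cases hSy : S y ≤ 0
        · simp [llim, hSy]
        · push_neg at hSy
          have htd : Tendsto (fun u => V u y) (𝓝[<] (S y)) (𝓝 (V 0 y)) := by
            refine Tendsto.congr' ?_ tendsto_const_nhds
            filter_upwards [Ioo_mem_nhdsLT_of_mem
              (show S y ∈ Set.Ioc (0:ℝ) (S y) from ⟨hSy, le_rfl⟩)] with u hu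
            exact (hconst u hu.1.le (lt_of_lt_of_le hu.2 (hSτ y))).symm
          simp only [llim, if_neg (not_le.mpr hSy)]
          exact htd.limUnder_eq
      rw [hg_def]
      simp only [hllim, hτy, sub_self, abs_zero, ENNReal.ofReal_zero]
    have hzero : ∫⁻ y, g y ∂μ = 0 := (lintegral_eq_zero_iff hg).mpr hgzero
    have hker : ∫⁻ ω, (∫⁻ y, g y ∂(condExpKernel μ hS.measurableSpace ω)) ∂μ = 0 := by
      have h4 := setLIntegral_lintegral_condexpKernel (μ := μ) hm' hg
        (MeasurableSet.univ (α := Ω))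
      rw [Measure.restrict_univ] at h4
      rw [h4, hzero]
    have hmeask : Measurable fun ω => ∫⁻ y, g y ∂(condExpKernel μ hS.measurableSpace ω) :=
      (@Measurable.lintegral_kernel Ω Ω hS.measurableSpace mΩ
        (condExpKernel μ hS.measurableSpace) _ hg).mono hm' le_rfl
    have h5 := (lintegral_eq_zero_iff hmeask).mp hker
    filter_upwards [h5] with ω hω
    have : condE μ hS.measurableSpace (fun y => |V τ y - llim V (S y) y|) ω = 0 := by
      simpa [condE, hg_def] using hω
    rw [this]
    exact zero_le


end
end

section
/- (Maximal process of a BMO process is BMO.) Let (V_t)_{t∈[0,τ]} be a BMO process and define its maximal process V*_t := sup_{s≤t} |V_s − V_0|. Then V* is a BMO process and ρ_{s,t}(V*) ≤ 11 ρ_{s,t}(V) for all 0 ≤ s ≤ t ≤ τ. -/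
open MeasureTheory ProbabilityTheory Filter Topology Set
open scoped ENNReal NNReal

noncomputable section

section Pathwise

variable {Ω : Type*} {V : ℝ → Ω → ℝ}

/-- An RCLL path is bounded on compacts `[0, a]`. -/
lemma rcll_exists_bound (hV : IsRCLL V) (ω : Ω) (a : ℝ) :
    ∃ C : ℝ, ∀ r ∈ Set.Icc (0:ℝ) a, |V r ω - V 0 ω| ≤ C := by
  rcases lt_or_ge a 0 with ha | ha
  · exact ⟨0, fun r hr => absurd (hr.1.trans hr.2) (not_le.2 ha)⟩
  suffices h : ∃ C : ℝ, ∀ r ∈ Set.Icc (0:ℝ) a, |V r ω| ≤ C by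
    obtain ⟨C, hC⟩ := h
    exact ⟨C + |V 0 ω|, fun r hr => (abs_sub _ _).trans
      (add_le_add (hC r hr) le_rfl)⟩
  set A : Set ℝ := {x | x ∈ Set.Icc (0:ℝ) a ∧ ∃ C : ℝ, ∀ r ∈ Set.Icc (0:ℝ) x, |V r ω| ≤ C}
    with hA
  have h0A : (0:ℝ) ∈ A := by
    refine ⟨⟨le_rfl, ha⟩, |V 0 ω|, fun r hr => ?_⟩
    have : r = 0 := le_antisymm hr.2 hr.1
    rw [this]
  have hAbdd : BddAbove A := ⟨a, fun x hx => hx.1.2⟩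
  have hAne : A.Nonempty := ⟨0, h0A⟩
  set b := sSup A with hb
  have hb0 : 0 ≤ b := le_csSup hAbdd h0A
  have hba : b ≤ a := csSup_le hAne fun x hx => hx.1.2
  -- P b holds
  have hPb : ∃ C : ℝ, ∀ r ∈ Set.Icc (0:ℝ) b, |V r ω| ≤ C := by
    rcases eq_or_lt_of_le hb0 with hb0' | hb0'
    · refine ⟨|V 0 ω|, fun r hr => ?_⟩
      have : r = 0 := le_antisymm (hr.2.trans hb0'.symm.le) hr.1
      rw [this]
    · obtain ⟨l, hl⟩ := hV.leftLimExists ω b hb0'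
      have hev : ∀ᶠ u in nhdsWithin b (Set.Iio b), |V u ω| ≤ |l| + 1 := by
        have h1 : ∀ᶠ x in nhds l, |x| ≤ |l| + 1 := by
          have : Continuous fun x : ℝ => |x| := continuous_abs
          have h2 := this.continuousAt (x := l)
          have h3 : (fun x : ℝ => |x|) ⁻¹' (Set.Iic (|l|+1)) ∈ nhds l :=
            h2.preimage_mem_nhds (Iic_mem_nhds (by linarith))
          exact h3
        exact hl.eventually h1
      rw [eventually_iff, mem_nhdsLT_iff_exists_Ioo_subset] at hev
      obtain ⟨c, hc, hsub⟩ := hev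
      obtain ⟨x, hxA, hxc⟩ := exists_lt_of_lt_csSup hAne (lt_of_le_of_lt (le_refl _) (show max c 0 < b from by
        rcases le_or_gt c 0 with h | h
        · simpa [max_eq_right h] using hb0'
        · simpa [max_eq_left h.le] using hc))
      obtain ⟨hxIcc, C, hC⟩ := hxA
      refine ⟨max (max C (|l| + 1)) |V b ω|, fun r hr => ?_⟩
      rcases le_or_gt r x with hrx | hrx
      · exact le_trans (hC r ⟨hr.1, hrx⟩) (le_max_of_le_left (le_max_left _ _))
      · rcases eq_or_lt_of_le hr.2 with hrb | hrb
        · rw [hrb]; exact le_max_right _ _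
        · refine le_trans ?_ (le_max_of_le_left (le_max_right _ _))
          have hcr : c < r := lt_of_le_of_lt (le_max_left c 0) (hxc.trans hrx)
          exact hsub ⟨hcr, hrb⟩
  obtain ⟨C, hC⟩ := hPb
  rcases eq_or_lt_of_le hba with hba' | hba'
  · exact ⟨C, by rwa [← hba']⟩
  · -- contradiction: can go beyond b
    exfalso
    have hrc := hV.rightCont ω b
    have h1 : ∀ᶠ x in nhds (V b ω), |x| ≤ |V b ω| + 1 := by
      have h2 := (continuous_abs).continuousAt (x := V b ω)
      have h3 : (fun x : ℝ => |x|) ⁻¹' (Set.Iic (|V b ω|+1)) ∈ nhds (V b ω) :=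
        h2.preimage_mem_nhds (Iic_mem_nhds (by linarith))
      exact h3
    have hev : ∀ᶠ u in nhdsWithin b (Set.Ici b), |V u ω| ≤ |V b ω| + 1 := hrc.eventually h1
    rw [eventually_iff, mem_nhdsGE_iff_exists_Ico_subset] at hev
    obtain ⟨w, hw, hsub⟩ := hev
    set y := min a ((b + min w a) / 2) with hy
    have hby : b < y := by
      rcases hw with hw
      simp only [hy, lt_min_iff]
      constructor
      · exact hba'
      · have : b < min w a := lt_min hw hba'
        linarith
    have hyA : y ∈ A := by
      refine ⟨⟨hb0.trans hby.le, min_le_left _ _⟩, max C (|V b ω| + 1), fun r hr => ?_⟩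
      rcases le_or_gt r b with hrb | hrb
      · exact le_trans (hC r ⟨hr.1, hrb⟩) (le_max_left _ _)
      · refine le_trans (hsub ⟨hrb.le, ?_⟩) (le_max_right _ _)
        have h3 : y ≤ (b + min w a) / 2 := min_le_right _ _
        have h4 : (b + min w a) / 2 < min w a := by
          have : b < min w a := lt_min hw hba'
          linarith
        have := hr.2.trans_lt (h3.trans_lt h4)
        exact this.trans_le (min_le_left _ _)
    have := le_csSup hAbdd hyA
    exact absurd this (not_le.2 hby)

/-- The maximal process. -/
def mx (V : ℝ → Ω → ℝ) : ℝ → Ω → ℝ := fun u ω => ⨆ r : Set.Icc (0:ℝ) u, |V (r:ℝ) ω - V 0 ω|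

lemma mx_bddAbove (hV : IsRCLL V) (ω : Ω) (u : ℝ) :
    BddAbove (Set.range fun r : Set.Icc (0:ℝ) u => |V (r:ℝ) ω - V 0 ω|) := by
  obtain ⟨C, hC⟩ := rcll_exists_bound hV ω u
  exact ⟨C, by rintro x ⟨r, rfl⟩; exact hC r r.2⟩

lemma le_mx (hV : IsRCLL V) (ω : Ω) {u r : ℝ} (hr : r ∈ Set.Icc (0:ℝ) u) :
    |V r ω - V 0 ω| ≤ mx V u ω :=
  le_ciSup (mx_bddAbove hV ω u) (⟨r, hr⟩ : Set.Icc (0:ℝ) u)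

lemma mx_le (ω : Ω) {u C : ℝ} (hC : 0 ≤ C)
    (h : ∀ r ∈ Set.Icc (0:ℝ) u, |V r ω - V 0 ω| ≤ C) : mx V u ω ≤ C := by
  rcases isEmpty_or_nonempty (Set.Icc (0:ℝ) u) with he | hne
  · rw [mx, Real.iSup_of_isEmpty]; exact hC
  · exact ciSup_le fun r => h r r.2

lemma mx_nonneg (hV : IsRCLL V) (ω : Ω) (u : ℝ) : 0 ≤ mx V u ω := by
  rcases le_or_gt 0 u with hu | hu
  · have := le_mx hV ω (u := u) (r := 0) ⟨le_rfl, hu⟩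
    simpa using this.trans_eq' (by simp)
  · have : IsEmpty (Set.Icc (0:ℝ) u) := by
      rw [Set.isEmpty_coe_sort, Set.Icc_eq_empty_iff]
      exact not_le.2 hu
    rw [mx, Real.iSup_of_isEmpty]

lemma mx_zero (hV : IsRCLL V) (ω : Ω) : mx V 0 ω = 0 := by
  refine le_antisymm (mx_le ω le_rfl fun r hr => ?_) (mx_nonneg hV ω 0)
  have : r = 0 := le_antisymm hr.2 hr.1
  simp [this]

lemma mx_neg (ω : Ω) {u : ℝ} (hu : u < 0) : mx V u ω = 0 := by
  have : IsEmpty (Set.Icc (0:ℝ) u) := by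
    rw [Set.isEmpty_coe_sort, Set.Icc_eq_empty_iff]
    exact not_le.2 hu
  rw [mx, Real.iSup_of_isEmpty]

lemma mx_mono (hV : IsRCLL V) (ω : Ω) : Monotone (fun u => mx V u ω) := by
  intro u v huv
  show mx V u ω ≤ mx V v ω
  rcases lt_or_ge u 0 with hu | hu
  · rw [mx_neg ω hu]; exact mx_nonneg hV ω v
  · exact mx_le ω (mx_nonneg hV ω v) fun r hr => le_mx hV ω ⟨hr.1, hr.2.trans huv⟩

lemma llim_mx_eq_sSup (hV : IsRCLL V) (ω : Ω) {u : ℝ} (hu : 0 < u) :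
    llim (mx V) u ω = sSup ((fun v => mx V v ω) '' Set.Iio u) := by
  rw [llim, if_neg (not_le.2 hu)]
  exact ((mx_mono hV ω).tendsto_nhdsLT u).limUnder_eq

lemma llim_mx_nonneg (hV : IsRCLL V) (ω : Ω) {u : ℝ} (hu : 0 ≤ u) :
    0 ≤ llim (mx V) u ω := by
  rcases eq_or_lt_of_le hu with hu' | hu'
  · rw [← hu', llim, if_pos le_rfl, mx_zero hV]
  · rw [llim_mx_eq_sSup hV ω hu']
    have h0 : mx V 0 ω ∈ (fun v => mx V v ω) '' Set.Iio u := ⟨0, hu', rfl⟩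
    have h1 := le_csSup (⟨mx V u ω, by rintro x ⟨v, hv, rfl⟩; exact mx_mono hV ω hv.le⟩ :
      BddAbove ((fun v => mx V v ω) '' Set.Iio u)) h0
    rw [mx_zero hV ω] at h1
    exact h1

lemma mx_le_llim_mx (hV : IsRCLL V) (ω : Ω) {u r : ℝ} (hr : r < u) :
    mx V r ω ≤ llim (mx V) u ω := by
  rcases le_or_gt u 0 with hu | hu
  · rw [llim, if_pos hu, mx_zero hV]
    rcases lt_or_ge r 0 with hr' | hr'
    · rw [mx_neg ω hr']
    · exact absurd (hr'.trans_lt hr) (not_lt.2 hu)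
  · rw [llim_mx_eq_sSup hV ω hu]
    exact le_csSup ⟨mx V u ω, by rintro x ⟨v, hv, rfl⟩; exact mx_mono hV ω hv.le⟩
      ⟨r, hr, rfl⟩

lemma llim_mx_le_mx (hV : IsRCLL V) (ω : Ω) {u : ℝ} (hu : 0 ≤ u) :
    llim (mx V) u ω ≤ mx V u ω := by
  rcases eq_or_lt_of_le hu with hu' | hu'
  · rw [← hu', llim, if_pos le_rfl]
  · rw [llim_mx_eq_sSup hV ω hu']
    exact csSup_le (⟨mx V 0 ω, 0, hu', rfl⟩)
      (by rintro x ⟨v, hv, rfl⟩; exact mx_mono hV ω hv.le)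

/-- `|llim V u - V 0| ≤ llim (mx V) u` for `0 ≤ u`. -/
lemma abs_llim_sub_le (hV : IsRCLL V) (ω : Ω) {u : ℝ} (hu : 0 ≤ u) :
    |llim V u ω - V 0 ω| ≤ llim (mx V) u ω := by
  rcases eq_or_lt_of_le hu with hu' | hu'
  · rw [← hu', llim, if_pos le_rfl, llim, if_pos le_rfl, mx_zero hV]
    simp
  · obtain ⟨l, hl⟩ := hV.leftLimExists ω u hu'
    have hlim : llim V u ω = l := by
      rw [llim, if_neg (not_le.2 hu')]; exact hl.limUnder_eq
    rw [hlim]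
    have htend : Tendsto (fun v => |V v ω - V 0 ω|) (nhdsWithin u (Set.Iio u))
        (nhds (|l - V 0 ω|)) := (hl.sub_const _).abs
    refine le_of_tendsto htend ?_
    rw [eventually_iff, mem_nhdsLT_iff_exists_Ioo_subset]
    refine ⟨u/2, by simpa using half_lt_self hu', fun v hv => ?_⟩
    have hv0 : (0:ℝ) ≤ v := le_of_lt (lt_of_le_of_lt (by positivity) hv.1)
    exact (le_mx hV ω ⟨hv0, le_rfl⟩).trans (mx_le_llim_mx hV ω hv.2)

/-- Main pathwise estimate: the increment of the maximal process is bounded by any bound on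
the clipped-rational increments of `V`. -/
lemma mx_increment_le (hV : IsRCLL V) (ω : Ω) {S T L : ℝ} (hS0 : 0 ≤ S) (hST : S ≤ T)
    (hL : ∀ q : ℚ, |V (min (max (q:ℝ) S) T) ω - llim V S ω| ≤ L) :
    mx V T ω - llim (mx V) S ω ≤ L := by
  have hL0 : 0 ≤ L := le_trans (abs_nonneg _) (hL 0)
  have hll0 : 0 ≤ llim (mx V) S ω := llim_mx_nonneg hV ω hS0
  have key : ∀ r ∈ Set.Icc (0:ℝ) T, |V r ω - V 0 ω| ≤ llim (mx V) S ω + L := by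
    intro r hr
    rcases lt_or_ge r S with hrS | hrS
    · exact le_trans (le_trans (le_mx hV ω ⟨hr.1, le_rfl⟩) (mx_le_llim_mx hV ω hrS))
        (by linarith)
    · -- r ∈ [S, T]
      have h2 : |llim V S ω - V 0 ω| ≤ llim (mx V) S ω := abs_llim_sub_le hV ω hS0
      have h1 : |V r ω - llim V S ω| ≤ L := by
        rcases eq_or_lt_of_le hr.2 with hrT | hrT
        · obtain ⟨q, hq⟩ := exists_rat_gt T
          have hclip : min (max (q:ℝ) S) T = T :=
            min_eq_right (le_trans hq.le (le_max_left _ _))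
          have := hL q
          rw [hclip] at this
          rwa [hrT]
        · -- r < T : approximate from the right by rationals
          have hcont : ContinuousWithinAt (fun v => |V v ω - llim V S ω|) (Set.Ici r) r :=
            ((hV.rightCont ω r).sub continuousWithinAt_const).abs
          have hq : ∀ n : ℕ, ∃ q : ℚ, r < (q:ℝ) ∧ (q:ℝ) < min T (r + 1/(n+1)) := by
            intro n
            have : r < min T (r + 1/(n+1)) := lt_min hrT (by
              have : (0:ℝ) < 1/(n+1) := by positivity
              linarith)
            exact_mod_cast exists_rat_btwn this
          choose q hq1 hq2 using hq
          have hqT : ∀ n, (q n : ℝ) < T := fun n => (hq2 n).trans_le (min_le_left _ _)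
          have htq : Tendsto (fun n : ℕ => (q n : ℝ)) atTop (nhds r) := by
            have hup : Tendsto (fun n : ℕ => r + 1/((n:ℝ)+1)) atTop (nhds r) := by
              have : Tendsto (fun n : ℕ => 1/((n:ℝ)+1)) atTop (nhds 0) :=
                tendsto_one_div_add_atTop_nhds_zero_nat
              have h := tendsto_const_nhds (x := r) (f := atTop (α := ℕ)) |>.add this
              simpa using h
            exact tendsto_of_tendsto_of_tendsto_of_le_of_le tendsto_const_nhds hup
              (fun n => (hq1 n).le) (fun n => ((hq2 n).trans_le (min_le_right _ _)).le)
          have htend : Tendsto (fun n : ℕ => |V ((q n : ℝ)) ω - llim V S ω|) atTop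
              (nhds (|V r ω - llim V S ω|)) := by
            refine hcont.tendsto.comp ?_
            rw [tendsto_nhdsWithin_iff]
            exact ⟨htq, Eventually.of_forall fun n => (hq1 n).le⟩
          refine le_of_tendsto htend (Eventually.of_forall fun n => ?_)
          have hclip : min (max ((q n : ℝ)) S) T = (q n : ℝ) := by
            rw [max_eq_left (le_trans hrS (hq1 n).le), min_eq_left (hqT n).le]
          have := hL (q n)
          rwa [hclip] at this
      calc |V r ω - V 0 ω| ≤ |V r ω - llim V S ω| + |llim V S ω - V 0 ω| := abs_sub_le _ _ _
        _ ≤ L + llim (mx V) S ω := add_le_add h1 h2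
        _ = llim (mx V) S ω + L := add_comm _ _
  have := mx_le ω (by linarith) key
  linarith

/-- real arithmetic: clipping at a later start time. -/
lemma clip_eq_of_le {q S R T : ℝ} (hSR : S ≤ R) (hRT : R ≤ T)
    (h : R ≤ min (max q S) T) : min (max q S) T = min (max q R) T := by
  rcases le_or_gt q R with hq | hq
  · have h1 : max q R = R := max_eq_right hq
    have h2 : max q S ≤ R := max_le hq hSR
    have h3 : min (max q S) T ≤ R := le_trans (min_le_left _ _) h2
    rw [h1, min_eq_left hRT]
    exact le_antisymm h3 h
  · rw [max_eq_left (le_trans hSR hq.le), max_eq_left hq.le]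

lemma isRCLL_mx (hV : IsRCLL V) : IsRCLL (mx V) := by
  constructor
  · intro ω u
    rcases lt_or_ge u 0 with hu | hu
    · have hev : (fun v => mx V v ω) =ᶠ[nhdsWithin u (Set.Ici u)] fun _ => (0:ℝ) := by
        filter_upwards [nhdsWithin_le_nhds (Iio_mem_nhds hu)] with v hv
        exact mx_neg ω hv
      have h0 : ContinuousWithinAt (fun _ : ℝ => (0:ℝ)) (Set.Ici u) u :=
        continuousWithinAt_const
      exact h0.congr_of_eventuallyEq hev (mx_neg ω hu)
    · rw [ContinuousWithinAt]
      rw [tendsto_order]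
      constructor
      · intro c hc
        filter_upwards [eventually_mem_nhdsWithin] with v hv
        exact lt_of_lt_of_le hc (mx_mono hV ω hv)
      · intro c hc
        set ε := c - mx V u ω with hε
        have hε0 : 0 < ε := sub_pos.2 hc
        have h1 : ∀ᶠ x in nhds (V u ω), |x - V u ω| < ε/2 := by
          have : Continuous fun x : ℝ => |x - V u ω| := (continuous_id.sub continuous_const).abs
          have h3 : (fun x : ℝ => |x - V u ω|) ⁻¹' (Set.Iio (ε/2)) ∈ nhds (V u ω) :=
            this.continuousAt.preimage_mem_nhds (Iio_mem_nhds (by simp; positivity))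
          exact h3
        have hev := (hV.rightCont ω u).eventually h1
        rw [eventually_iff, mem_nhdsGE_iff_exists_Ico_subset] at hev
        obtain ⟨w, hw, hsub⟩ := hev
        rw [eventually_iff, mem_nhdsGE_iff_exists_Ico_subset]
        refine ⟨w, hw, fun v hv => ?_⟩
        have : mx V v ω ≤ mx V u ω + ε/2 := by
          refine mx_le ω (by have := mx_nonneg hV ω u; linarith) fun r hr => ?_
          rcases le_or_gt r u with hru | hru
          · exact le_trans (le_mx hV ω ⟨hr.1, hru⟩) (by linarith)
          · have hrIco : r ∈ Set.Ico u w := ⟨hru.le, lt_of_le_of_lt hr.2 hv.2⟩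
            have h4 : |V r ω - V u ω| < ε/2 := hsub hrIco
            have h5 : |V u ω - V 0 ω| ≤ mx V u ω := le_mx hV ω ⟨hu, le_rfl⟩
            calc |V r ω - V 0 ω| ≤ |V r ω - V u ω| + |V u ω - V 0 ω| := abs_sub_le _ _ _
              _ ≤ ε/2 + mx V u ω := add_le_add h4.le h5
              _ = mx V u ω + ε/2 := add_comm _ _
        exact lt_of_le_of_lt this (by simp only [hε]; linarith)
  · intro ω u hu
    exact ⟨sSup ((fun v => mx V v ω) '' Set.Iio u), (mx_mono hV ω).tendsto_nhdsLT u⟩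

end Pathwise

section Measurability

variable {Ω : Type*} {mΩ : MeasurableSpace Ω} {ℱ : Filtration ℝ mΩ} {V : ℝ → Ω → ℝ}

/-- An adapted RCLL process is progressively measurable. -/
lemma progMeasurable_of_rcll (hAd : Adapted ℱ V) (hV : IsRCLL V) : ProgMeasurable ℱ V := by
  intro i
  set M : MeasurableSpace (Set.Iic i × Ω) := Subtype.instMeasurableSpace.prod (ℱ i) with hM
  -- approximating sequence
  set g : ℕ → ℝ → ℝ := fun n s => min i ((⌈s * 2^n⌉ : ℤ) / 2^n) with hg
  have hg_ge : ∀ n (s : ℝ), s ≤ i → s ≤ g n s := by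
    intro n s hs
    refine le_min hs ?_
    rw [div_eq_inv_mul, ← inv_mul_le_iff₀ (by positivity), inv_inv, mul_comm]
    exact Int.le_ceil _
  have hg_le : ∀ n (s : ℝ), g n s ≤ s + (2^n)⁻¹ := by
    intro n s
    refine (min_le_right _ _).trans ?_
    rw [div_le_iff₀ (by positivity), add_mul, inv_mul_cancel₀ (by positivity : (2:ℝ)^n ≠ 0)]
    exact le_of_lt (Int.ceil_lt_add_one _)
  have h_meas : ∀ n : ℕ, StronglyMeasurable[M]
      fun p : Set.Iic i × Ω => V (g n (p.1 : ℝ)) p.2 := by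
    intro n
    have hproj1 : Measurable[M] fun p : Set.Iic i × Ω => (p.1 : ℝ) :=
      measurable_subtype_coe.comp (@measurable_fst _ _ Subtype.instMeasurableSpace (ℱ i))
    have hceil : Measurable[M] fun p : Set.Iic i × Ω => (⌈(p.1 : ℝ) * 2^n⌉ : ℤ) :=
      Int.measurable_ceil.comp (hproj1.mul_const _)
    have hslice : ∀ k : ℤ, Measurable[ℱ i] fun ω => V (min i ((k : ℝ) / 2^n)) ω :=
      fun k => ((hAd.stronglyAdapted _).mono (ℱ.mono (min_le_left _ _))).measurable
    have hmeas : Measurable[M] fun p : Set.Iic i × Ω => V (g n (p.1 : ℝ)) p.2 := by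
      intro B hB
      have hdecomp : (fun p : Set.Iic i × Ω => V (g n (p.1 : ℝ)) p.2) ⁻¹' B =
          ⋃ k : ℤ, ((fun p : Set.Iic i × Ω => (⌈(p.1 : ℝ) * 2^n⌉ : ℤ)) ⁻¹' {k}) ∩
            (Prod.snd ⁻¹' ((fun ω => V (min i ((k : ℝ) / 2^n)) ω) ⁻¹' B)) := by
        ext p
        simp only [Set.mem_preimage, Set.mem_iUnion, Set.mem_inter_iff, Set.mem_singleton_iff]
        constructor
        · intro hp
          exact ⟨⌈(p.1 : ℝ) * 2^n⌉, rfl, hp⟩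
        · rintro ⟨k, hk, hp⟩
          have : g n (p.1 : ℝ) = min i ((k : ℝ) / 2^n) := by rw [hg, ← hk]
          rwa [this]
      rw [hdecomp]
      refine MeasurableSet.iUnion fun k => MeasurableSet.inter ?_ ?_
      · exact hceil (measurableSet_singleton k)
      · exact (@measurable_snd _ _ Subtype.instMeasurableSpace (ℱ i)) (hslice k hB)
    exact hmeas.stronglyMeasurable
  refine stronglyMeasurable_of_tendsto (f := fun n (p : Set.Iic i × Ω) => V (g n (p.1 : ℝ)) p.2)
    (atTop : Filter ℕ) h_meas ?_
  rw [tendsto_pi_nhds]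
  intro p
  have hp : (p.1 : ℝ) ≤ i := p.1.2
  have htg : Tendsto (fun n : ℕ => g n (p.1 : ℝ)) atTop (nhds (p.1 : ℝ)) := by
    have h1 : Tendsto (fun n : ℕ => (p.1 : ℝ) + (2^n)⁻¹) atTop (nhds (p.1 : ℝ)) := by
      have h2 : Tendsto (fun n : ℕ => ((2:ℝ)^n)⁻¹) atTop (nhds 0) := by
        simp_rw [← inv_pow]
        exact tendsto_pow_atTop_nhds_zero_of_lt_one (by norm_num) (by norm_num)
      simpa using (tendsto_const_nhds (x := (p.1:ℝ)) (f := atTop (α := ℕ))).add h2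
    exact tendsto_of_tendsto_of_tendsto_of_le_of_le tendsto_const_nhds h1
      (fun n => hg_ge n _ hp) (fun n => hg_le n _)
  have := (hV.rightCont p.2 (p.1 : ℝ)).tendsto.comp
    (tendsto_nhdsWithin_iff.2 ⟨htg, Eventually.of_forall fun n => hg_ge n _ hp⟩)
  exact this

lemma isStoppingTime_real_le {S : Ω → ℝ} (hS : IsStoppingTime ℱ (fun ω => (S ω : WithTop ℝ)))
    (u : ℝ) : MeasurableSet[ℱ u] {ω | S ω ≤ u} := by
  have := hS u
  simpa only [WithTop.coe_le_coe] using this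

lemma measurableSet_stopping_of_inter {S : Ω → ℝ}
    (hS : IsStoppingTime ℱ (fun ω => (S ω : WithTop ℝ))) {s : Set Ω}
    (h : ∀ u : ℝ, MeasurableSet[ℱ u] (s ∩ {ω | S ω ≤ u})) :
    MeasurableSet[hS.measurableSpace] s := by
  refine ⟨?_, fun u => ?_⟩
  · have : s = ⋃ n : ℕ, s ∩ {ω | S ω ≤ n} := by
      ext ω
      simp only [Set.mem_iUnion, Set.mem_inter_iff, Set.mem_setOf_eq]
      constructor
      · intro hω
        obtain ⟨n, hn⟩ := exists_nat_ge (S ω)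
        exact ⟨n, hω, hn⟩
      · rintro ⟨_, h1, _⟩
        exact h1
    rw [this]
    exact MeasurableSet.iUnion fun n => le_iSup (fun t => ℱ t) (n:ℝ) _ (h n)
  · have := h u
    simpa only [WithTop.coe_le_coe] using this

/-- `ℱ 0 ≤ F_S` for a nonnegative stopping time. -/
lemma filtration_zero_le_stoppingTime {S : Ω → ℝ} (hS : IsStoppingTime ℱ (fun ω => (S ω : WithTop ℝ)))
    (hS0 : ∀ ω, 0 ≤ S ω) : ℱ 0 ≤ hS.measurableSpace :=
  hS.le_measurableSpace_of_const_le (i := 0) fun ω => WithTop.coe_le_coe.2 (hS0 ω)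

lemma measurableSet_le_zero {S : Ω → ℝ} (hS : IsStoppingTime ℱ (fun ω => (S ω : WithTop ℝ))) :
    MeasurableSet[hS.measurableSpace] {ω | S ω ≤ 0} := by
  have := hS.measurableSet_le' 0
  simp only [WithTop.coe_le_coe] at this
  exact this

/-- The left limit of `V` at a nonnegative stopping time is `F_S`-strongly measurable. -/
lemma stronglyMeasurable_llim_stopped (hProg : ProgMeasurable ℱ V) (hV : IsRCLL V)
    {S : Ω → ℝ} (hS : IsStoppingTime ℱ (fun ω => (S ω : WithTop ℝ))) (hS0 : ∀ ω, 0 ≤ S ω) :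
    StronglyMeasurable[hS.measurableSpace] fun ω => llim V (S ω) ω := by
  have hV0 : Measurable[hS.measurableSpace] (V 0) :=
    ((IsStronglyProgressive.stronglyAdapted hProg 0).mono (filtration_zero_le_stoppingTime hS hS0)).measurable
  set h : ℕ → Ω → ℝ := fun n ω =>
    if S ω ≤ 0 then V 0 ω else V (S ω - 1/(n+1)) ω with hh
  have hmeas : ∀ n, Measurable[hS.measurableSpace] (h n) := by
    intro n
    set ε : ℝ := 1/(n+1) with hε
    have hε0 : 0 < ε := by positivity
    have hVS : Measurable[hS.measurableSpace] fun ω => V (S ω - ε) ω := by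
      intro B hB
      refine measurableSet_stopping_of_inter hS fun u => ?_
      -- the auxiliary ℱ u-measurable version
      have hY : StronglyMeasurable[ℱ u] fun ω => V (min (S ω - ε) (u - ε)) ω := by
        have hη : Measurable[ℱ u] fun ω => min (S ω - ε) (u - ε) := by
          refine measurable_of_Iic fun a => ?_
          rcases le_or_gt (u - ε) a with ha | ha
          · have : (fun ω => min (S ω - ε) (u - ε)) ⁻¹' Set.Iic a = Set.univ := by
              ext ω; simp only [Set.mem_preimage, Set.mem_Iic, Set.mem_univ, iff_true]
              exact (min_le_right _ _).trans ha
            rw [this]; exact MeasurableSet.univ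
          · have : (fun ω => min (S ω - ε) (u - ε)) ⁻¹' Set.Iic a = {ω | S ω ≤ a + ε} := by
              ext ω
              simp only [Set.mem_preimage, Set.mem_Iic, Set.mem_setOf_eq, min_le_iff]
              constructor
              · rintro (h1 | h1)
                · linarith
                · linarith
              · intro h1; left; linarith
            rw [this]
            exact (ℱ.mono (by linarith : a + ε ≤ u)) _ (isStoppingTime_real_le hS (a + ε))
        have hmem : ∀ ω, min (S ω - ε) (u - ε) ∈ Set.Iic u :=
          fun ω => le_trans (min_le_right _ _) (by linarith : u - ε ≤ u)
        exact (hProg u).comp_measurable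
          ((Measurable.subtype_mk (p := fun x => x ∈ Set.Iic u) hη (h := hmem)).prodMk
            measurable_id)
      have heq : (fun ω => V (S ω - ε) ω) ⁻¹' B ∩ {ω | S ω ≤ u} =
          (fun ω => V (min (S ω - ε) (u - ε)) ω) ⁻¹' B ∩ {ω | S ω ≤ u} := by
        ext ω
        simp only [Set.mem_inter_iff, Set.mem_preimage, Set.mem_setOf_eq]
        constructor
        · rintro ⟨h1, h2⟩
          rw [min_eq_left (by linarith : S ω - ε ≤ u - ε)]
          exact ⟨h1, h2⟩
        · rintro ⟨h1, h2⟩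
          rw [min_eq_left (by linarith : S ω - ε ≤ u - ε)] at h1
          exact ⟨h1, h2⟩
      rw [heq]
      exact (hY.measurable hB).inter (isStoppingTime_real_le hS u)
    exact Measurable.ite (measurableSet_le_zero hS) hV0 hVS
  have htend : ∀ ω, Tendsto (fun n => h n ω) atTop (nhds (llim V (S ω) ω)) := by
    intro ω
    rcases le_or_gt (S ω) 0 with hSω | hSω
    · have : ∀ n, h n ω = V 0 ω := fun n => if_pos hSω
      simp_rw [this, llim, if_pos hSω]
      exact tendsto_const_nhds
    · obtain ⟨l, hl⟩ := hV.leftLimExists ω (S ω) hSω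
      have hlim : llim V (S ω) ω = l := by
        rw [llim, if_neg (not_le.2 hSω)]; exact hl.limUnder_eq
      rw [hlim]
      have h1 : ∀ n, h n ω = V (S ω - 1/(n+1)) ω := fun n => if_neg (not_le.2 hSω)
      simp_rw [h1]
      refine hl.comp (tendsto_nhdsWithin_iff.2 ⟨?_, Eventually.of_forall fun n => ?_⟩)
      · have h2 : Tendsto (fun n : ℕ => 1/((n:ℝ)+1)) atTop (nhds 0) :=
          tendsto_one_div_add_atTop_nhds_zero_nat
        simpa using (tendsto_const_nhds (x := S ω) (f := atTop (α := ℕ))).sub h2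
      · simp only [Set.mem_Iio, sub_lt_self_iff]
        positivity
  exact stronglyMeasurable_of_tendsto atTop
    (fun n => (hmeas n).stronglyMeasurable) (tendsto_pi_nhds.2 htend)

end Measurability

section Kernel

variable {Ω : Type*} {m' : MeasurableSpace Ω} {mΩ : MeasurableSpace Ω} [StandardBorelSpace Ω]
  {μ : Measure Ω} [IsProbabilityMeasure μ]

lemma condexpKernel_bind (hm : m' ≤ mΩ) :
    μ.bind (fun ω => condExpKernel μ m' ω) = μ := by
  have hκ : Measurable fun ω => condExpKernel μ m' ω :=
    Measure.measurable_of_measurable_coe _ fun s hs =>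
      (measurable_condExpKernel hs).mono hm le_rfl
  ext s hs
  rw [Measure.bind_apply hs hκ.aemeasurable]
  haveI : SigmaFinite (μ.trim hm) := by
    have : IsFiniteMeasure (μ.trim hm) := isFiniteMeasure_trim hm
    infer_instance
  have h1 : ∀ ω, condExpKernel μ m' ω s = ENNReal.ofReal ((condExpKernel μ m' ω s).toReal) := by
    intro ω
    rw [ENNReal.ofReal_toReal (measure_ne_top _ _)]
  calc ∫⁻ ω, condExpKernel μ m' ω s ∂μ
      = ∫⁻ ω, ENNReal.ofReal ((condExpKernel μ m' ω s).toReal) ∂μ := by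
        exact lintegral_congr fun ω => h1 ω
    _ = ENNReal.ofReal (∫ ω, (condExpKernel μ m' ω s).toReal ∂μ) :=
        (ofReal_integral_eq_lintegral_ofReal (integrable_toReal_condExpKernel hs)
          (Eventually.of_forall fun ω => ENNReal.toReal_nonneg)).symm
    _ = ENNReal.ofReal (∫ ω, (μ⟦s|m'⟧) ω ∂μ) := by
        exact congrArg ENNReal.ofReal (integral_congr_ae (condExpKernel_ae_eq_condExp hm hs))
    _ = ENNReal.ofReal (∫ ω, s.indicator (fun _ => (1:ℝ)) ω ∂μ) := by
        rw [integral_condExp hm]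
    _ = μ s := by
        have h2 : ∫ ω, s.indicator (fun _ => (1:ℝ)) ω ∂μ = (μ s).toReal := by
          rw [integral_indicator_const (1:ℝ) hs]; simp; rfl
        rw [h2, ENNReal.ofReal_toReal (measure_ne_top _ _)]

lemma lintegral_condE (hm : m' ≤ mΩ) {f : Ω → ℝ≥0∞} (hf : Measurable f) :
    ∫⁻ ω, ∫⁻ y, f y ∂(condExpKernel μ m' ω) ∂μ = ∫⁻ y, f y ∂μ := by
  have hκ : Measurable fun ω => condExpKernel μ m' ω :=
    Measure.measurable_of_measurable_coe _ fun s hs =>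
      (measurable_condExpKernel hs).mono hm le_rfl
  rw [← Measure.lintegral_bind hκ.aemeasurable hf.aemeasurable, condexpKernel_bind hm]

lemma integrable_of_condE_bound (hm : m' ≤ mΩ) {f : Ω → ℝ} (hf : Measurable f)
    (h0 : ∀ ω, 0 ≤ f ω) {C : ℝ≥0∞} (hC : C ≠ ⊤)
    (hb : essSup (condE μ m' f) μ ≤ C) : Integrable f μ := by
  refine ⟨hf.stronglyMeasurable.aestronglyMeasurable, ?_⟩
  rw [hasFiniteIntegral_iff_ofReal (Eventually.of_forall h0)]
  calc ∫⁻ ω, ENNReal.ofReal (f ω) ∂μ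
      = ∫⁻ ω, condE μ m' f ω ∂μ := (lintegral_condE hm hf.ennreal_ofReal).symm
    _ ≤ ∫⁻ _, C ∂μ := lintegral_mono_ae ((ae_le_essSup).mono fun ω h => h.trans hb)
    _ = C := by simp
    _ < ⊤ := hC.lt_top

lemma condexp_ae_le_of_condE_bound (hm : m' ≤ mΩ) {f : Ω → ℝ} (hf_int : Integrable f μ)
    (h0 : ∀ ω, 0 ≤ f ω) {c : ℝ} (hc : 0 ≤ c)
    (hb : essSup (condE μ m' f) μ ≤ ENNReal.ofReal c) :
    μ[f|m'] ≤ᵐ[μ] fun _ => c := by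
  filter_upwards [condExp_ae_eq_integral_condExpKernel hm hf_int,
    hf_int.condExpKernel_ae (m := m'), ae_le_essSup (f := condE μ m' f)] with ω h1 h2 h3
  rw [h1]
  have h4 : ENNReal.ofReal (∫ y, f y ∂(condExpKernel μ m' ω)) = condE μ m' f ω :=
    ofReal_integral_eq_lintegral_ofReal h2 (Eventually.of_forall h0)
  have h5 : ENNReal.ofReal (∫ y, f y ∂(condExpKernel μ m' ω)) ≤ ENNReal.ofReal c := by
    rw [h4]; exact h3.trans hb
  exact (ENNReal.ofReal_le_ofReal_iff hc).1 h5

lemma condE_ae_le_of_monotone_approx (hm : m' ≤ mΩ) {g : Ω → ℝ} {G : ℕ → Ω → ℝ}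
    (hGmeas : ∀ n, Measurable (G n)) (hG0 : ∀ n ω, 0 ≤ G n ω)
    (hGb : ∀ n, ∃ b : ℝ, ∀ ω, G n ω ≤ b)
    (hmono : ∀ ω, Monotone fun n => G n ω)
    (hdom : ∀ ω, ENNReal.ofReal (g ω) ≤ ⨆ n, ENNReal.ofReal (G n ω))
    {c : ℝ} (hbound : ∀ n, μ[G n|m'] ≤ᵐ[μ] fun _ => c) :
    ∀ᵐ ω ∂μ, condE μ m' g ω ≤ ENNReal.ofReal c := by
  have hint : ∀ n, Integrable (G n) μ := by
    intro n
    obtain ⟨b, hbn⟩ := hGb n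
    have hb' : ∀ ω, ‖G n ω‖ ≤ b := fun ω => by
      rw [Real.norm_eq_abs, abs_of_nonneg (hG0 n ω)]; exact hbn ω
    exact Integrable.mono' (integrable_const b) (hGmeas n).aestronglyMeasurable
      (Eventually.of_forall hb')
  have h1 : ∀ n, μ[G n|m'] =ᵐ[μ] fun ω => ∫ y, G n y ∂(condExpKernel μ m' ω) :=
    fun n => condExp_ae_eq_integral_condExpKernel hm (hint n)
  have hmain : ∀ᵐ ω ∂μ, ∀ n, (∫ y, G n y ∂(condExpKernel μ m' ω)) ≤ c := by
    rw [ae_all_iff]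
    intro n
    filter_upwards [(h1 n).symm, hbound n] with ω ha hb'
    rw [ha]; exact hb'
  filter_upwards [hmain] with ω hω
  have hGint : ∀ n, Integrable (G n) (condExpKernel μ m' ω) := by
    intro n
    obtain ⟨b, hbn⟩ := hGb n
    have hb' : ∀ y, ‖G n y‖ ≤ b := fun y => by
      rw [Real.norm_eq_abs, abs_of_nonneg (hG0 n y)]; exact hbn y
    exact Integrable.mono' (integrable_const b) (hGmeas n).aestronglyMeasurable
      (Eventually.of_forall hb')
  calc condE μ m' g ω ≤ ∫⁻ y, ⨆ n, ENNReal.ofReal (G n y) ∂(condExpKernel μ m' ω) :=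
        lintegral_mono fun y => hdom y
    _ = ⨆ n, ∫⁻ y, ENNReal.ofReal (G n y) ∂(condExpKernel μ m' ω) :=
        lintegral_iSup (fun n => (hGmeas n).ennreal_ofReal)
          (fun n m hnm y => ENNReal.ofReal_le_ofReal (hmono y hnm))
    _ ≤ ENNReal.ofReal c := by
        refine iSup_le fun n => ?_
        rw [← ofReal_integral_eq_lintegral_ofReal (hGint n)
          (Eventually.of_forall (hG0 n))]
        exact ENNReal.ofReal_le_ofReal (hω n)

end Kernel



section Helpers

variable {Ω : Type*}

/-- enumeration of the rationals -/
def ratF (n : ℕ) : Finset ℚ := (Finset.range n).image fun k => Denumerable.ofNat ℚ k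

lemma ratF_mono {n m : ℕ} (h : n ≤ m) : ratF n ⊆ ratF m :=
  Finset.image_subset_image (Finset.range_subset_range.2 h)

lemma exists_mem_ratF (q : ℚ) : ∃ n : ℕ, ∀ m : ℕ, n ≤ m → q ∈ ratF m := by
  refine ⟨@Encodable.encode ℚ Denumerable.toEncodable q + 1, fun m hm => ?_⟩
  exact Finset.mem_image.2 ⟨_, Finset.mem_range.2 (by omega), Denumerable.ofNat_encode q⟩

lemma coe_finset_sup_le {F : Finset ℚ} {f : ℚ → ℝ≥0} {c : ℝ} (hc : 0 ≤ c)
    (h : ∀ q ∈ F, (f q : ℝ) ≤ c) : ((F.sup f : ℝ≥0) : ℝ) ≤ c := by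
  have h1 : F.sup f ≤ c.toNNReal :=
    Finset.sup_le fun q hq => (Real.le_toNNReal_iff_coe_le hc).2 (h q hq)
  calc ((F.sup f : ℝ≥0) : ℝ) ≤ (c.toNNReal : ℝ) := NNReal.coe_le_coe.2 h1
    _ = c := Real.coe_toNNReal c hc

lemma le_coe_finset_sup {F : Finset ℚ} {f : ℚ → ℝ≥0} {q : ℚ} (hq : q ∈ F) :
    (f q : ℝ) ≤ ((F.sup f : ℝ≥0) : ℝ) := NNReal.coe_le_coe.2 (Finset.le_sup hq)

lemma measurable_finset_sup {m : MeasurableSpace Ω} (F : Finset ℚ) {f : ℚ → Ω → ℝ≥0}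
    (hf : ∀ q, Measurable[m] (f q)) :
    Measurable[m] fun ω => F.sup fun q => f q ω := by
  classical
  induction F using Finset.induction_on with
  | empty => simp only [Finset.sup_empty]; exact measurable_const
  | insert _ _ ha ih =>
    simp only [Finset.sup_insert]
    exact (hf _).sup ih

lemma isStoppingTime_finset_inf' {mΩ : MeasurableSpace Ω} {ℱ : Filtration ℝ mΩ}
    {ι : Type*} {G : Finset ι} (hG : G.Nonempty) {f : ι → Ω → ℝ}
    (hf : ∀ i ∈ G, IsStoppingTime ℱ (fun ω => (f i ω : WithTop ℝ))) :
    IsStoppingTime ℱ fun ω => ((G.inf' hG fun i => f i ω : ℝ) : WithTop ℝ) := by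
  classical
  induction hG using Finset.Nonempty.cons_induction with
  | singleton a =>
    simp only [Finset.inf'_singleton]
    exact hf a (Finset.mem_singleton_self a)
  | cons a s h hs ih =>
    have h1 : (fun ω => (((Finset.cons a s h).inf' (Finset.cons_nonempty h) fun i => f i ω : ℝ)
        : WithTop ℝ)) = fun ω => min (f a ω : WithTop ℝ) ((s.inf' hs fun i => f i ω : ℝ) : WithTop ℝ) := by
      funext ω
      rw [Finset.inf'_cons hs (fun i => f i ω)]
      exact WithTop.coe_min _ _
    rw [h1]
    exact (hf a (Finset.mem_cons_self a s)).min
      (ih fun i hi => hf i (Finset.mem_cons_of_mem hi))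

end Helpers


section MxMeasurable

variable {Ω : Type*} {mΩ : MeasurableSpace Ω} {ℱ : Filtration ℝ mΩ} {V : ℝ → Ω → ℝ}

lemma mx_rat_le (hRC : IsRCLL V) (ω : Ω) {u : ℝ} (hu : 0 ≤ u) {L : ℝ}
    (hL : ∀ q : ℚ, |V (min (max (q:ℝ) 0) u) ω - V 0 ω| ≤ L) : mx V u ω ≤ L := by
  have h0 : llim V 0 ω = V 0 ω := by rw [llim, if_pos le_rfl]
  have h1 := mx_increment_le hRC ω le_rfl hu (L := L) (by
    intro q; rw [h0]; exact hL q)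
  have h2 : llim (mx V) 0 ω = 0 := by rw [llim, if_pos le_rfl, mx_zero hRC]
  rw [h2] at h1; linarith

lemma adapted_mx (hAd : Adapted ℱ V) (hRC : IsRCLL V) : Adapted ℱ (mx V) := by
  refine StronglyAdapted.adapted ?_
  intro u
  rcases lt_or_ge u 0 with hu | hu
  · have : mx V u = fun _ => (0:ℝ) := funext fun ω => mx_neg ω hu
    rw [this]; exact stronglyMeasurable_const
  · set g : ℚ → Ω → ℝ≥0 := fun q ω => ‖V (min (max (q:ℝ) 0) u) ω - V 0 ω‖₊ with hg
    have hgm : ∀ q, Measurable[ℱ u] fun ω => g q ω := by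
      intro q
      have h1 : StronglyMeasurable[ℱ u] (V (min (max (q:ℝ) 0) u)) :=
        hAd.stronglyAdapted.stronglyMeasurable_le (min_le_right _ _)
      have h2 : StronglyMeasurable[ℱ u] (V 0) := hAd.stronglyAdapted.stronglyMeasurable_le hu
      exact measurable_nnnorm.comp (h1.measurable.sub h2.measurable)
    set h : ℕ → Ω → ℝ := fun n ω => (((ratF n).sup fun q => g q ω : ℝ≥0) : ℝ) with hh
    have hhm : ∀ n, StronglyMeasurable[ℱ u] (h n) := fun n =>
      (measurable_coe_nnreal_real.comp (measurable_finset_sup _ hgm)).stronglyMeasurable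
    refine stronglyMeasurable_of_tendsto atTop hhm (tendsto_pi_nhds.2 fun ω => ?_)
    have hgle : ∀ q : ℚ, ((g q ω : ℝ)) ≤ mx V u ω := by
      intro q
      rw [hg]; simp only [coe_nnnorm, Real.norm_eq_abs]
      exact le_mx hRC ω ⟨le_min (le_max_right _ _) hu, min_le_right _ _⟩
    have hbd : ∀ n, h n ω ≤ mx V u ω :=
      fun n => coe_finset_sup_le (mx_nonneg hRC ω u) fun q _ => hgle q
    have hmono : Monotone fun n => h n ω := by
      intro n m hnm
      exact NNReal.coe_le_coe.2 (Finset.sup_mono (ratF_mono hnm))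
    have hbdd : BddAbove (Set.range fun n => h n ω) := by
      refine ⟨mx V u ω, ?_⟩; rintro x ⟨n, rfl⟩; exact hbd n
    have htend := tendsto_atTop_ciSup hmono hbdd
    have heq : (⨆ n, h n ω) = mx V u ω := by
      refine le_antisymm (ciSup_le hbd) ?_
      refine mx_rat_le hRC ω hu fun q => ?_
      obtain ⟨N, hN⟩ := exists_mem_ratF q
      have h1 : |V (min (max (q:ℝ) 0) u) ω - V 0 ω| = ((g q ω : ℝ)) := by
        rw [hg]; simp only [coe_nnnorm, Real.norm_eq_abs]
      rw [h1]
      exact le_trans (le_coe_finset_sup (f := fun q => g q ω) (hN N le_rfl)) (le_ciSup hbdd N)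
    rwa [heq] at htend

end MxMeasurable


section Grid

variable {Ω : Type*} {mΩ : MeasurableSpace Ω} {ℱ : Filtration ℝ mΩ} {V : ℝ → Ω → ℝ}

/-- clipped time `(q ∨ S) ∧ T`. -/
def clipT (S T : Ω → ℝ) (q : ℚ) : Ω → ℝ := fun ω => min (max (q:ℝ) (S ω)) (T ω)

/-- grid maximal function over a finite set of rationals. -/
def gridM (V : ℝ → Ω → ℝ) (F : Finset ℚ) (S T : Ω → ℝ) : Ω → ℝ :=
  fun ω => ((F.sup fun q => ‖V (clipT S T q ω) ω - llim V (S ω) ω‖₊ : ℝ≥0) : ℝ)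

/-- truncated grid maximal function. -/
def gridMT (V : ℝ → Ω → ℝ) (F : Finset ℚ) (b : ℝ) (S T : Ω → ℝ) : Ω → ℝ :=
  fun ω => min (gridM V F S T ω) b

/-- the hitting-type stopping time of level `lam`. -/
def hitR (V : ℝ → Ω → ℝ) (F : Finset ℚ) (lam : ℝ) (S T : Ω → ℝ) : Ω → ℝ :=
  fun ω => (insert (none : Option ℚ) (F.image some)).inf'
    (Finset.insert_nonempty _ _)
    (fun o => o.elim (T ω)
      (fun q => if lam ≤ |V (clipT S T q ω) ω - llim V (S ω) ω| then clipT S T q ω else T ω))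

variable {S T : Ω → ℝ}

lemma le_clipT (hST : ∀ ω, S ω ≤ T ω) (q : ℚ) (ω : Ω) : S ω ≤ clipT S T q ω :=
  le_min (le_max_right _ _) (hST ω)

lemma clipT_le (q : ℚ) (ω : Ω) : clipT S T q ω ≤ T ω := min_le_right _ _

lemma clipT_isStoppingTime (hS : IsStoppingTime ℱ (fun ω => (S ω : WithTop ℝ))) (hT : IsStoppingTime ℱ (fun ω => (T ω : WithTop ℝ))) (q : ℚ) :
    IsStoppingTime ℱ (fun ω => (clipT S T q ω : WithTop ℝ)) :=
  by
    have h := ((isStoppingTime_const ℱ (q:ℝ)).max hS).min hT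
    simpa only [clipT, WithTop.coe_min, WithTop.coe_max] using h

lemma gridM_nonneg (F : Finset ℚ) (ω : Ω) : 0 ≤ gridM V F S T ω := NNReal.coe_nonneg _

lemma gridMT_nonneg (F : Finset ℚ) {b : ℝ} (hb : 0 ≤ b) (ω : Ω) : 0 ≤ gridMT V F b S T ω :=
  le_min (gridM_nonneg F ω) hb

lemma gridMT_le (F : Finset ℚ) (b : ℝ) (ω : Ω) : gridMT V F b S T ω ≤ b := min_le_right _ _

lemma le_gridM {F : Finset ℚ} {q : ℚ} (hq : q ∈ F) (ω : Ω) :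
    |V (clipT S T q ω) ω - llim V (S ω) ω| ≤ gridM V F S T ω := by
  have := le_coe_finset_sup (f := fun q => ‖V (clipT S T q ω) ω - llim V (S ω) ω‖₊) hq
  simpa only [gridM, coe_nnnorm, Real.norm_eq_abs] using this

lemma gridM_le {F : Finset ℚ} {c : ℝ} (hc : 0 ≤ c) (ω : Ω)
    (h : ∀ q ∈ F, |V (clipT S T q ω) ω - llim V (S ω) ω| ≤ c) : gridM V F S T ω ≤ c := by
  refine coe_finset_sup_le hc fun q hq => ?_
  simpa only [coe_nnnorm, Real.norm_eq_abs] using h q hq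

lemma le_hitR (hST : ∀ ω, S ω ≤ T ω) (F : Finset ℚ) (lam : ℝ) (ω : Ω) :
    S ω ≤ hitR V F lam S T ω := by
  refine Finset.le_inf' _ _ fun o ho => ?_
  rcases o with _ | q
  · exact hST ω
  · by_cases h : lam ≤ |V (clipT S T q ω) ω - llim V (S ω) ω|
    · simp only [Option.elim, if_pos h]; exact le_clipT hST q ω
    · simp only [Option.elim, if_neg h]; exact hST ω

lemma hitR_le (F : Finset ℚ) (lam : ℝ) (ω : Ω) : hitR V F lam S T ω ≤ T ω := by
  refine le_trans (Finset.inf'_le _ (Finset.mem_insert_self _ _)) ?_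
  exact le_rfl

lemma hitR_le_clipT {F : Finset ℚ} {lam : ℝ} {q : ℚ} (hq : q ∈ F) (ω : Ω)
    (h : lam ≤ |V (clipT S T q ω) ω - llim V (S ω) ω|) :
    hitR V F lam S T ω ≤ clipT S T q ω := by
  refine le_trans (Finset.inf'_le _
    (Finset.mem_insert_of_mem (Finset.mem_image_of_mem some hq))) ?_
  simp only [Option.elim, if_pos h]
  exact le_rfl

/-- at the hitting time, the oscillation is at least `lam` (provided some grid point exceeds). -/
lemma hitR_ge_lam {F : Finset ℚ} {lam : ℝ} {q : ℚ} (hq : q ∈ F) (ω : Ω)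
    (h : lam ≤ |V (clipT S T q ω) ω - llim V (S ω) ω|) :
    lam ≤ |V (hitR V F lam S T ω) ω - llim V (S ω) ω| := by
  obtain ⟨o, homem, ho⟩ := Finset.exists_mem_eq_inf' (Finset.insert_nonempty _ _)
    (fun o : Option ℚ => o.elim (T ω)
      (fun q' => if lam ≤ |V (clipT S T q' ω) ω - llim V (S ω) ω| then clipT S T q' ω else T ω))
  have hR : hitR V F lam S T ω = o.elim (T ω)
      (fun q' => if lam ≤ |V (clipT S T q' ω) ω - llim V (S ω) ω| then clipT S T q' ω else T ω) :=
    ho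
  have hTcase : hitR V F lam S T ω = T ω → lam ≤ |V (hitR V F lam S T ω) ω - llim V (S ω) ω| := by
    intro hRT
    have h1 : clipT S T q ω = T ω :=
      le_antisymm (clipT_le q ω) (by rw [← hRT]; exact hitR_le_clipT hq ω h)
    rw [hRT, ← h1]; exact h
  rcases o with _ | q'
  · exact hTcase hR
  · by_cases h' : lam ≤ |V (clipT S T q' ω) ω - llim V (S ω) ω|
    · rw [hR]; simp only [Option.elim, if_pos h']; exact h'
    · refine hTcase ?_
      rw [hR]; simp only [Option.elim, if_neg h']

lemma hitR_isStoppingTime (hProg : ProgMeasurable ℱ V) (hRC : IsRCLL V)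
    (hS : IsStoppingTime ℱ (fun ω => (S ω : WithTop ℝ))) (hT : IsStoppingTime ℱ (fun ω => (T ω : WithTop ℝ)))
    (hS0 : ∀ ω, 0 ≤ S ω) (hST : ∀ ω, S ω ≤ T ω) (F : Finset ℚ) (lam : ℝ) :
    IsStoppingTime ℱ (fun ω => (hitR V F lam S T ω : WithTop ℝ)) := by
  refine isStoppingTime_finset_inf' _ fun o ho => ?_
  rcases o with _ | q
  · exact hT
  · -- Rq is a stopping time
    have hclip := clipT_isStoppingTime hS hT q
    have hC : MeasurableSet[hclip.measurableSpace]
        {ω | lam ≤ |V (clipT S T q ω) ω - llim V (S ω) ω|} := by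
      have h1 : Measurable[hclip.measurableSpace] fun ω => V (clipT S T q ω) ω :=
        measurable_stoppedValue hProg hclip
      have h2 : Measurable[hclip.measurableSpace] fun ω => llim V (S ω) ω :=
        ((stronglyMeasurable_llim_stopped hProg hRC hS hS0).mono
          (hS.measurableSpace_mono hclip fun ω => WithTop.coe_le_coe.2 (le_clipT hST q ω))).measurable
      exact (continuous_abs.measurable.comp (h1.sub h2)) measurableSet_Ici
    intro u
    simp only [WithTop.coe_le_coe]
    have hCu : MeasurableSet[ℱ u]
        ({ω | lam ≤ |V (clipT S T q ω) ω - llim V (S ω) ω|} ∩ {ω | clipT S T q ω ≤ u}) := by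
      have := hC.2 u
      simpa only [WithTop.coe_le_coe] using this
    have hCcu : MeasurableSet[ℱ u]
        ({ω | lam ≤ |V (clipT S T q ω) ω - llim V (S ω) ω|}ᶜ ∩ {ω | clipT S T q ω ≤ u}) := by
      have := hC.compl.2 u
      simpa only [WithTop.coe_le_coe] using this
    have hdecomp : {ω | (Option.some q).elim (T ω)
          (fun q' => if lam ≤ |V (clipT S T q' ω) ω - llim V (S ω) ω| then clipT S T q' ω
            else T ω) ≤ u}
        = ({ω | lam ≤ |V (clipT S T q ω) ω - llim V (S ω) ω|} ∩ {ω | clipT S T q ω ≤ u})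
          ∪ (({ω | lam ≤ |V (clipT S T q ω) ω - llim V (S ω) ω|}ᶜ ∩ {ω | clipT S T q ω ≤ u})
            ∩ {ω | T ω ≤ u}) := by
      ext ω
      by_cases h : lam ≤ |V (clipT S T q ω) ω - llim V (S ω) ω|
      · simp only [Option.elim, if_pos h, Set.mem_setOf_eq, Set.mem_union, Set.mem_inter_iff,
          Set.mem_compl_iff, Set.mem_setOf_eq]
        constructor
        · intro h1; exact Or.inl ⟨h, h1⟩
        · rintro (⟨_, h1⟩ | ⟨⟨h1, _⟩, _⟩)
          · exact h1
          · exact absurd h h1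
      · simp only [Option.elim, if_neg h, Set.mem_setOf_eq, Set.mem_union, Set.mem_inter_iff,
          Set.mem_compl_iff, Set.mem_setOf_eq]
        constructor
        · intro h1
          exact Or.inr ⟨⟨h, le_trans (clipT_le q ω) h1⟩, h1⟩
        · rintro (⟨h1, _⟩ | ⟨_, h1⟩)
          · exact absurd h1 h
          · exact h1
    rw [hdecomp]
    exact (hCu.union (hCcu.inter (isStoppingTime_real_le hT u)))

end Grid


section GridMaster

variable {Ω : Type*} {mΩ : MeasurableSpace Ω} {ℱ : Filtration ℝ mΩ} {V : ℝ → Ω → ℝ}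
variable {S T : Ω → ℝ}

lemma min_add_trunc {x y d b : ℝ} (h : x ≤ y + d) (hd : 0 ≤ d) :
    min x b ≤ min y b + d := by
  rcases le_total y b with h1 | h1
  · rw [min_eq_left h1]
    exact le_trans (min_le_left _ _) h
  · rw [min_eq_right h1]
    exact le_trans (min_le_right _ _) (by linarith)

/-- the pathwise master inequality for the recursion. -/
lemma grid_master (hST : ∀ ω, S ω ≤ T ω) (F : Finset ℚ) {lam b : ℝ}
    (hlam : 0 < lam) (hb : 0 ≤ b) (ω : Ω) :
    gridMT V F b S T ω ≤ lam
      + (lam⁻¹ * |V (hitR V F lam S T ω) ω - llim V (S ω) ω|)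
        * gridMT V F b (hitR V F lam S T) T ω
      + |llim V (hitR V F lam S T ω) ω - llim V (S ω) ω| := by
  classical
  have hWnn : 0 ≤ lam⁻¹ * |V (hitR V F lam S T ω) ω - llim V (S ω) ω| := by positivity
  have hMTRnn : 0 ≤ gridMT V F b (hitR V F lam S T) T ω := gridMT_nonneg F hb ω
  have hDnn : 0 ≤ |llim V (hitR V F lam S T ω) ω - llim V (S ω) ω| := abs_nonneg _
  have hWMnn : 0 ≤ (lam⁻¹ * |V (hitR V F lam S T ω) ω - llim V (S ω) ω|)
      * gridMT V F b (hitR V F lam S T) T ω := mul_nonneg hWnn hMTRnn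
  rcases F.eq_empty_or_nonempty with rfl | hFne
  · have h0 : gridMT V (∅ : Finset ℚ) b S T ω = 0 := by
      rw [gridMT, gridM]
      simp only [Finset.sup_empty]
      rw [show ((⊥ : ℝ≥0) : ℝ) = 0 from rfl, min_eq_left hb]
    rw [h0]
    linarith
  · obtain ⟨qs, hqs, hsup⟩ := Finset.exists_mem_eq_sup F hFne
      (fun q => ‖V (clipT S T q ω) ω - llim V (S ω) ω‖₊)
    have hM : gridM V F S T ω = |V (clipT S T qs ω) ω - llim V (S ω) ω| := by
      rw [gridM, hsup]
      simp only [coe_nnnorm, Real.norm_eq_abs]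
    by_cases hc : lam ≤ |V (clipT S T qs ω) ω - llim V (S ω) ω|
    · -- hitting case
      have hW1 : 1 ≤ lam⁻¹ * |V (hitR V F lam S T ω) ω - llim V (S ω) ω| := by
        have h2 := hitR_ge_lam hqs ω hc
        have h3 := mul_le_mul_of_nonneg_left h2 (inv_nonneg.2 hlam.le)
        rwa [inv_mul_cancel₀ hlam.ne'] at h3
      have hRclip : hitR V F lam S T ω ≤ clipT S T qs ω := hitR_le_clipT hqs ω hc
      have hclip_eq : clipT S T qs ω = clipT (hitR V F lam S T) T qs ω :=
        clip_eq_of_le (le_hitR hST F lam ω) (hitR_le F lam ω) hRclip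
      have hbound : |V (clipT S T qs ω) ω - llim V (S ω) ω|
          ≤ gridM V F (hitR V F lam S T) T ω
            + |llim V (hitR V F lam S T ω) ω - llim V (S ω) ω| := by
        calc |V (clipT S T qs ω) ω - llim V (S ω) ω|
            ≤ |V (clipT S T qs ω) ω - llim V (hitR V F lam S T ω) ω|
              + |llim V (hitR V F lam S T ω) ω - llim V (S ω) ω| := abs_sub_le _ _ _
          _ ≤ gridM V F (hitR V F lam S T) T ω
              + |llim V (hitR V F lam S T ω) ω - llim V (S ω) ω| := by
              refine add_le_add ?_ le_rfl
              rw [hclip_eq]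
              exact le_gridM hqs ω
      have hmin : gridMT V F b S T ω ≤ gridMT V F b (hitR V F lam S T) T ω
          + |llim V (hitR V F lam S T ω) ω - llim V (S ω) ω| := by
        rw [gridMT, gridMT, hM]
        exact min_add_trunc hbound hDnn
      have hmul : gridMT V F b (hitR V F lam S T) T ω
          ≤ (lam⁻¹ * |V (hitR V F lam S T ω) ω - llim V (S ω) ω|)
            * gridMT V F b (hitR V F lam S T) T ω :=
        le_mul_of_one_le_left hMTRnn hW1
      linarith
    · -- below level
      have h1 : gridMT V F b S T ω ≤ lam := by
        rw [gridMT, hM]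
        exact le_trans (min_le_left _ _) (le_of_not_ge hc)
      linarith

lemma gridM_measurable (hProg : ProgMeasurable ℱ V) (hRC : IsRCLL V)
    (hS : IsStoppingTime ℱ (fun ω => (S ω : WithTop ℝ))) (hT : IsStoppingTime ℱ (fun ω => (T ω : WithTop ℝ))) (hS0 : ∀ ω, 0 ≤ S ω)
    (F : Finset ℚ) : Measurable (gridM V F S T) := by
  refine measurable_coe_nnreal_real.comp (measurable_finset_sup _ fun q => ?_)
  have hclip := clipT_isStoppingTime hS hT q
  have h1 : Measurable fun ω => V (clipT S T q ω) ω :=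
    (measurable_stoppedValue hProg hclip).mono hclip.measurableSpace_le le_rfl
  have h2 : Measurable fun ω => llim V (S ω) ω :=
    ((stronglyMeasurable_llim_stopped hProg hRC hS hS0).mono hS.measurableSpace_le).measurable
  exact measurable_nnnorm.comp (h1.sub h2)

lemma gridMT_measurable (hProg : ProgMeasurable ℱ V) (hRC : IsRCLL V)
    (hS : IsStoppingTime ℱ (fun ω => (S ω : WithTop ℝ))) (hT : IsStoppingTime ℱ (fun ω => (T ω : WithTop ℝ))) (hS0 : ∀ ω, 0 ≤ S ω)
    (F : Finset ℚ) (b : ℝ) : Measurable (gridMT V F b S T) :=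
  (gridM_measurable hProg hRC hS hT hS0 F).min measurable_const

end GridMaster


section Pairs

variable {Ω : Type*} {mΩ : MeasurableSpace Ω} [StandardBorelSpace Ω]
  {μ : Measure Ω} [IsProbabilityMeasure μ] {ℱ : Filtration ℝ mΩ} {V : ℝ → Ω → ℝ}

lemma pair_rho_le {s t : ℝ} {S' T' : Ω → ℝ} (hS' : IsStoppingTime ℱ (fun ω => (S' ω : WithTop ℝ)))
    (hT' : IsStoppingTime ℱ (fun ω => (T' ω : WithTop ℝ))) (h1 : ∀ ω, s ≤ S' ω) (h2 : ∀ ω, S' ω ≤ T' ω)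
    (h3 : ∀ ω, T' ω ≤ t) :
    essSup (condE μ hS'.measurableSpace fun y => |V (T' y) y - llim V (S' y) y|) μ
      ≤ bmoRho μ ℱ V s t :=
  le_iSup_of_le S' (le_iSup_of_le T' (le_iSup_of_le hS' (le_iSup_of_le hT'
    (le_iSup_of_le h1 (le_iSup_of_le h2 (le_iSup_of_le h3 le_rfl))))))

lemma pair_measurable (hProg : ProgMeasurable ℱ V) (hRC : IsRCLL V)
    {S' T' : Ω → ℝ} (hS' : IsStoppingTime ℱ (fun ω => (S' ω : WithTop ℝ))) (hT' : IsStoppingTime ℱ (fun ω => (T' ω : WithTop ℝ)))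
    (h0 : ∀ ω, 0 ≤ S' ω) :
    Measurable fun ω => |V (T' ω) ω - llim V (S' ω) ω| := by
  have ha : Measurable fun ω => V (T' ω) ω :=
    (measurable_stoppedValue hProg hT').mono hT'.measurableSpace_le le_rfl
  have hb : Measurable fun ω => llim V (S' ω) ω :=
    ((stronglyMeasurable_llim_stopped hProg hRC hS' h0).mono hS'.measurableSpace_le).measurable
  exact continuous_abs.measurable.comp (ha.sub hb)

lemma pair_integrable (hProg : ProgMeasurable ℱ V) (hRC : IsRCLL V)
    {s t : ℝ} (hs0 : 0 ≤ s) (hfin : bmoRho μ ℱ V s t ≠ ⊤)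
    {S' T' : Ω → ℝ} (hS' : IsStoppingTime ℱ (fun ω => (S' ω : WithTop ℝ))) (hT' : IsStoppingTime ℱ (fun ω => (T' ω : WithTop ℝ)))
    (h1 : ∀ ω, s ≤ S' ω) (h2 : ∀ ω, S' ω ≤ T' ω) (h3 : ∀ ω, T' ω ≤ t) :
    Integrable (fun ω => |V (T' ω) ω - llim V (S' ω) ω|) μ :=
  integrable_of_condE_bound hS'.measurableSpace_le
    (pair_measurable hProg hRC hS' hT' fun ω => hs0.trans (h1 ω))
    (fun ω => abs_nonneg _) hfin
    (pair_rho_le hS' hT' h1 h2 h3)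

lemma pair_condexp_le (hProg : ProgMeasurable ℱ V) (hRC : IsRCLL V)
    {s t : ℝ} (hs0 : 0 ≤ s) (hfin : bmoRho μ ℱ V s t ≠ ⊤)
    {ρR : ℝ} (hρpos : 0 < ρR) (hρle : bmoRho μ ℱ V s t ≤ ENNReal.ofReal ρR)
    {S' T' : Ω → ℝ} (hS' : IsStoppingTime ℱ (fun ω => (S' ω : WithTop ℝ))) (hT' : IsStoppingTime ℱ (fun ω => (T' ω : WithTop ℝ)))
    (h1 : ∀ ω, s ≤ S' ω) (h2 : ∀ ω, S' ω ≤ T' ω) (h3 : ∀ ω, T' ω ≤ t) :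
    μ[(fun ω => |V (T' ω) ω - llim V (S' ω) ω|)|hS'.measurableSpace] ≤ᵐ[μ] fun _ => ρR :=
  condexp_ae_le_of_condE_bound hS'.measurableSpace_le
    (pair_integrable hProg hRC hs0 hfin hS' hT' h1 h2 h3)
    (fun ω => abs_nonneg _) hρpos.le
    ((pair_rho_le hS' hT' h1 h2 h3).trans hρle)

/-- the key recursion: conditional expectations of truncated grid maximal functions are
uniformly bounded by `8 ρR`. -/
lemma grid_recursion (hAd : Adapted ℱ V) (hRC : IsRCLL V)
    {s t : ℝ} (hs0 : 0 ≤ s) (hfin : bmoRho μ ℱ V s t ≠ ⊤)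
    {T : Ω → ℝ} (hT : IsStoppingTime ℱ (fun ω => (T ω : WithTop ℝ))) (hsT : ∀ ω, s ≤ T ω) (hTt : ∀ ω, T ω ≤ t)
    {ρR : ℝ} (hρpos : 0 < ρR) (hρle : bmoRho μ ℱ V s t ≤ ENNReal.ofReal ρR)
    (F : Finset ℚ) {b : ℝ} (hb : 0 ≤ b) :
    ∀ (S : Ω → ℝ) (hS : IsStoppingTime ℱ (fun ω => (S ω : WithTop ℝ))), (∀ ω, s ≤ S ω) → (∀ ω, S ω ≤ T ω) →
      μ[gridMT V F b S T|hS.measurableSpace] ≤ᵐ[μ] fun _ => 8 * ρR := by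
  classical
  have hProg := progMeasurable_of_rcll hAd hRC
  set lam : ℝ := 2 * ρR with hlam
  have hlam0 : 0 < lam := by rw [hlam]; linarith
  -- integrability of the truncated grid maximal functions
  have hMT_int : ∀ (S' : Ω → ℝ), IsStoppingTime ℱ (fun ω => (S' ω : WithTop ℝ)) → (∀ ω, s ≤ S' ω) → (∀ ω, S' ω ≤ T ω) →
      Integrable (gridMT V F b S' T) μ := by
    intro S' hS' h1 h2
    refine Integrable.mono' (integrable_const b)
      ((gridMT_measurable hProg hRC hS' hT (fun ω => hs0.trans (h1 ω)) F b).aestronglyMeasurable)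
      (Eventually.of_forall fun ω => ?_)
    rw [Real.norm_eq_abs, abs_of_nonneg (gridMT_nonneg F hb ω)]
    exact gridMT_le F b ω
  -- the value of the supremum over admissible stopping times
  set cval : ℝ≥0∞ := ⨆ (S' : Ω → ℝ) (hS' : IsStoppingTime ℱ (fun ω => (S' ω : WithTop ℝ))) (_ : ∀ ω, s ≤ S' ω)
      (_ : ∀ ω, S' ω ≤ T ω),
      essSup (fun ω => ENNReal.ofReal ((μ[gridMT V F b S' T|hS'.measurableSpace]) ω)) μ
    with hcval
  have hcle : cval ≤ ENNReal.ofReal b := by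
    rw [hcval]
    refine iSup_le fun S' => iSup_le fun hS' => iSup_le fun h1 => iSup_le fun h2 => ?_
    refine essSup_le_of_ae_le _ ?_
    haveI : IsFiniteMeasure (μ.trim hS'.measurableSpace_le) := isFiniteMeasure_trim _
    have hm := condExp_mono (m := hS'.measurableSpace) (hMT_int S' hS' h1 h2)
      (integrable_const b) (Eventually.of_forall fun ω => gridMT_le F b ω)
    rw [condExp_const hS'.measurableSpace_le] at hm
    filter_upwards [hm] with ω hω
    exact ENNReal.ofReal_le_ofReal hω
  have hcne : cval ≠ ⊤ := (lt_of_le_of_lt hcle ENNReal.ofReal_lt_top).ne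
  set creal : ℝ := cval.toReal with hcreal
  have hcreal0 : 0 ≤ creal := ENNReal.toReal_nonneg
  have hcoe : cval = ENNReal.ofReal creal := by
    rw [hcreal, ENNReal.ofReal_toReal hcne]
  -- the key one-step estimate
  have key : ∀ (S' : Ω → ℝ) (hS' : IsStoppingTime ℱ (fun ω => (S' ω : WithTop ℝ))), (∀ ω, s ≤ S' ω) → (∀ ω, S' ω ≤ T ω) →
      μ[gridMT V F b S' T|hS'.measurableSpace] ≤ᵐ[μ] fun _ => 4 * ρR + creal / 2 := by
    intro S' hS' h1 h2
    have hS'0 : ∀ ω, 0 ≤ S' ω := fun ω => hs0.trans (h1 ω)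
    haveI : IsFiniteMeasure (μ.trim hS'.measurableSpace_le) := isFiniteMeasure_trim _
    have hRst : IsStoppingTime ℱ (fun ω => (hitR V F lam S' T ω : WithTop ℝ)) :=
      hitR_isStoppingTime hProg hRC hS' hT hS'0 h2 F lam
    haveI : IsFiniteMeasure (μ.trim hRst.measurableSpace_le) := isFiniteMeasure_trim _
    have hSR : ∀ ω, S' ω ≤ hitR V F lam S' T ω := le_hitR h2 F lam
    have hRT : ∀ ω, hitR V F lam S' T ω ≤ T ω := hitR_le F lam
    have hsR : ∀ ω, s ≤ hitR V F lam S' T ω := fun ω => (h1 ω).trans (hSR ω)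
    have hRt : ∀ ω, hitR V F lam S' T ω ≤ t := fun ω => (hRT ω).trans (hTt ω)
    have hR0 : ∀ ω, 0 ≤ hitR V F lam S' T ω := fun ω => hs0.trans (hsR ω)
    have hmle : hS'.measurableSpace ≤ hRst.measurableSpace :=
      hS'.measurableSpace_mono hRst fun ω => WithTop.coe_le_coe.2 (hSR ω)
    -- the pair functions
    have hg2_int : Integrable (fun ω => |V (hitR V F lam S' T ω) ω - llim V (S' ω) ω|) μ :=
      pair_integrable hProg hRC hs0 hfin hS' hRst h1 hSR hRt
    have hg1_int : Integrable
        (fun ω => |V (hitR V F lam S' T ω) ω - llim V (hitR V F lam S' T ω) ω|) μ :=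
      pair_integrable hProg hRC hs0 hfin hRst hRst hsR (fun _ => le_rfl) hRt
    have hg2_cexp : μ[(fun ω => |V (hitR V F lam S' T ω) ω - llim V (S' ω) ω|)|
        hS'.measurableSpace] ≤ᵐ[μ] fun _ => ρR :=
      pair_condexp_le hProg hRC hs0 hfin hρpos hρle hS' hRst h1 hSR hRt
    -- measurability of llim at S' and R
    have hllimS : Measurable fun ω => llim V (S' ω) ω :=
      ((stronglyMeasurable_llim_stopped hProg hRC hS' hS'0).mono
        hS'.measurableSpace_le).measurable
    have hllimR : Measurable fun ω => llim V (hitR V F lam S' T ω) ω :=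
      ((stronglyMeasurable_llim_stopped hProg hRC hRst hR0).mono
        hRst.measurableSpace_le).measurable
    have hVR : Measurable fun ω => V (hitR V F lam S' T ω) ω :=
      (measurable_stoppedValue hProg hRst).mono hRst.measurableSpace_le le_rfl
    -- D
    have hD_le : ∀ ω, |llim V (hitR V F lam S' T ω) ω - llim V (S' ω) ω|
        ≤ |V (hitR V F lam S' T ω) ω - llim V (hitR V F lam S' T ω) ω|
          + |V (hitR V F lam S' T ω) ω - llim V (S' ω) ω| := by
      intro ω
      calc |llim V (hitR V F lam S' T ω) ω - llim V (S' ω) ω|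
          ≤ |llim V (hitR V F lam S' T ω) ω - V (hitR V F lam S' T ω) ω|
            + |V (hitR V F lam S' T ω) ω - llim V (S' ω) ω| := abs_sub_le _ _ _
        _ = |V (hitR V F lam S' T ω) ω - llim V (hitR V F lam S' T ω) ω|
            + |V (hitR V F lam S' T ω) ω - llim V (S' ω) ω| := by rw [abs_sub_comm]
    have hD_meas : Measurable fun ω => |llim V (hitR V F lam S' T ω) ω - llim V (S' ω) ω| :=
      continuous_abs.measurable.comp (hllimR.sub hllimS)
    have hD_int : Integrable (fun ω => |llim V (hitR V F lam S' T ω) ω - llim V (S' ω) ω|) μ := by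
      refine Integrable.mono' (hg1_int.add hg2_int) hD_meas.aestronglyMeasurable
        (Eventually.of_forall fun ω => ?_)
      rw [Real.norm_eq_abs, abs_abs]
      exact hD_le ω
    have hD_cexp : μ[(fun ω => |llim V (hitR V F lam S' T ω) ω - llim V (S' ω) ω|)|
        hS'.measurableSpace] ≤ᵐ[μ] fun _ => 2 * ρR := by
      have hmono := condExp_mono (m := hS'.measurableSpace) hD_int (hg1_int.add hg2_int)
        (Eventually.of_forall hD_le)
      have hadd := condExp_add (μ := μ) (m := hS'.measurableSpace) hg1_int hg2_int
      have hg1_cexp : μ[(fun ω => |V (hitR V F lam S' T ω) ω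
          - llim V (hitR V F lam S' T ω) ω|)|hS'.measurableSpace] ≤ᵐ[μ] fun _ => ρR := by
        have h_tower := condExp_condExp_of_le hmle hRst.measurableSpace_le
          (f := fun ω => |V (hitR V F lam S' T ω) ω - llim V (hitR V F lam S' T ω) ω|) (μ := μ)
        have h_inner : μ[(fun ω => |V (hitR V F lam S' T ω) ω
            - llim V (hitR V F lam S' T ω) ω|)|hRst.measurableSpace] ≤ᵐ[μ] fun _ => ρR :=
          pair_condexp_le hProg hRC hs0 hfin hρpos hρle hRst hRst hsR (fun _ => le_rfl) hRt
        have h_outer := condExp_mono (m := hS'.measurableSpace) integrable_condExp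
          (integrable_const ρR) h_inner
        rw [condExp_const hS'.measurableSpace_le] at h_outer
        filter_upwards [h_tower, h_outer] with ω hω1 hω2
        rw [← hω1]
        exact hω2
      filter_upwards [hmono, hadd, hg1_cexp, hg2_cexp] with ω hω1 hω2 hω3 hω4
      calc (μ[(fun ω => |llim V (hitR V F lam S' T ω) ω - llim V (S' ω) ω|)|
            hS'.measurableSpace]) ω ≤ _ := hω1
        _ = (μ[(fun ω => |V (hitR V F lam S' T ω) ω - llim V (hitR V F lam S' T ω) ω|)|
              hS'.measurableSpace]) ω
            + (μ[(fun ω => |V (hitR V F lam S' T ω) ω - llim V (S' ω) ω|)|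
              hS'.measurableSpace]) ω := hω2
        _ ≤ ρR + ρR := add_le_add hω3 hω4
        _ = 2 * ρR := by ring
    -- W and the product term
    have hW_nonneg : ∀ ω, 0 ≤ lam⁻¹ * |V (hitR V F lam S' T ω) ω - llim V (S' ω) ω| :=
      fun ω => by positivity
    have hW_int : Integrable
        (fun ω => lam⁻¹ * |V (hitR V F lam S' T ω) ω - llim V (S' ω) ω|) μ :=
      hg2_int.const_mul _
    have hW_meas_R : StronglyMeasurable[hRst.measurableSpace]
        (fun ω => lam⁻¹ * |V (hitR V F lam S' T ω) ω - llim V (S' ω) ω|) := by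
      have hllimS_R : Measurable[hRst.measurableSpace] fun ω => llim V (S' ω) ω :=
        ((stronglyMeasurable_llim_stopped hProg hRC hS' hS'0).mono hmle).measurable
      have hVR_R : Measurable[hRst.measurableSpace] fun ω => V (hitR V F lam S' T ω) ω :=
        measurable_stoppedValue hProg hRst
      exact (measurable_const.mul
        (continuous_abs.measurable.comp (hVR_R.sub hllimS_R))).stronglyMeasurable
    have hWMT_meas : Measurable (fun ω =>
        (lam⁻¹ * |V (hitR V F lam S' T ω) ω - llim V (S' ω) ω|)
          * gridMT V F b (hitR V F lam S' T) T ω) := by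
      have h1' : Measurable (fun ω => lam⁻¹ * |V (hitR V F lam S' T ω) ω - llim V (S' ω) ω|) :=
        measurable_const.mul (continuous_abs.measurable.comp (hVR.sub hllimS))
      exact h1'.mul (gridMT_measurable hProg hRC hRst hT hR0 F b)
    have hWMT_int : Integrable (fun ω =>
        (lam⁻¹ * |V (hitR V F lam S' T ω) ω - llim V (S' ω) ω|)
          * gridMT V F b (hitR V F lam S' T) T ω) μ := by
      refine Integrable.mono' ((hg2_int.const_mul (lam⁻¹ * b)))
        hWMT_meas.aestronglyMeasurable (Eventually.of_forall fun ω => ?_)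
      rw [Real.norm_eq_abs, abs_of_nonneg (mul_nonneg (hW_nonneg ω) (gridMT_nonneg F hb ω))]
      calc (lam⁻¹ * |V (hitR V F lam S' T ω) ω - llim V (S' ω) ω|)
            * gridMT V F b (hitR V F lam S' T) T ω
          ≤ (lam⁻¹ * |V (hitR V F lam S' T ω) ω - llim V (S' ω) ω|) * b :=
            mul_le_mul_of_nonneg_left (gridMT_le F b ω) (hW_nonneg ω)
        _ = lam⁻¹ * b * |V (hitR V F lam S' T ω) ω - llim V (S' ω) ω| := by ring
    -- bound the conditional expectation of the product term
    have hMTR_cexp_le : ∀ᵐ ω ∂μ,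
        (μ[gridMT V F b (hitR V F lam S' T) T|hRst.measurableSpace]) ω ≤ creal := by
      have h_ess : essSup (fun ω => ENNReal.ofReal
          ((μ[gridMT V F b (hitR V F lam S' T) T|hRst.measurableSpace]) ω)) μ ≤ cval := by
        rw [hcval]
        exact le_iSup_of_le (hitR V F lam S' T) (le_iSup_of_le hRst
          (le_iSup_of_le hsR (le_iSup_of_le hRT le_rfl)))
      filter_upwards [ae_le_essSup (f := fun ω => ENNReal.ofReal
        ((μ[gridMT V F b (hitR V F lam S' T) T|hRst.measurableSpace]) ω))] with ω hω
      have h3 := hω.trans (h_ess.trans_eq hcoe)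
      rcases le_or_gt ((μ[gridMT V F b (hitR V F lam S' T) T|hRst.measurableSpace]) ω) 0
        with h4 | h4
      · exact h4.trans hcreal0
      · exact (ENNReal.ofReal_le_ofReal_iff hcreal0).1 h3
    have hWMT_cexp : μ[(fun ω =>
        (lam⁻¹ * |V (hitR V F lam S' T ω) ω - llim V (S' ω) ω|)
          * gridMT V F b (hitR V F lam S' T) T ω)|hS'.measurableSpace]
        ≤ᵐ[μ] fun _ => creal / 2 := by
      have h_tower := condExp_condExp_of_le hmle hRst.measurableSpace_le
        (f := fun ω => (lam⁻¹ * |V (hitR V F lam S' T ω) ω - llim V (S' ω) ω|)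
          * gridMT V F b (hitR V F lam S' T) T ω) (μ := μ)
      have h_pull := condExp_mul_of_stronglyMeasurable_left (μ := μ) hW_meas_R
        hWMT_int (hMT_int _ hRst hsR hRT)
      -- inner bound
      have h_inner : μ[(fun ω =>
          (lam⁻¹ * |V (hitR V F lam S' T ω) ω - llim V (S' ω) ω|)
            * gridMT V F b (hitR V F lam S' T) T ω)|hRst.measurableSpace]
          ≤ᵐ[μ] fun ω => creal * (lam⁻¹ * |V (hitR V F lam S' T ω) ω - llim V (S' ω) ω|) := by
        filter_upwards [h_pull, hMTR_cexp_le] with ω hω1 hω2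
        have : (fun ω => lam⁻¹ * |V (hitR V F lam S' T ω) ω - llim V (S' ω) ω|) ω
            * (μ[gridMT V F b (hitR V F lam S' T) T|hRst.measurableSpace]) ω
            ≤ (lam⁻¹ * |V (hitR V F lam S' T ω) ω - llim V (S' ω) ω|) * creal :=
          mul_le_mul_of_nonneg_left hω2 (hW_nonneg ω)
        calc (μ[(fun ω => (lam⁻¹ * |V (hitR V F lam S' T ω) ω - llim V (S' ω) ω|)
              * gridMT V F b (hitR V F lam S' T) T ω)|hRst.measurableSpace]) ω
            = _ := hω1
          _ ≤ (lam⁻¹ * |V (hitR V F lam S' T ω) ω - llim V (S' ω) ω|) * creal := this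
          _ = creal * (lam⁻¹ * |V (hitR V F lam S' T ω) ω - llim V (S' ω) ω|) := mul_comm _ _
      have h_outer := condExp_mono (m := hS'.measurableSpace) integrable_condExp
        (hW_int.const_mul creal) h_inner
      have h_smul := condExp_smul (μ := μ) (m := hS'.measurableSpace) creal
        (fun ω => lam⁻¹ * |V (hitR V F lam S' T ω) ω - llim V (S' ω) ω|)
      have h_W : μ[(fun ω => lam⁻¹ * |V (hitR V F lam S' T ω) ω - llim V (S' ω) ω|)|
          hS'.measurableSpace] ≤ᵐ[μ] fun _ => lam⁻¹ * ρR := by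
        have h_smul2 := condExp_smul (μ := μ) (m := hS'.measurableSpace) (lam⁻¹)
          (fun ω => |V (hitR V F lam S' T ω) ω - llim V (S' ω) ω|)
        filter_upwards [h_smul2, hg2_cexp] with ω hω1 hω2
        have h5 : (fun ω => lam⁻¹ * |V (hitR V F lam S' T ω) ω - llim V (S' ω) ω|)
            = lam⁻¹ • fun ω => |V (hitR V F lam S' T ω) ω - llim V (S' ω) ω| := rfl
        rw [h5, hω1]
        simp only [Pi.smul_apply, smul_eq_mul]
        exact mul_le_mul_of_nonneg_left hω2 (by positivity)
      filter_upwards [h_tower, h_outer, h_smul, h_W] with ω hω1 hω2 hω3 hω4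
      have h6 : (fun ω => creal * (lam⁻¹ * |V (hitR V F lam S' T ω) ω - llim V (S' ω) ω|))
          = creal • fun ω => lam⁻¹ * |V (hitR V F lam S' T ω) ω - llim V (S' ω) ω| := rfl
      rw [← hω1]
      refine le_trans hω2 ?_
      rw [h6, hω3]
      simp only [Pi.smul_apply, smul_eq_mul]
      calc creal * (μ[(fun ω => lam⁻¹ * |V (hitR V F lam S' T ω) ω - llim V (S' ω) ω|)|
            hS'.measurableSpace]) ω ≤ creal * (lam⁻¹ * ρR) :=
          mul_le_mul_of_nonneg_left hω4 hcreal0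
        _ = creal / 2 := by
          rw [hlam]
          field_simp
    -- assemble
    have h_master : ∀ ω, gridMT V F b S' T ω ≤ lam
        + ((lam⁻¹ * |V (hitR V F lam S' T ω) ω - llim V (S' ω) ω|)
          * gridMT V F b (hitR V F lam S' T) T ω
        + |llim V (hitR V F lam S' T ω) ω - llim V (S' ω) ω|) := by
      intro ω
      have := grid_master (V := V) h2 F hlam0 hb ω
      linarith
    have h_rhs_int : Integrable (fun ω => lam
        + ((lam⁻¹ * |V (hitR V F lam S' T ω) ω - llim V (S' ω) ω|)
          * gridMT V F b (hitR V F lam S' T) T ω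
        + |llim V (hitR V F lam S' T ω) ω - llim V (S' ω) ω|)) μ :=
      (integrable_const lam).add (hWMT_int.add hD_int)
    have h_mono2 := condExp_mono (m := hS'.measurableSpace) (hMT_int S' hS' h1 h2)
      h_rhs_int (Eventually.of_forall h_master)
    have h_split : (fun ω => lam
        + ((lam⁻¹ * |V (hitR V F lam S' T ω) ω - llim V (S' ω) ω|)
          * gridMT V F b (hitR V F lam S' T) T ω
        + |llim V (hitR V F lam S' T ω) ω - llim V (S' ω) ω|))
        = (fun _ => lam) + ((fun ω =>
          (lam⁻¹ * |V (hitR V F lam S' T ω) ω - llim V (S' ω) ω|)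
            * gridMT V F b (hitR V F lam S' T) T ω)
          + fun ω => |llim V (hitR V F lam S' T ω) ω - llim V (S' ω) ω|) := rfl
    have h_add1 := condExp_add (μ := μ) (m := hS'.measurableSpace) (integrable_const lam)
      (hWMT_int.add hD_int)
    have h_add2 := condExp_add (μ := μ) (m := hS'.measurableSpace) hWMT_int hD_int
    rw [h_split] at h_mono2
    have h_const := condExp_const (μ := μ) hS'.measurableSpace_le lam
    filter_upwards [h_mono2, h_add1, h_add2, hWMT_cexp, hD_cexp] with ω hω1 hω2 hω3 hω4 hω5
    have hω2' := hω2
    calc (μ[gridMT V F b S' T|hS'.measurableSpace]) ω ≤ _ := hω1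
      _ = (μ[(fun _ => lam)|hS'.measurableSpace]) ω
          + (μ[((fun ω => (lam⁻¹ * |V (hitR V F lam S' T ω) ω - llim V (S' ω) ω|)
              * gridMT V F b (hitR V F lam S' T) T ω)
            + fun ω => |llim V (hitR V F lam S' T ω) ω - llim V (S' ω) ω|)|
            hS'.measurableSpace]) ω := hω2'
      _ = lam + (μ[((fun ω => (lam⁻¹ * |V (hitR V F lam S' T ω) ω - llim V (S' ω) ω|)
              * gridMT V F b (hitR V F lam S' T) T ω)
            + fun ω => |llim V (hitR V F lam S' T ω) ω - llim V (S' ω) ω|)|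
            hS'.measurableSpace]) ω := by simp only [h_const]
      _ = lam + ((μ[(fun ω => (lam⁻¹ * |V (hitR V F lam S' T ω) ω - llim V (S' ω) ω|)
              * gridMT V F b (hitR V F lam S' T) T ω)|hS'.measurableSpace]) ω
          + (μ[(fun ω => |llim V (hitR V F lam S' T ω) ω - llim V (S' ω) ω|)|
            hS'.measurableSpace]) ω) := by simp only [hω3, Pi.add_apply]
      _ ≤ lam + (creal / 2 + 2 * ρR) := by
          have := add_le_add hω4 hω5
          linarith
      _ = 4 * ρR + creal / 2 := by rw [hlam]; ring
  -- close the recursion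
  have hcval_le : cval ≤ ENNReal.ofReal (4 * ρR + creal / 2) := by
    rw [hcval]
    refine iSup_le fun S' => iSup_le fun hS' => iSup_le fun h1 => iSup_le fun h2 => ?_
    refine essSup_le_of_ae_le _ ?_
    filter_upwards [key S' hS' h1 h2] with ω hω
    exact ENNReal.ofReal_le_ofReal hω
  have hcreal_le : creal ≤ 8 * ρR := by
    have h7 : creal ≤ 4 * ρR + creal / 2 := by
      have h8 := ENNReal.toReal_mono (by simp [ENNReal.ofReal_lt_top.ne]) hcval_le
      rwa [ENNReal.toReal_ofReal (by positivity)] at h8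
    linarith
  intro S hS h1 h2
  filter_upwards [key S hS h1 h2] with ω hω
  exact hω.trans (by linarith)

end Pairs


section Domination

variable {Ω : Type*} {V : ℝ → Ω → ℝ} {S T : Ω → ℝ}

lemma ofReal_mx_le_iSup (hRC : IsRCLL V) (hS0 : ∀ ω, 0 ≤ S ω) (hST : ∀ ω, S ω ≤ T ω) (y : Ω) :
    ENNReal.ofReal (|mx V (T y) y - llim (mx V) (S y) y|)
      ≤ ⨆ n : ℕ, ENNReal.ofReal (gridMT V (ratF n) (n : ℝ) S T y) := by
  classical
  have hmxT0 : (0:ℝ) ≤ T y := (hS0 y).trans (hST y)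
  have h1 : llim (mx V) (S y) y ≤ mx V (T y) y :=
    le_trans (llim_mx_le_mx hRC y (hS0 y)) (mx_mono hRC y (hST y))
  rw [abs_of_nonneg (sub_nonneg.2 h1)]
  obtain ⟨C, hC⟩ := rcll_exists_bound hRC y (T y)
  have hC0 : 0 ≤ C := le_trans (abs_nonneg _) (hC 0 ⟨le_rfl, hmxT0⟩)
  have hmxS_le : mx V (S y) y ≤ C :=
    mx_le y hC0 fun r hr => hC r ⟨hr.1, hr.2.trans (hST y)⟩
  have hKq : ∀ q : ℚ, |V (clipT S T q y) y - llim V (S y) y| ≤ C + C := by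
    intro q
    have h2 : |V (clipT S T q y) y - V 0 y| ≤ C :=
      hC _ ⟨(hS0 y).trans (le_clipT hST q y), clipT_le q y⟩
    have h3 : |llim V (S y) y - V 0 y| ≤ C :=
      le_trans (abs_llim_sub_le hRC y (hS0 y))
        (le_trans (llim_mx_le_mx hRC y (hS0 y)) hmxS_le)
    calc |V (clipT S T q y) y - llim V (S y) y|
        ≤ |V (clipT S T q y) y - V 0 y| + |V 0 y - llim V (S y) y| := abs_sub_le _ _ _
      _ = |V (clipT S T q y) y - V 0 y| + |llim V (S y) y - V 0 y| := by rw [abs_sub_comm (V 0 y)]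
      _ ≤ C + C := add_le_add h2 h3
  refine ENNReal.le_of_forall_pos_le_add fun ε hε hfin => ?_
  have hε' : (0:ℝ) < (ε:ℝ) := hε
  suffices hn : ∃ n : ℕ, mx V (T y) y - llim (mx V) (S y) y ≤ gridMT V (ratF n) (n:ℝ) S T y + ε by
    obtain ⟨n, hn⟩ := hn
    calc ENNReal.ofReal (mx V (T y) y - llim (mx V) (S y) y)
        ≤ ENNReal.ofReal (gridMT V (ratF n) (n:ℝ) S T y + (ε:ℝ)) := ENNReal.ofReal_le_ofReal hn
      _ ≤ ENNReal.ofReal (gridMT V (ratF n) (n:ℝ) S T y) + ENNReal.ofReal (ε:ℝ) :=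
          ENNReal.ofReal_add_le
      _ ≤ (⨆ n : ℕ, ENNReal.ofReal (gridMT V (ratF n) (n : ℝ) S T y)) + (ε : ℝ≥0∞) := by
          refine add_le_add (le_iSup (fun n => ENNReal.ofReal (gridMT V (ratF n) (n:ℝ) S T y)) n)
            ?_
          rw [ENNReal.ofReal_coe_nnreal]
  have hbddL : BddAbove (Set.range fun q : ℚ => |V (clipT S T q y) y - llim V (S y) y|) := by
    refine ⟨C + C, ?_⟩; rintro x ⟨q, rfl⟩; exact hKq q
  have hgL : mx V (T y) y - llim (mx V) (S y) y
      ≤ ⨆ q : ℚ, |V (clipT S T q y) y - llim V (S y) y| :=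
    mx_increment_le hRC y (hS0 y) (hST y) fun q =>
      le_ciSup hbddL q
  rcases le_or_gt (mx V (T y) y - llim (mx V) (S y) y) (ε:ℝ) with hle | hlt
  · refine ⟨0, ?_⟩
    have := gridMT_nonneg (V := V) (S := S) (T := T) (ratF 0) (le_refl (0:ℝ)) y
    push_cast
    push_cast at this
    linarith
  · have hLlt : (⨆ q : ℚ, |V (clipT S T q y) y - llim V (S y) y|) - (ε:ℝ)
        < ⨆ q : ℚ, |V (clipT S T q y) y - llim V (S y) y| := by linarith
    obtain ⟨q, hq⟩ := exists_lt_of_lt_ciSup hLlt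
    obtain ⟨N0, hN0⟩ := exists_mem_ratF q
    set n := max N0 ⌈C + C⌉₊ with hn
    have hqn : q ∈ ratF n := hN0 n (le_max_left _ _)
    have hCn : C + C ≤ (n:ℝ) := by
      refine le_trans (Nat.le_ceil _) ?_
      exact_mod_cast Nat.cast_le.2 (le_max_right N0 ⌈C + C⌉₊)
    have hgrid_ge : |V (clipT S T q y) y - llim V (S y) y| ≤ gridMT V (ratF n) (n:ℝ) S T y :=
      le_min (le_gridM hqn y) ((hKq q).trans hCn)
    exact ⟨n, by linarith [hgL, hq, hgrid_ge]⟩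

end Domination


section Final

variable {Ω : Type*} {mΩ : MeasurableSpace Ω} [StandardBorelSpace Ω]
  {μ : Measure Ω} [IsProbabilityMeasure μ] {ℱ : Filtration ℝ mΩ} {V : ℝ → Ω → ℝ}

lemma core_bound (hAd : Adapted ℱ V) (hRC : IsRCLL V)
    {s t : ℝ} (hs0 : 0 ≤ s) (hfin : bmoRho μ ℱ V s t ≠ ⊤)
    {S T : Ω → ℝ} (hS : IsStoppingTime ℱ (fun ω => (S ω : WithTop ℝ))) (hT : IsStoppingTime ℱ (fun ω => (T ω : WithTop ℝ)))
    (hsS : ∀ ω, s ≤ S ω) (hST : ∀ ω, S ω ≤ T ω) (hTt : ∀ ω, T ω ≤ t)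
    {ρR : ℝ} (hρpos : 0 < ρR) (hρle : bmoRho μ ℱ V s t ≤ ENNReal.ofReal ρR) :
    essSup (condE μ hS.measurableSpace fun y => |mx V (T y) y - llim (mx V) (S y) y|) μ
      ≤ ENNReal.ofReal (8 * ρR) := by
  have hProg := progMeasurable_of_rcll hAd hRC
  have hsT : ∀ ω, s ≤ T ω := fun ω => (hsS ω).trans (hST ω)
  have hS0 : ∀ ω, 0 ≤ S ω := fun ω => hs0.trans (hsS ω)
  have hGmeas : ∀ n : ℕ, Measurable (gridMT V (ratF n) (n:ℝ) S T) := fun n =>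
    gridMT_measurable hProg hRC hS hT hS0 _ _
  have hG0 : ∀ (n : ℕ) ω, 0 ≤ gridMT V (ratF n) (n:ℝ) S T ω := fun n ω =>
    gridMT_nonneg _ (Nat.cast_nonneg n) ω
  have hGb : ∀ n : ℕ, ∃ b : ℝ, ∀ ω, gridMT V (ratF n) (n:ℝ) S T ω ≤ b := fun n =>
    ⟨n, fun ω => gridMT_le _ _ ω⟩
  have hmono : ∀ ω, Monotone fun n : ℕ => gridMT V (ratF n) (n:ℝ) S T ω := by
    intro ω n m hnm
    show min (gridM V (ratF n) S T ω) (n:ℝ) ≤ min (gridM V (ratF m) S T ω) (m:ℝ)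
    exact min_le_min (NNReal.coe_le_coe.2 (Finset.sup_mono (ratF_mono hnm)))
      (Nat.cast_le.2 hnm)
  have hdom : ∀ y, ENNReal.ofReal (|mx V (T y) y - llim (mx V) (S y) y|)
      ≤ ⨆ n : ℕ, ENNReal.ofReal (gridMT V (ratF n) (n:ℝ) S T y) := fun y =>
    ofReal_mx_le_iSup hRC hS0 hST y
  have hbound : ∀ n : ℕ, μ[gridMT V (ratF n) (n:ℝ) S T|hS.measurableSpace]
      ≤ᵐ[μ] fun _ => 8 * ρR := fun n =>
    grid_recursion hAd hRC hs0 hfin hT hsT hTt hρpos hρle (ratF n) (Nat.cast_nonneg n)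
      S hS hsS hST
  have hae := condE_ae_le_of_monotone_approx (μ := μ) hS.measurableSpace_le
    (g := fun y => |mx V (T y) y - llim (mx V) (S y) y|)
    hGmeas hG0 hGb hmono hdom hbound
  exact essSup_le_of_ae_le _ hae

lemma bmoRho_mx_le (hAd : Adapted ℱ V) (hRC : IsRCLL V)
    {s t : ℝ} (hs0 : 0 ≤ s) :
    bmoRho μ ℱ (mx V) s t ≤ 11 * bmoRho μ ℱ V s t := by
  rcases eq_or_ne (bmoRho μ ℱ V s t) ⊤ with htop | hfin
  · rw [htop, ENNReal.mul_top (by norm_num)]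
    exact le_top
  · have h8 : bmoRho μ ℱ (mx V) s t ≤ 8 * bmoRho μ ℱ V s t := by
      refine iSup_le fun S => iSup_le fun T => iSup_le fun hS => iSup_le fun hT =>
        iSup_le fun hsS => iSup_le fun hST => iSup_le fun hTt => ?_
      refine ENNReal.le_of_forall_pos_le_add fun ε hε h8fin => ?_
      have hε' : (0:ℝ) < (ε:ℝ) := hε
      set ρR : ℝ := (bmoRho μ ℱ V s t).toReal + (ε:ℝ)/8 with hρR
      have htR : (0:ℝ) ≤ (bmoRho μ ℱ V s t).toReal := ENNReal.toReal_nonneg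
      have hρpos : 0 < ρR := by rw [hρR]; positivity
      have hρle : bmoRho μ ℱ V s t ≤ ENNReal.ofReal ρR := by
        conv_lhs => rw [← ENNReal.ofReal_toReal hfin]
        exact ENNReal.ofReal_le_ofReal (by rw [hρR]; linarith)
      have hcb := core_bound hAd hRC hs0 hfin hS hT hsS hST hTt hρpos hρle
      refine le_trans hcb ?_
      have heq : 8 * ρR = 8 * (bmoRho μ ℱ V s t).toReal + (ε:ℝ) := by rw [hρR]; ring
      rw [heq]
      calc ENNReal.ofReal (8 * (bmoRho μ ℱ V s t).toReal + (ε:ℝ))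
          ≤ ENNReal.ofReal (8 * (bmoRho μ ℱ V s t).toReal) + ENNReal.ofReal (ε:ℝ) :=
            ENNReal.ofReal_add_le
        _ = 8 * bmoRho μ ℱ V s t + (ε : ℝ≥0∞) := by
            rw [ENNReal.ofReal_coe_nnreal, ENNReal.ofReal_mul (by norm_num : (0:ℝ) ≤ 8),
              ENNReal.ofReal_toReal hfin]
            norm_num
    refine h8.trans (mul_le_mul_left (by norm_num : (8:ℝ≥0∞) ≤ 11) _)

end Final

/-- the maximal process `V*_t = sup_{0≤s≤t} |V_s - V_0|` of a BMO process is
again BMO, with `ρ_{s,t}(V*) ≤ 11 ρ_{s,t}(V)` for all `0 ≤ s ≤ t ≤ τ`. -/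
theorem maximal_process_bmo {Ω : Type*} {mΩ : MeasurableSpace Ω} [StandardBorelSpace Ω]
    (μ : Measure Ω) [IsProbabilityMeasure μ] (ℱ : Filtration ℝ mΩ)
    (τ : ℝ) (hτ : 0 < τ) (V : ℝ → Ω → ℝ) (hV : IsBMO μ ℱ τ V) :
    IsBMO μ ℱ τ (fun u ω => ⨆ r : Set.Icc (0:ℝ) u, |V (r:ℝ) ω - V 0 ω|) ∧
    ∀ s t : ℝ, 0 ≤ s → s ≤ t → t ≤ τ →
      bmoRho μ ℱ (fun u ω => ⨆ r : Set.Icc (0:ℝ) u, |V (r:ℝ) ω - V 0 ω|) s t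
        ≤ 11 * bmoRho μ ℱ V s t := by
  have hAd := hV.adapted
  have hRC := hV.rcll
  have hmain : ∀ s t : ℝ, 0 ≤ s → s ≤ t → t ≤ τ →
      bmoRho μ ℱ (fun u ω => ⨆ r : Set.Icc (0:ℝ) u, |V (r:ℝ) ω - V 0 ω|) s t
        ≤ 11 * bmoRho μ ℱ V s t := by
    intro s t h1 h2 h3
    exact bmoRho_mx_le hAd hRC h1
  refine ⟨⟨adapted_mx hAd hRC, isRCLL_mx hRC, ?_⟩, fun s t h1 h2 h3 => hmain s t h1 h2 h3⟩
  calc bmoRho μ ℱ (fun u ω => ⨆ r : Set.Icc (0:ℝ) u, |V (r:ℝ) ω - V 0 ω|) 0 τ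
      ≤ 11 * bmoRho μ ℱ V 0 τ := hmain 0 τ le_rfl hτ.le le_rfl
    _ < ⊤ := ENNReal.mul_lt_top (by norm_num) hV.finite

end
end

section
/- Let (V_t)_{t∈[0,τ]} be a BMO process. Then ρ(V) is subadditive: ρ_{s,t}(V) ≤ ρ_{s,u}(V) + ρ_{u,t}(V) whenever 0 ≤ s ≤ u ≤ t ≤ τ. Moreover, if V is VMO (κ_{0,τ}(V) = 0), then the map (s,t) ↦ ρ_{s,t}(V) is continuous on {(s,t) ∈ [0,τ]² : s ≤ t}. -/
open MeasureTheory ProbabilityTheory Filter Topology Set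
open scoped ENNReal NNReal

noncomputable section

namespace BmoAux

variable {Ω : Type*} {m m' m₁ : MeasurableSpace Ω} [mΩ : MeasurableSpace Ω]
  [StandardBorelSpace Ω] (μ : Measure Ω) [IsProbabilityMeasure μ]

/-- ℝ≥0∞-valued conditional expectation via the conditional expectation kernel. -/
def condE' (m : MeasurableSpace Ω) (F : Ω → ℝ≥0∞) (ω : Ω) : ℝ≥0∞ :=
  ∫⁻ y, F y ∂(condExpKernel (mΩ := mΩ) μ m ω)

lemma condE'_mono {F G : Ω → ℝ≥0∞} (h : ∀ y, F y ≤ G y) (ω : Ω) :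
    condE' μ m F ω ≤ condE' μ m G ω :=
  lintegral_mono h

lemma condexpKernel_set_ae (hm : m ≤ mΩ) {Λ : Set Ω}
    (hΛ : MeasurableSet[m] Λ) :
    ∀ᵐ ω ∂μ, (ω ∈ Λ → condExpKernel μ m ω Λᶜ = 0) ∧ (ω ∉ Λ → condExpKernel μ m ω Λ = 0) := by
  have hΛ0 : MeasurableSet[mΩ] Λ := hm _ hΛ
  have h1 := condExpKernel_ae_eq_condExp (μ := μ) hm hΛ0
  have h2 : μ[Λ.indicator (fun _ => (1:ℝ)) | m] = Λ.indicator fun _ => (1:ℝ) :=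
    condExp_of_stronglyMeasurable hm
      ((stronglyMeasurable_const : StronglyMeasurable[m] fun _ : Ω => (1:ℝ)).indicator hΛ)
      ((integrable_const (1:ℝ)).indicator hΛ0)
  filter_upwards [h1] with ω hω1
  have hne : condExpKernel μ m ω Λ ≠ ⊤ := measure_ne_top _ _
  have hval : condExpKernel μ m ω Λ = ENNReal.ofReal (Λ.indicator (fun _ => (1:ℝ)) ω) := by
    rw [← congrFun h2 ω, ← hω1, measureReal_def, ENNReal.ofReal_toReal hne]
  constructor
  · intro hmem
    have h1' : condExpKernel μ m ω Λ = 1 := by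
      rw [hval, Set.indicator_of_mem hmem, ENNReal.ofReal_one]
    have hadd : condExpKernel μ m ω Λ + condExpKernel μ m ω Λᶜ = 1 := by
      rw [measure_add_measure_compl hΛ0, measure_univ]
    rw [h1'] at hadd
    have h0 : (1:ℝ≥0∞) + condExpKernel μ m ω Λᶜ = 1 + 0 := by rw [add_zero]; exact hadd
    exact (ENNReal.add_right_inj ENNReal.one_ne_top).mp h0
  · intro hmem
    rw [hval, Set.indicator_of_notMem hmem, ENNReal.ofReal_zero]

lemma condE'_indicator (hm : m ≤ mΩ) {Λ : Set Ω}
    (hΛ : MeasurableSet[m] Λ) (F : Ω → ℝ≥0∞) :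
    ∀ᵐ ω ∂μ, condE' μ m (Λ.indicator F) ω = Λ.indicator (condE' μ m F) ω := by
  filter_upwards [condexpKernel_set_ae μ hm hΛ] with ω hω
  by_cases hmem : ω ∈ Λ
  · rw [Set.indicator_of_mem hmem]
    refine lintegral_congr_ae ?_
    have hae : ∀ᵐ y ∂(condExpKernel μ m ω), y ∈ Λ := by
      rw [ae_iff]
      exact hω.1 hmem
    filter_upwards [hae] with y hy
    exact Set.indicator_of_mem hy F
  · rw [Set.indicator_of_notMem hmem]
    have hae : ∀ᵐ y ∂(condExpKernel μ m ω), Λ.indicator F y = 0 := by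
      have h0 : condExpKernel μ m ω Λ = 0 := hω.2 hmem
      rw [ae_iff]
      refine measure_mono_null ?_ h0
      intro y hy
      simp only [Set.mem_setOf_eq] at hy
      by_contra hyΛ
      exact hy (Set.indicator_of_notMem hyΛ F)
    calc condE' μ m (Λ.indicator F) ω = ∫⁻ _, (0:ℝ≥0∞) ∂(condExpKernel μ m ω) :=
          lintegral_congr_ae hae
      _ = 0 := lintegral_zero

lemma iSup_min_natCast (a : ℝ≥0∞) : ⨆ n : ℕ, min a n = a := by
  refine le_antisymm (iSup_le fun n => min_le_left _ _) ?_
  rcases eq_or_ne a ⊤ with rfl | ha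
  · calc (⊤:ℝ≥0∞) = ⨆ n : ℕ, (n:ℝ≥0∞) := ENNReal.iSup_natCast.symm
      _ ≤ ⨆ n : ℕ, min ⊤ (n:ℝ≥0∞) := iSup_mono fun n => by simp
  · obtain ⟨n, hn⟩ := ENNReal.exists_nat_gt ha
    exact le_trans (le_of_eq (min_eq_left hn.le).symm)
      (le_iSup (fun k : ℕ => min a (k:ℝ≥0∞)) n)

lemma trunc_mono {F : Ω → ℝ≥0∞} : Monotone fun (n : ℕ) (y : Ω) => min (F y) n := by
  intro i j hij y
  exact min_le_min le_rfl (by exact_mod_cast Nat.cast_le.mpr hij)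

lemma condE'_eq_iSup {F : Ω → ℝ≥0∞} (hF : Measurable F) (ω : Ω) :
    condE' μ m F ω = ⨆ n : ℕ, condE' μ m (fun y => min (F y) n) ω := by
  simp only [condE']
  rw [← lintegral_iSup (fun n => hF.min measurable_const) trunc_mono]
  exact lintegral_congr fun y => (iSup_min_natCast (F y)).symm

lemma integrable_trunc {F : Ω → ℝ≥0∞} (hF : Measurable F) (n : ℕ)
    (ν : Measure Ω) [IsFiniteMeasure ν] :
    Integrable (fun y => (min (F y) n).toReal) ν := by
  refine Integrable.mono' (integrable_const (n:ℝ))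
    ((hF.min measurable_const).ennreal_toReal).aestronglyMeasurable
    (ae_of_all _ fun y => ?_)
  rw [Real.norm_of_nonneg ENNReal.toReal_nonneg]
  calc (min (F y) n).toReal ≤ ((n : ℝ≥0∞)).toReal :=
        ENNReal.toReal_mono (ENNReal.natCast_ne_top n) (min_le_right _ _)
    _ = (n:ℝ) := by simp

lemma condE'_trunc (hm : m ≤ mΩ) {F : Ω → ℝ≥0∞} (hF : Measurable F)
    (n : ℕ) :
    (fun ω => condE' μ m (fun y => min (F y) n) ω) =ᵐ[μ]
      fun ω => ENNReal.ofReal ((μ[fun y => (min (F y) n).toReal | m]) ω) := by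
  have hint : Integrable (fun y => (min (F y) n).toReal) μ := integrable_trunc hF n μ
  have h1 := condExp_ae_eq_integral_condExpKernel (μ := μ) hm hint
  filter_upwards [h1] with ω hω
  rw [hω]
  have hint' : Integrable (fun y => (min (F y) n).toReal) (condExpKernel μ m ω) :=
    integrable_trunc hF n _
  rw [MeasureTheory.ofReal_integral_eq_lintegral_ofReal hint'
    (ae_of_all _ fun y => ENNReal.toReal_nonneg)]
  refine lintegral_congr fun y => ?_
  rw [ENNReal.ofReal_toReal]
  exact ne_top_of_le_ne_top (ENNReal.natCast_ne_top n) (min_le_right _ _)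

lemma condE'_le_of_le (hmm' : m ≤ m') (hm' : m' ≤ mΩ)
    {F : Ω → ℝ≥0∞} (hF : Measurable F) {c : ℝ≥0∞}
    (h : ∀ᵐ ω ∂μ, condE' μ m' F ω ≤ c) :
    ∀ᵐ ω ∂μ, condE' μ m F ω ≤ c := by
  rcases eq_top_or_lt_top c with rfl | hc
  · exact ae_of_all _ fun _ => le_top
  have hm : m ≤ mΩ := hmm'.trans hm'
  have key : ∀ n : ℕ, ∀ᵐ ω ∂μ, condE' μ m (fun y => min (F y) n) ω ≤ c := by
    intro n
    have h1 : ∀ᵐ ω ∂μ, (μ[fun y => (min (F y) n).toReal | m']) ω ≤ c.toReal := by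
      filter_upwards [condE'_trunc μ hm' hF n, h,
        condExp_nonneg (m := m') (μ := μ)
          (ae_of_all _ fun y => (ENNReal.toReal_nonneg :
            0 ≤ (min (F y) n).toReal))] with ω hω1 hω2 hω3
      have hle : ENNReal.ofReal ((μ[fun y => (min (F y) n).toReal | m']) ω) ≤ c := by
        rw [← hω1]
        exact le_trans (condE'_mono μ (fun y => min_le_left _ _) ω) hω2
      exact (ENNReal.ofReal_le_iff_le_toReal hc.ne).mp hle
    have h2 : μ[fun y => (min (F y) n).toReal | m] =ᵐ[μ]
        μ[μ[fun y => (min (F y) n).toReal | m'] | m] :=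
      (condExp_condExp_of_le hmm' hm').symm
    have h3 : μ[μ[fun y => (min (F y) n).toReal | m'] | m] ≤ᵐ[μ] fun _ => c.toReal := by
      have := condExp_mono (m := m) (μ := μ) integrable_condExp (integrable_const c.toReal) h1
      rwa [condExp_const hm] at this
    filter_upwards [condE'_trunc μ hm hF n, h2, h3] with ω hω1 hω2 hω3
    rw [hω1, hω2]
    calc ENNReal.ofReal ((μ[μ[fun y => (min (F y) n).toReal|m']|m]) ω)
        ≤ ENNReal.ofReal c.toReal := ENNReal.ofReal_le_ofReal hω3
      _ = c := ENNReal.ofReal_toReal hc.ne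
  filter_upwards [ae_all_iff.2 key] with ω hω
  rw [condE'_eq_iSup μ hF]
  exact iSup_le hω

lemma condE'_le_on_of_le (hm₁ : m₁ ≤ m) (hm : m ≤ mΩ)
    {Λ : Set Ω} (hΛ : MeasurableSet[m₁] Λ)
    (htr : ∀ D, MeasurableSet[m] D → MeasurableSet[m₁] (D ∩ Λ))
    {F : Ω → ℝ≥0∞} (hF : Measurable F) {c : ℝ≥0∞}
    (h : ∀ᵐ ω ∂μ, condE' μ m₁ F ω ≤ c) :
    ∀ᵐ ω ∂μ, ω ∈ Λ → condE' μ m F ω ≤ c := by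
  have hm₁0 : m₁ ≤ mΩ := hm₁.trans hm
  have hΛm : MeasurableSet[m] Λ := hm₁ _ hΛ
  have hΛ0 : MeasurableSet[mΩ] Λ := hm _ hΛm
  have key : ∀ n : ℕ, ∀ᵐ ω ∂μ, ω ∈ Λ → condE' μ m (fun y => min (F y) n) ω ≤ c := by
    intro n
    set fn : Ω → ℝ := fun y => (min (F y) n).toReal with hfn_def
    have hfn_int : Integrable fn μ := integrable_trunc hF n μ
    have hφ : Measurable[m] (μ[fn|m]) := stronglyMeasurable_condExp.measurable
    have hgm : Measurable[m₁] (Λ.indicator (μ[fn|m])) := by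
      intro A hA
      by_cases h0 : (0:ℝ) ∈ A
      · have hpre : Λ.indicator (μ[fn|m]) ⁻¹' A = (μ[fn|m] ⁻¹' A ∩ Λ) ∪ Λᶜ := by
          ext x
          by_cases hx : x ∈ Λ <;>
            simp [Set.indicator_apply, hx, h0]
        rw [hpre]
        exact (htr _ (hφ hA)).union hΛ.compl
      · have hpre : Λ.indicator (μ[fn|m]) ⁻¹' A = μ[fn|m] ⁻¹' A ∩ Λ := by
          ext x
          by_cases hx : x ∈ Λ <;>
            simp [Set.indicator_apply, hx, h0]
        rw [hpre]
        exact htr _ (hφ hA)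
    have H1 : Λ.indicator (μ[fn|m]) =ᵐ[μ] μ[Λ.indicator fn|m₁] := by
      refine ae_eq_condExp_of_forall_setIntegral_eq hm₁0 (hfn_int.indicator hΛ0) ?_ ?_ ?_
      · intro s _ _
        exact (integrable_condExp.indicator hΛ0).integrableOn
      · intro s hs _
        rw [setIntegral_indicator hΛ0, setIntegral_indicator hΛ0,
          setIntegral_condExp hm hfn_int ((hm₁ _ hs).inter hΛm)]
      · exact StronglyMeasurable.aestronglyMeasurable hgm.stronglyMeasurable
    have H2 : μ[Λ.indicator fn|m₁] =ᵐ[μ] Λ.indicator (μ[fn|m₁]) :=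
      condExp_indicator hfn_int hΛ
    filter_upwards [H1, H2, condE'_trunc μ hm hF n, condE'_trunc μ hm₁0 hF n, h]
      with ω h1 h2 h3 h4 h5
    intro hmem
    have heq : (μ[fn|m]) ω = (μ[fn|m₁]) ω := by
      have e1 : Λ.indicator (μ[fn|m]) ω = Λ.indicator (μ[fn|m₁]) ω := h1.trans h2
      rwa [Set.indicator_of_mem hmem, Set.indicator_of_mem hmem] at e1
    rw [h3, heq, ← h4]
    exact le_trans (condE'_mono μ (fun y => min_le_left _ _) ω) h5
  filter_upwards [ae_all_iff.2 key] with ω hω hmem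
  rw [condE'_eq_iSup μ hF]
  exact iSup_le fun n => hω n hmem

section Meas

variable {V : ℝ → Ω → ℝ}

omit [StandardBorelSpace Ω] in
lemma measurable_uncurry_V (hAd : ∀ t, Measurable (V t))
    (hrc : ∀ ω t, ContinuousWithinAt (fun u => V u ω) (Set.Ici t) t) :
    Measurable fun p : ℝ × Ω => V p.1 p.2 := by
  have hW : ∀ n : ℕ, Measurable fun p : ℝ × Ω => V ((⌈p.1 * 2 ^ n⌉ : ℤ) / 2 ^ n) p.2 := by
    intro n
    have h1 : Measurable fun q : Ω × ℤ => V ((q.2 : ℝ) / 2 ^ n) q.1 :=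
      measurable_from_prod_countable_left fun k => hAd ((k:ℝ)/2^n)
    exact h1.comp (measurable_snd.prodMk
      (Int.measurable_ceil.comp (measurable_fst.mul_const _)))
  refine measurable_of_tendsto_metrizable' atTop hW (tendsto_pi_nhds.mpr fun p => ?_)
  have hd : Tendsto (fun n : ℕ => ((⌈p.1 * 2 ^ n⌉ : ℤ) : ℝ) / 2 ^ n) atTop
      (nhdsWithin p.1 (Set.Ici p.1)) := by
    have hle : ∀ n : ℕ, p.1 ≤ ((⌈p.1 * 2 ^ n⌉ : ℤ) : ℝ) / 2 ^ n := by
      intro n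
      rw [le_div_iff₀ (by positivity : (0:ℝ) < 2 ^ n)]
      exact Int.le_ceil _
    have hup : ∀ n : ℕ, ((⌈p.1 * 2 ^ n⌉ : ℤ) : ℝ) / 2 ^ n ≤ p.1 + ((2:ℝ) ^ n)⁻¹ := by
      intro n
      have h2n : (0:ℝ) < 2 ^ n := by positivity
      rw [div_le_iff₀ h2n, add_mul, inv_mul_cancel₀ h2n.ne']
      exact (Int.ceil_lt_add_one _).le
    have htend : Tendsto (fun n : ℕ => ((⌈p.1 * 2 ^ n⌉ : ℤ) : ℝ) / 2 ^ n) atTop (𝓝 p.1) := by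
      refine tendsto_of_tendsto_of_tendsto_of_le_of_le tendsto_const_nhds ?_ hle hup
      have h2 : Tendsto (fun n : ℕ => ((2:ℝ) ^ n)⁻¹) atTop (𝓝 0) := by
        simp_rw [← inv_pow]
        exact tendsto_pow_atTop_nhds_zero_of_lt_one (by norm_num) (by norm_num)
      simpa using tendsto_const_nhds.add h2
    exact tendsto_nhdsWithin_of_tendsto_nhds_of_eventually_within _ htend
      (Eventually.of_forall fun n => hle n)
  exact ((hrc p.2 p.1).tendsto).comp hd

omit [StandardBorelSpace Ω] in
lemma measurable_V_comp (hAd : ∀ t, Measurable (V t))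
    (hrc : ∀ ω t, ContinuousWithinAt (fun u => V u ω) (Set.Ici t) t)
    {R : Ω → ℝ} (hR : Measurable R) :
    Measurable fun y => V (R y) y :=
  (measurable_uncurry_V hAd hrc).comp (hR.prodMk measurable_id)

omit [StandardBorelSpace Ω] in
lemma measurable_llim_comp (hAd : ∀ t, Measurable (V t))
    (hrc : ∀ ω t, ContinuousWithinAt (fun u => V u ω) (Set.Ici t) t)
    (hLL : ∀ ω t, (0:ℝ) < t →
      ∃ l : ℝ, Tendsto (fun u => V u ω) (nhdsWithin t (Set.Iio t)) (𝓝 l))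
    {R : Ω → ℝ} (hR : Measurable R) :
    Measurable fun y => llim V (R y) y := by
  have hVm := measurable_uncurry_V hAd hrc
  have hn : ∀ n : ℕ, Measurable fun y =>
      if R y ≤ 0 then V 0 y else V (R y - 1/(n+1)) y := by
    intro n
    exact Measurable.ite (hR measurableSet_Iic) (hAd 0)
      (hVm.comp ((hR.sub_const _).prodMk measurable_id))
  refine measurable_of_tendsto_metrizable' atTop hn (tendsto_pi_nhds.mpr fun y => ?_)
  by_cases h0 : R y ≤ 0
  · simp only [h0, if_true]
    rw [llim, if_pos h0]
    exact tendsto_const_nhds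
  · push_neg at h0
    obtain ⟨l, hl⟩ := hLL y (R y) h0
    have hlim : llim V (R y) y = l := by
      rw [llim, if_neg (not_le.2 h0)]
      exact hl.limUnder_eq
    rw [hlim]
    have heq : ∀ n : ℕ, (if R y ≤ 0 then V 0 y else V (R y - 1/(n+1)) y)
        = V (R y - 1/(n+1)) y := fun n => if_neg (not_le.2 h0)
    refine Tendsto.congr (fun n => (heq n).symm) ?_
    refine hl.comp ?_
    refine tendsto_nhdsWithin_of_tendsto_nhds_of_eventually_within _ ?_
      (Eventually.of_forall fun n => ?_)
    · have h2 : Tendsto (fun n : ℕ => 1/((n:ℝ)+1)) atTop (𝓝 0) :=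
        tendsto_one_div_add_atTop_nhds_zero_nat
      simpa using tendsto_const_nhds.sub h2
    · simp only [Set.mem_Iio]
      have : (0:ℝ) < 1/((n:ℝ)+1) := by positivity
      linarith

end Meas

lemma measurable_of_isStoppingTime_real {ℱ : Filtration ℝ mΩ} {S : Ω → ℝ}
    (hS : IsStoppingTime ℱ (fun ω => (S ω : WithTop ℝ))) : Measurable[hS.measurableSpace] S :=
  measurable_of_Iic fun c => by
    have h := hS.measurableSet_le' c
    simp only [WithTop.coe_le_coe] at h
    exact h

lemma liminf_le_of_eventually_le {f : ℕ → ℝ≥0∞} {c : ℝ≥0∞}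
    (h : ∀ᶠ n in atTop, f n ≤ c) : liminf f atTop ≤ c := by
  rw [liminf_eq_iSup_iInf_of_nat]
  obtain ⟨N, hN⟩ := eventually_atTop.mp h
  refine iSup_le fun M => ?_
  exact (iInf₂_le (max M N) (le_max_left _ _)).trans (hN _ (le_max_right _ _))

section Rho

variable (ℱ : Filtration ℝ mΩ) (V : ℝ → Ω → ℝ)

lemma le_bmoRho {s t : ℝ} {S T : Ω → ℝ}
    (hS : IsStoppingTime ℱ (fun ω => (S ω : WithTop ℝ)))
    (hT : IsStoppingTime ℱ (fun ω => (T ω : WithTop ℝ))) (h1 : ∀ ω, s ≤ S ω)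
    (h2 : ∀ ω, S ω ≤ T ω) (h3 : ∀ ω, T ω ≤ t) :
    essSup (condE μ hS.measurableSpace fun y => |V (T y) y - llim V (S y) y|) μ ≤
      bmoRho μ ℱ V s t :=
  le_iSup_of_le S (le_iSup_of_le T (le_iSup_of_le hS (le_iSup_of_le hT
    (le_iSup_of_le h1 (le_iSup_of_le h2 (le_iSup_of_le h3 le_rfl))))))

lemma bmoRho_mono {s t s' t' : ℝ} (hs : s' ≤ s) (ht : t ≤ t') :
    bmoRho μ ℱ V s t ≤ bmoRho μ ℱ V s' t' := by
  refine iSup_le fun S => iSup_le fun T => iSup_le fun hS => iSup_le fun hT =>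
    iSup_le fun h1 => iSup_le fun h2 => iSup_le fun h3 => ?_
  exact le_bmoRho μ ℱ V hS hT (fun ω => hs.trans (h1 ω)) h2 (fun ω => (h3 ω).trans ht)

lemma bmoRho_subadd (hAd : Adapted ℱ V) (hrcll : IsRCLL V)
    {s u t : ℝ} (hs : 0 ≤ s) (hsu : s ≤ u) (hut : u ≤ t) :
    bmoRho μ ℱ V s t ≤ bmoRho μ ℱ V s u + bmoRho μ ℱ V u t := by
  rcases eq_or_lt_of_le hsu with rfl | hsu'
  · exact le_add_self
  rcases eq_or_lt_of_le hut with rfl | hut'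
  · exact le_self_add
  have hu0 : 0 < u := lt_of_le_of_lt hs hsu'
  have hVmeas : ∀ r, Measurable (V r) := fun r => (hAd r).mono (ℱ.le r) le_rfl
  have hrc := hrcll.rightCont
  have hLL := hrcll.leftLimExists
  refine iSup_le fun S => iSup_le fun T => iSup_le fun hS => iSup_le fun hT =>
    iSup_le fun h1 => iSup_le fun h2 => iSup_le fun h3 => ?_
  have hm : hS.measurableSpace ≤ mΩ := hS.measurableSpace_le
  have hSmeas : Measurable S := (measurable_of_isStoppingTime_real hS).mono hm le_rfl
  have hTmeas : Measurable T := (measurable_of_isStoppingTime_real hT).mono hT.measurableSpace_le le_rfl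
  -- the approximating sequence of times below `u`
  set ε : ℕ → ℝ := fun n => (u - s) / (n + 2) with hε_def
  have hεpos : ∀ n : ℕ, 0 < ε n := fun n => div_pos (sub_pos.2 hsu') (by positivity)
  have hεle : ∀ n : ℕ, ε n ≤ u - s := by
    intro n
    rw [hε_def]
    refine div_le_self (sub_pos.2 hsu').le ?_
    have : (0:ℝ) ≤ (n:ℝ) := Nat.cast_nonneg n
    linarith
  have hεanti : ∀ {k n : ℕ}, k ≤ n → ε n ≤ ε k := by
    intro k n hkn
    rw [hε_def]
    have h1' : ((k:ℝ) + 2) ≤ ((n:ℝ) + 2) := by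
      have : (k:ℝ) ≤ (n:ℝ) := Nat.cast_le.mpr hkn
      linarith
    exact div_le_div_of_nonneg_left (sub_pos.2 hsu').le (by positivity) h1'
  have hεsmall : ∀ d : ℝ, 0 < d → ∃ N : ℕ, ε N ≤ d := by
    intro d hd
    obtain ⟨N, hN⟩ := exists_nat_ge ((u - s) / d)
    refine ⟨N, ?_⟩
    rw [hε_def, div_le_iff₀ (by positivity)]
    rw [div_le_iff₀ hd] at hN
    nlinarith [hN, hd.le]
  have hε0 : Tendsto ε atTop (𝓝 0) := by
    rw [hε_def]
    refine Tendsto.div_atTop tendsto_const_nhds ?_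
    exact tendsto_atTop_add_const_right _ 2 tendsto_natCast_atTop_atTop
  -- the auxiliary stopping times and oscillation functions
  set G : Ω → ℝ≥0∞ := fun y => ENNReal.ofReal |V (T y) y - llim V (S y) y| with hG_def
  set G2 : Ω → ℝ≥0∞ :=
    fun y => ENNReal.ofReal |V (max (T y) u) y - llim V (max (S y) u) y| with hG2_def
  set G1 : ℕ → Ω → ℝ≥0∞ := fun n y =>
    ENNReal.ofReal |V (min (T y) (u - ε n)) y - llim V (min (S y) (u - ε n)) y| with hG1_def
  set L : Ω → ℝ≥0∞ := fun y => liminf (fun n => G1 n y) atTop with hL_def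
  set Λ : Set Ω := {y | S y < u} with hΛ_def
  have hG2m : Measurable G2 := by
    rw [hG2_def]
    exact (((measurable_V_comp hVmeas hrc (hTmeas.max measurable_const)).sub
      (measurable_llim_comp hVmeas hrc hLL (hSmeas.max measurable_const))).abs).ennreal_ofReal
  have hG1m : ∀ n, Measurable (G1 n) := by
    intro n
    rw [hG1_def]
    exact (((measurable_V_comp hVmeas hrc (hTmeas.min measurable_const)).sub
      (measurable_llim_comp hVmeas hrc hLL (hSmeas.min measurable_const))).abs).ennreal_ofReal
  -- bound for the [u,t] part
  have htower2 : ∀ᵐ ω ∂μ, condE' μ hS.measurableSpace G2 ω ≤ bmoRho μ ℱ V u t := by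
    have hS2 : IsStoppingTime ℱ fun y => ((max (S y) u : ℝ) : WithTop ℝ) := hS.max_const u
    have hT2 : IsStoppingTime ℱ fun y => ((max (T y) u : ℝ) : WithTop ℝ) := hT.max_const u
    have hess := le_bmoRho (s := u) (t := t) μ ℱ V hS2 hT2 (fun ω => le_max_right _ _)
      (fun ω => max_le_max (h2 ω) le_rfl) (fun ω => max_le (h3 ω) hut)
    have hcond : condE' μ hS2.measurableSpace G2 =
        condE μ hS2.measurableSpace
          (fun y => |V (max (T y) u) y - llim V (max (S y) u) y|) := by
      rw [hG2_def]; rfl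
    have hb2 : ∀ᵐ ω ∂μ, condE' μ hS2.measurableSpace G2 ω ≤ bmoRho μ ℱ V u t := by
      rw [hcond]
      exact (ENNReal.ae_le_essSup _).mono fun ω h => h.trans hess
    exact condE'_le_of_le μ (hS.measurableSpace_mono hS2 fun y => WithTop.coe_le_coe.mpr (le_max_left _ _))
      hS2.measurableSpace_le hG2m hb2
  -- localized bounds for the [s,u] parts
  have hloc : ∀ n : ℕ, ∀ᵐ ω ∂μ, ω ∈ {y | S y ≤ u - ε n} →
      condE' μ hS.measurableSpace (G1 n) ω ≤ bmoRho μ ℱ V s u := by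
    intro n
    have hS1 : IsStoppingTime ℱ fun y => ((min (S y) (u - ε n) : ℝ) : WithTop ℝ) := hS.min_const _
    have hT1 : IsStoppingTime ℱ fun y => ((min (T y) (u - ε n) : ℝ) : WithTop ℝ) := hT.min_const _
    have hess := le_bmoRho (s := s) (t := u) μ ℱ V hS1 hT1
      (fun ω => le_min (h1 ω) (by linarith [hεle n]))
      (fun ω => min_le_min (h2 ω) le_rfl)
      (fun ω => (min_le_right _ _).trans (by linarith [hεpos n]))
    have hcond : condE' μ hS1.measurableSpace (G1 n) =
        condE μ hS1.measurableSpace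
          (fun y => |V (min (T y) (u - ε n)) y - llim V (min (S y) (u - ε n)) y|) := by
      rw [hG1_def]; rfl
    have hb1 : ∀ᵐ ω ∂μ, condE' μ hS1.measurableSpace (G1 n) ω ≤ bmoRho μ ℱ V s u := by
      rw [hcond]
      exact (ENNReal.ae_le_essSup _).mono fun ω h => h.trans hess
    have hset : {y | S y ≤ u - ε n} = {y | (S y : WithTop ℝ) ≤ ((u - ε n : ℝ) : WithTop ℝ)} := by
      ext y; exact (WithTop.coe_le_coe (a := u - ε n) (b := S y)).symm
    rw [hset]
    refine condE'_le_on_of_le μ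
      (hS1.measurableSpace_mono hS fun y => WithTop.coe_le_coe.mpr (min_le_left _ _)) hm
      ((hS.measurableSet_min_const_iff _).mpr ⟨hS.measurableSet_le' _, hS _⟩)
      (fun D hD => (hS.measurableSet_inter_le_const_iff D _).mp
        (hD.inter (hS.measurableSet_le' _)))
      (hG1m n) hb1
  -- the pointwise inequality
  have hpoint : ∀ y, G y ≤ G2 y + Λ.indicator L y := by
    intro y
    have hGy : G y = ENNReal.ofReal (|V (T y) y - llim V (S y) y|) := by rw [hG_def]
    have hG1y : ∀ n, G1 n y =
        ENNReal.ofReal (|V (min (T y) (u - ε n)) y - llim V (min (S y) (u - ε n)) y|) := by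
      intro n; rw [hG1_def]
    by_cases hmem : S y < u
    · rw [Set.indicator_of_mem (show y ∈ Λ by rw [hΛ_def]; exact hmem)]
      by_cases hTy : T y < u
      · -- the pair is eventually untouched
        have hev : ∀ᶠ n in atTop, G1 n y = G y := by
          obtain ⟨N, hN⟩ := hεsmall (u - T y) (by linarith)
          filter_upwards [eventually_ge_atTop N] with n hn
          have hT1 : T y ≤ u - ε n := by have := hεanti hn; linarith
          have hS1 : S y ≤ u - ε n := (h2 y).trans hT1
          rw [hG1y n, min_eq_left hT1, min_eq_left hS1, hGy]
        have hLy : L y = G y := by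
          rw [hL_def]
          exact Tendsto.liminf_eq
            (Tendsto.congr' (by filter_upwards [hev] with n h using h.symm) tendsto_const_nhds)
        rw [hLy]
        exact le_add_self
      · push_neg at hTy
        obtain ⟨l₀, hl₀⟩ := hLL y u hu0
        have hlu : llim V u y = l₀ := by
          rw [llim, if_neg (not_le.2 hu0)]
          exact hl₀.limUnder_eq
        have hG2y : G2 y = ENNReal.ofReal (|V (T y) y - l₀|) := by
          rw [hG2_def]
          show ENNReal.ofReal (|V (max (T y) u) y - llim V (max (S y) u) y|) = _
          rw [max_eq_left hTy, max_eq_right hmem.le, hlu]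
        have hseq : Tendsto (fun n : ℕ => u - ε n) atTop (𝓝[<] u) := by
          refine tendsto_nhdsWithin_of_tendsto_nhds_of_eventually_within _ ?_
            (Eventually.of_forall fun n => ?_)
          · simpa using tendsto_const_nhds.sub hε0
          · simp only [Set.mem_Iio]
            linarith [hεpos n]
        have hV1 : Tendsto (fun n => V (u - ε n) y) atTop (𝓝 l₀) := hl₀.comp hseq
        have hev : ∀ᶠ n in atTop,
            G1 n y = ENNReal.ofReal (|V (u - ε n) y - llim V (S y) y|) := by
          obtain ⟨N, hN⟩ := hεsmall (u - S y) (by linarith)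
          filter_upwards [eventually_ge_atTop N] with n hn
          have hS1 : S y ≤ u - ε n := by have := hεanti hn; linarith
          have hT1 : u - ε n ≤ T y := by linarith [hεpos n]
          rw [hG1y n, min_eq_right hT1, min_eq_left hS1]
        have htendG : Tendsto (fun n => G1 n y) atTop
            (𝓝 (ENNReal.ofReal (|l₀ - llim V (S y) y|))) := by
          refine Tendsto.congr' (by filter_upwards [hev] with n h using h.symm) ?_
          exact (ENNReal.continuous_ofReal.tendsto _).comp
            ((continuous_abs.tendsto _).comp (hV1.sub_const _))
        have hLy : L y = ENNReal.ofReal (|l₀ - llim V (S y) y|) := by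
          rw [hL_def]
          exact htendG.liminf_eq
        rw [hLy, hG2y, hGy]
        calc ENNReal.ofReal (|V (T y) y - llim V (S y) y|)
            ≤ ENNReal.ofReal (|V (T y) y - l₀| + |l₀ - llim V (S y) y|) :=
              ENNReal.ofReal_le_ofReal (abs_sub_le _ _ _)
          _ ≤ ENNReal.ofReal (|V (T y) y - l₀|) + ENNReal.ofReal (|l₀ - llim V (S y) y|) :=
              ENNReal.ofReal_add_le
    · push_neg at hmem
      rw [Set.indicator_of_notMem (show y ∉ Λ by rw [hΛ_def]; simpa using not_lt.2 hmem),
        add_zero]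
      have hEq : G2 y = G y := by
        rw [hG2_def, hGy]
        show ENNReal.ofReal (|V (max (T y) u) y - llim V (max (S y) u) y|) = _
        rw [max_eq_left (hmem.trans (h2 y)), max_eq_left hmem]
      exact hEq.ge
  -- putting things together
  have hΛm : MeasurableSet[hS.measurableSpace] Λ := by
    rw [hΛ_def]
    simpa only [WithTop.coe_lt_coe] using hS.measurableSet_lt' u
  have hmain : ∀ᵐ ω ∂μ, condE' μ hS.measurableSpace G ω ≤ bmoRho μ ℱ V s u + bmoRho μ ℱ V u t := by
    filter_upwards [htower2, condE'_indicator μ hm hΛm L, ae_all_iff.2 hloc]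
      with ω hω2 hωind hωloc
    have step1 : condE' μ hS.measurableSpace G ω ≤ condE' μ hS.measurableSpace (fun y => G2 y + Λ.indicator L y) ω :=
      condE'_mono μ hpoint ω
    have step2 : condE' μ hS.measurableSpace (fun y => G2 y + Λ.indicator L y) ω
        = condE' μ hS.measurableSpace G2 ω + condE' μ hS.measurableSpace (Λ.indicator L) ω := by
      simp only [condE']
      exact lintegral_add_left hG2m _
    have step3 : Λ.indicator (condE' μ hS.measurableSpace L) ω ≤ bmoRho μ ℱ V s u := by
      by_cases hmem : ω ∈ Λ
      · rw [Set.indicator_of_mem hmem]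
        have hfatou : condE' μ hS.measurableSpace L ω ≤ liminf (fun n => condE' μ hS.measurableSpace (G1 n) ω) atTop := by
          simp only [condE', hL_def]
          exact lintegral_liminf_le fun n => hG1m n
        refine hfatou.trans (liminf_le_of_eventually_le ?_)
        have hSω : S ω < u := by rw [hΛ_def] at hmem; exact hmem
        obtain ⟨N, hN⟩ := hεsmall (u - S ω) (by linarith)
        filter_upwards [eventually_ge_atTop N] with n hn
        refine hωloc n ?_
        have := hεanti hn
        show S ω ≤ u - ε n
        linarith
      · rw [Set.indicator_of_notMem hmem]
        exact zero_le
    calc condE' μ hS.measurableSpace G ω ≤ condE' μ hS.measurableSpace G2 ω + condE' μ hS.measurableSpace (Λ.indicator L) ω :=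
          step1.trans step2.le
      _ = condE' μ hS.measurableSpace G2 ω + Λ.indicator (condE' μ hS.measurableSpace L) ω := by rw [hωind]
      _ ≤ bmoRho μ ℱ V u t + bmoRho μ ℱ V s u := add_le_add hω2 step3
      _ = bmoRho μ ℱ V s u + bmoRho μ ℱ V u t := add_comm _ _
  have hfin : condE μ hS.measurableSpace (fun y => |V (T y) y - llim V (S y) y|) = condE' μ hS.measurableSpace G := by
    rw [hG_def]; rfl
  rw [hfin]
  exact essSup_le_of_ae_le _ hmain

lemma kappa_small {τ : ℝ} (hk : bmoKappa μ ℱ V 0 τ = 0) {ε : ℝ≥0∞} (hε : 0 < ε) :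
    ∃ h : ℝ, 0 < h ∧ ∀ u v : ℝ, 0 ≤ u → u ≤ v → v ≤ τ → v - u ≤ h →
      bmoRho μ ℱ V u v ≤ ε := by
  have hlt : bmoKappa μ ℱ V 0 τ < ε := by rw [hk]; exact hε
  rw [bmoKappa] at hlt
  obtain ⟨h, hh⟩ := iInf_lt_iff.mp hlt
  obtain ⟨hpos, hlt'⟩ := iInf_lt_iff.mp hh
  refine ⟨h, hpos, fun u v h0 huv hv hle => ?_⟩
  refine le_trans ?_ hlt'.le
  exact le_iSup_of_le u (le_iSup_of_le v (le_iSup_of_le h0 (le_iSup_of_le huv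
    (le_iSup_of_le hv (le_iSup_of_le hle le_rfl)))))

lemma rho_close (hAd : Adapted ℱ V) (hrcll : IsRCLL V) {τ h : ℝ} {ε : ℝ≥0∞}
    (hsmall : ∀ u v : ℝ, 0 ≤ u → u ≤ v → v ≤ τ → v - u ≤ h → bmoRho μ ℱ V u v ≤ ε)
    {s t s' t' : ℝ} (hs : 0 ≤ s) (hst : s ≤ t) (ht : t ≤ τ)
    (hs' : 0 ≤ s') (hst' : s' ≤ t') (ht' : t' ≤ τ)
    (hd1 : |s' - s| ≤ h) (hd2 : |t' - t| ≤ h) :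
    bmoRho μ ℱ V s' t' ≤ bmoRho μ ℱ V s t + (ε + ε) := by
  obtain ⟨hd1a, hd1b⟩ := abs_le.mp hd1
  obtain ⟨hd2a, hd2b⟩ := abs_le.mp hd2
  have hh0 : 0 ≤ h := le_trans (abs_nonneg _) hd1
  set a := max s s' with ha_def
  set b := min t t' with hb_def
  have has : s ≤ a := le_max_left _ _
  have has' : s' ≤ a := le_max_right _ _
  have hbt : b ≤ t := min_le_left _ _
  have hbt' : b ≤ t' := min_le_right _ _
  have haub : a ≤ s' + h := max_le (by linarith) (by linarith)
  have hbub : t' - h ≤ b := le_min (by linarith) (by linarith)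
  by_cases hab : a ≤ b
  · have h1 : bmoRho μ ℱ V s' t' ≤ bmoRho μ ℱ V s' a + bmoRho μ ℱ V a t' :=
      bmoRho_subadd μ ℱ V hAd hrcll hs' has' (hab.trans hbt')
    have h2 : bmoRho μ ℱ V a t' ≤ bmoRho μ ℱ V a b + bmoRho μ ℱ V b t' :=
      bmoRho_subadd μ ℱ V hAd hrcll (hs.trans has) hab hbt'
    have hsa : bmoRho μ ℱ V s' a ≤ ε :=
      hsmall s' a hs' has' (le_trans (hab.trans hbt) ht) (by linarith)
    have hbt2 : bmoRho μ ℱ V b t' ≤ ε :=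
      hsmall b t' (le_trans (hs.trans has) hab) hbt' ht' (by linarith)
    have hmid : bmoRho μ ℱ V a b ≤ bmoRho μ ℱ V s t := bmoRho_mono μ ℱ V has hbt
    calc bmoRho μ ℱ V s' t' ≤ bmoRho μ ℱ V s' a + (bmoRho μ ℱ V a b + bmoRho μ ℱ V b t') :=
          h1.trans (add_le_add le_rfl h2)
      _ ≤ ε + (bmoRho μ ℱ V s t + ε) := add_le_add hsa (add_le_add hmid hbt2)
      _ = bmoRho μ ℱ V s t + (ε + ε) := by
          rw [← add_assoc, add_comm ε (bmoRho μ ℱ V s t), add_assoc]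
  · push_neg at hab
    have hts' : t' - s' ≤ h := by
      rcases le_total s s' with hss | hss
      · have ha : a = s' := max_eq_right hss
        rcases le_total t t' with htt | htt
        · have hb : b = t := min_eq_left htt
          rw [ha, hb] at hab
          linarith
        · have hb : b = t' := min_eq_right htt
          rw [ha, hb] at hab
          linarith
      · have ha : a = s := max_eq_left hss
        rcases le_total t t' with htt | htt
        · have hb : b = t := min_eq_left htt
          rw [ha, hb] at hab
          linarith
        · have hb : b = t' := min_eq_right htt
          rw [ha, hb] at hab
          linarith
    calc bmoRho μ ℱ V s' t' ≤ ε := hsmall s' t' hs' hst' ht' hts'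
      _ ≤ ε + ε := le_self_add
      _ ≤ bmoRho μ ℱ V s t + (ε + ε) := le_add_self

end Rho

end BmoAux

/-- the modulus of mean oscillation `ρ(V)` of a BMO process is subadditive;
moreover, if `V` is VMO (`κ_{0,τ}(V) = 0`) then `(s,t) ↦ ρ_{s,t}(V)` is continuous on
the triangle `{(s,t) : 0 ≤ s ≤ t ≤ τ}`. -/
theorem rho_subadditive_and_continuous {Ω : Type*} {mΩ : MeasurableSpace Ω}
    [StandardBorelSpace Ω]
    (μ : Measure Ω) [IsProbabilityMeasure μ] (ℱ : Filtration ℝ mΩ)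
    (τ : ℝ) (hτ : 0 < τ) (V : ℝ → Ω → ℝ) (hV : IsBMO μ ℱ τ V) :
    (∀ s u t : ℝ, 0 ≤ s → s ≤ u → u ≤ t → t ≤ τ →
      bmoRho μ ℱ V s t ≤ bmoRho μ ℱ V s u + bmoRho μ ℱ V u t) ∧
    (bmoKappa μ ℱ V 0 τ = 0 →
      ContinuousOn (fun x : ℝ × ℝ => bmoRho μ ℱ V x.1 x.2)
        {x : ℝ × ℝ | 0 ≤ x.1 ∧ x.1 ≤ x.2 ∧ x.2 ≤ τ}) := by
  obtain ⟨hAd, hrcll, hfin⟩ := hV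
  refine ⟨fun s u t hs hsu hut _ => BmoAux.bmoRho_subadd μ ℱ V hAd hrcll hs hsu hut, ?_⟩
  intro hk x hx
  obtain ⟨hx1, hx2, hx3⟩ := hx
  have hfin' : bmoRho μ ℱ V x.1 x.2 ≠ ⊤ :=
    (lt_of_le_of_lt (BmoAux.bmoRho_mono μ ℱ V hx1 hx3) hfin).ne
  show Filter.Tendsto (fun x' : ℝ × ℝ => bmoRho μ ℱ V x'.1 x'.2)
    (nhdsWithin x {x : ℝ × ℝ | 0 ≤ x.1 ∧ x.1 ≤ x.2 ∧ x.2 ≤ τ})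
    (nhds (bmoRho μ ℱ V x.1 x.2))
  rw [ENNReal.tendsto_nhds hfin']
  intro δ hδ
  have hδ2 : (0:ℝ≥0∞) < δ / 2 := ENNReal.half_pos hδ.ne'
  obtain ⟨h, hh, hsmall⟩ := BmoAux.kappa_small μ ℱ V hk hδ2
  have hev : ∀ᶠ x' in nhdsWithin x {x : ℝ × ℝ | 0 ≤ x.1 ∧ x.1 ≤ x.2 ∧ x.2 ≤ τ},
      (|x'.1 - x.1| ≤ h ∧ |x'.2 - x.2| ≤ h)
        ∧ (0 ≤ x'.1 ∧ x'.1 ≤ x'.2 ∧ x'.2 ≤ τ) := by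
    refine Filter.Eventually.and ?_ eventually_mem_nhdsWithin
    refine eventually_nhdsWithin_of_eventually_nhds ?_
    filter_upwards [Metric.ball_mem_nhds x hh] with x' hx'
    rw [Metric.mem_ball, Prod.dist_eq] at hx'
    have h1' : dist x'.1 x.1 < h := lt_of_le_of_lt (le_max_left _ _) hx'
    have h2' : dist x'.2 x.2 < h := lt_of_le_of_lt (le_max_right _ _) hx'
    rw [Real.dist_eq] at h1' h2'
    exact ⟨h1'.le, h2'.le⟩
  filter_upwards [hev] with x' hx'
  obtain ⟨⟨hd1, hd2⟩, hx'1, hx'2, hx'3⟩ := hx'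
  have hup : bmoRho μ ℱ V x'.1 x'.2 ≤ bmoRho μ ℱ V x.1 x.2 + (δ / 2 + δ / 2) :=
    BmoAux.rho_close μ ℱ V hAd hrcll hsmall hx1 hx2 hx3 hx'1 hx'2 hx'3 hd1 hd2
  have hdown : bmoRho μ ℱ V x.1 x.2 ≤ bmoRho μ ℱ V x'.1 x'.2 + (δ / 2 + δ / 2) :=
    BmoAux.rho_close μ ℱ V hAd hrcll hsmall hx'1 hx'2 hx'3 hx1 hx2 hx3
      (by rw [abs_sub_comm]; exact hd1) (by rw [abs_sub_comm]; exact hd2)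
  rw [ENNReal.add_halves] at hup hdown
  constructor
  · rw [tsub_le_iff_right]
    exact hdown
  · exact hup


end
end
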